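/- arXiv:1408.5615 — 3 statements merged into one kernel-verified Lean document; each statement's English description precedes it below -/
import Mathlib

section
/- Let m ≥ 3 and n ≥ 3, and let u be a vertex of SR(m,n). Then the following are equivalent: (i) for every neighbor v of u, the number of maximal cliques of SR(m,n) containing both u and v is at most 2; (ii) u has exactly one nonzero coordinate. -/
open Matrix Polynomial

/-- Vertices of the simplicial rook graph: nonnegative integer vectors of length `m` summing to `n`. -/
abbrev SRVertex (m n : ℕ) : Type := {x : Fin m → ℕ // ∑ i, x i = n}

instance (m n : ℕ) : Fintype (SRVertex m n) :=
  Fintype.subtype (Finset.Nat.antidiagonalTuple m n) fun _ =>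
    Finset.Nat.mem_antidiagonalTuple

/-- The simplicial rook graph `SR(m,n)`. -/
def SR (m n : ℕ) : SimpleGraph (SRVertex m n) where
  Adj x y := (Finset.univ.filter fun i => x.1 i ≠ y.1 i).card = 2
  symm := by
    constructor
    intro x y h
    have : (Finset.univ.filter fun i => y.1 i ≠ x.1 i)
        = (Finset.univ.filter fun i => x.1 i ≠ y.1 i) := by
      apply Finset.filter_congr
      intro i _
      simp [ne_comm]
    rw [this]; exact h
  loopless := by
    constructor
    intro x h
    simp at h

instance (m n : ℕ) : DecidableRel (SR m n).Adj := fun x y =>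
  inferInstanceAs (Decidable ((Finset.univ.filter fun i => x.1 i ≠ y.1 i).card = 2))

namespace SRAux

variable {m n : ℕ}

/-- Move `a` units from coordinate `j` to coordinate `i`. -/
def stepF (u : Fin m → ℕ) (j i : Fin m) (a : ℕ) : Fin m → ℕ :=
  fun t => (if t = i then u t + a else u t) - (if t = j then a else 0)

lemma stepF_self (u : Fin m → ℕ) (j : Fin m) (a : ℕ) : stepF u j j a = u := by
  funext t; simp only [stepF]; split_ifs with h <;> simp

lemma stepF_apply_i {i j : Fin m} (u : Fin m → ℕ) (a : ℕ) (h : i ≠ j) :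
    stepF u j i a i = u i + a := by simp [stepF, h]

lemma stepF_apply_j {i j : Fin m} (u : Fin m → ℕ) (a : ℕ) (h : j ≠ i) :
    stepF u j i a j = u j - a := by simp [stepF, h]

lemma stepF_apply_other {i j t : Fin m} (u : Fin m → ℕ) (a : ℕ) (h1 : t ≠ i) (h2 : t ≠ j) :
    stepF u j i a t = u t := by simp [stepF, h1, h2]

lemma sum_stepF (u : Fin m → ℕ) (j i : Fin m) (a : ℕ) (h : a ≤ u j) :
    ∑ t, stepF u j i a t = ∑ t, u t := by
  unfold stepF
  rw [Finset.sum_tsub_distrib]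
  · have h1 : ∑ t, (if t = i then u t + a else u t) = (∑ t, u t) + a := by
      have he : ∀ t ∈ Finset.univ, (if t = i then u t + a else u t)
          = u t + (if t = i then a else 0) := by
        intro t _; split_ifs <;> simp
      rw [Finset.sum_congr rfl he, Finset.sum_add_distrib,
        Finset.sum_ite_eq' Finset.univ i (fun _ => a)]
      simp
    have h2 : ∑ t, (if t = j then (a:ℕ) else 0) = a := by
      rw [Finset.sum_ite_eq' Finset.univ j (fun _ => a)]; simp
    rw [h1, h2, Nat.add_sub_cancel]
  · intro t _
    by_cases ht : t = j
    · subst ht; split_ifs <;> omega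
    · simp [ht]

lemma sum_pair_decomp (x : SRVertex m n) {p q : Fin m} (hpq : p ≠ q) :
    x.1 p + (x.1 q + ∑ t ∈ (Finset.univ.erase p).erase q, x.1 t) = n := by
  have hq : q ∈ Finset.univ.erase p := Finset.mem_erase.2 ⟨Ne.symm hpq, Finset.mem_univ q⟩
  rw [Finset.add_sum_erase _ x.1 hq, Finset.add_sum_erase _ x.1 (Finset.mem_univ p)]
  exact x.2

lemma pair_sum {x y : SRVertex m n} {i j : Fin m} (hij : i ≠ j)
    (ho : ∀ t, t ≠ i → t ≠ j → x.1 t = y.1 t) :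
    x.1 i + x.1 j = y.1 i + y.1 j := by
  have hx := sum_pair_decomp x hij
  have hy := sum_pair_decomp y hij
  have htail : ∑ t ∈ (Finset.univ.erase i).erase j, x.1 t
      = ∑ t ∈ (Finset.univ.erase i).erase j, y.1 t := by
    apply Finset.sum_congr rfl
    intro t ht
    simp only [Finset.mem_erase] at ht
    exact ho t ht.2.1 ht.1
  rw [htail] at hx
  set S := ∑ t ∈ (Finset.univ.erase i).erase j, y.1 t with hS
  omega

lemma adj_of_spec {x y : SRVertex m n} {i j : Fin m} (hij : i ≠ j)
    (hi : x.1 i ≠ y.1 i) (hj : x.1 j ≠ y.1 j)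
    (ho : ∀ t, t ≠ i → t ≠ j → x.1 t = y.1 t) : (SR m n).Adj x y := by
  show (Finset.univ.filter fun t => x.1 t ≠ y.1 t).card = 2
  have hset : (Finset.univ.filter fun t => x.1 t ≠ y.1 t) = {i, j} := by
    ext t
    simp only [Finset.mem_filter, Finset.mem_univ, true_and, Finset.mem_insert,
      Finset.mem_singleton]
    constructor
    · intro h; by_contra hc; push_neg at hc; exact h (ho t hc.1 hc.2)
    · rintro (rfl | rfl) <;> assumption
  rw [hset, Finset.card_insert_of_notMem (by simp [hij]), Finset.card_singleton]

lemma not_adj_of_three {x y : SRVertex m n} {t1 t2 t3 : Fin m}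
    (h12 : t1 ≠ t2) (h13 : t1 ≠ t3) (h23 : t2 ≠ t3)
    (h1 : x.1 t1 ≠ y.1 t1) (h2 : x.1 t2 ≠ y.1 t2) (h3 : x.1 t3 ≠ y.1 t3) :
    ¬ (SR m n).Adj x y := by
  intro h
  have h' : (Finset.univ.filter fun t => x.1 t ≠ y.1 t).card = 2 := h
  have hsub : ({t1, t2, t3} : Finset (Fin m)) ⊆ Finset.univ.filter fun t => x.1 t ≠ y.1 t := by
    intro t ht
    simp only [Finset.mem_insert, Finset.mem_singleton] at ht
    rcases ht with rfl | rfl | rfl <;> simp [h1, h2, h3]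
  have hle := Finset.card_le_card hsub
  have hc : ({t1, t2, t3} : Finset (Fin m)).card = 3 := by
    rw [Finset.card_insert_of_notMem (by simp [h12, h13]),
      Finset.card_insert_of_notMem (by simp [h23]), Finset.card_singleton]
  omega

lemma two_of_filter {x y : SRVertex m n} (h : (SR m n).Adj x y) {t1 t2 : Fin m}
    (h12 : t1 ≠ t2) (h1 : x.1 t1 ≠ y.1 t1) (h2 : x.1 t2 ≠ y.1 t2) :
    ∀ t, t ≠ t1 → t ≠ t2 → x.1 t = y.1 t := by
  intro t ht1 ht2
  by_contra hc
  exact not_adj_of_three h12 (Ne.symm ht1) (Ne.symm ht2) h1 h2 hc h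

lemma adj_iff {x y : SRVertex m n} :
    (SR m n).Adj x y ↔ ∃ i j a, i ≠ j ∧ 0 < a ∧ a ≤ x.1 j ∧ y.1 = stepF x.1 j i a := by
  constructor
  · intro h
    have h2 : (Finset.univ.filter fun t => x.1 t ≠ y.1 t).card = 2 := h
    obtain ⟨p, q, hpq, hset⟩ := Finset.card_eq_two.1 h2
    have hp : x.1 p ≠ y.1 p := by
      have : p ∈ ({p, q} : Finset (Fin m)) := by simp
      rw [← hset] at this; simpa using this
    have hq : x.1 q ≠ y.1 q := by
      have : q ∈ ({p, q} : Finset (Fin m)) := by simp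
      rw [← hset] at this; simpa using this
    have ho : ∀ t, t ≠ p → t ≠ q → x.1 t = y.1 t := by
      intro t h1' h2'
      by_contra hc
      have : t ∈ ({p, q} : Finset (Fin m)) := by rw [← hset]; simp [hc]
      simp only [Finset.mem_insert, Finset.mem_singleton] at this
      tauto
    have hsum := pair_sum hpq ho
    rcases Nat.lt_or_ge (x.1 p) (y.1 p) with hlt | hge
    · refine ⟨p, q, y.1 p - x.1 p, hpq, by omega, by omega, ?_⟩
      funext t
      by_cases h1' : t = p
      · subst h1'; rw [stepF_apply_i _ _ hpq]; omega
      · by_cases h2' : t = q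
        · subst h2'; rw [stepF_apply_j _ _ (Ne.symm hpq)]; omega
        · rw [stepF_apply_other _ _ h1' h2']; exact (ho t h1' h2').symm
    · have hlt : y.1 p < x.1 p := lt_of_le_of_ne hge (Ne.symm hp)
      refine ⟨q, p, x.1 p - y.1 p, Ne.symm hpq, by omega, by omega, ?_⟩
      funext t
      by_cases h1' : t = q
      · subst h1'; rw [stepF_apply_i _ _ (Ne.symm hpq)]; omega
      · by_cases h2' : t = p
        · subst h2'; rw [stepF_apply_j _ _ hpq]; omega
        · rw [stepF_apply_other _ _ h1' h2']; exact (ho t h2' h1').symm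
  · rintro ⟨i, j, a, hij, ha, haj, hy⟩
    apply adj_of_spec hij
    · rw [hy, stepF_apply_i _ _ hij]; omega
    · rw [hy, stepF_apply_j _ _ (Ne.symm hij)]; omega
    · intro t h1 h2; rw [hy, stepF_apply_other _ _ h1 h2]

def lineSet (u : SRVertex m n) (i j : Fin m) : Set (SRVertex m n) :=
  {w | ∀ t, t ≠ i → t ≠ j → w.1 t = u.1 t}

def starSetA (u : SRVertex m n) (i : Fin m) (a : ℕ) : Set (SRVertex m n) :=
  {w | ∃ k, w.1 = stepF u.1 k i a}

def starSetB (u : SRVertex m n) (j : Fin m) (a : ℕ) : Set (SRVertex m n) :=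
  {w | ∃ k, w.1 = stepF u.1 j k a}

lemma line_isClique (u : SRVertex m n) {i j : Fin m} (hij : i ≠ j) :
    (SR m n).IsClique (lineSet u i j) := by
  intro x hx y hy hxy
  have ho : ∀ t, t ≠ i → t ≠ j → x.1 t = y.1 t := fun t h1 h2 =>
    (hx t h1 h2).trans (hy t h1 h2).symm
  have hsum := pair_sum hij ho
  have hii : x.1 i ≠ y.1 i := by
    intro h
    apply hxy
    apply Subtype.ext; funext t
    by_cases t1 : t = i
    · subst t1; exact h
    · by_cases t2 : t = j
      · subst t2; omega
      · exact ho t t1 t2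
  have hjj : x.1 j ≠ y.1 j := fun h => hii (by omega)
  exact adj_of_spec hij hii hjj ho

lemma starB_isClique (u : SRVertex m n) {j : Fin m} {a : ℕ} (ha : 0 < a) (haj : a ≤ u.1 j) :
    (SR m n).IsClique (starSetB u j a) := by
  rintro x ⟨k, hk⟩ y ⟨k', hk'⟩ hxy
  have hkk : k ≠ k' := by rintro rfl; exact hxy (Subtype.ext (hk.trans hk'.symm))
  apply adj_of_spec hkk
  · rw [hk, hk']
    by_cases hkj : k = j
    · subst hkj
      rw [stepF_self, stepF_apply_j _ _ hkk]
      omega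
    · rw [stepF_apply_i _ _ hkj, stepF_apply_other _ _ hkk hkj]
      omega
  · rw [hk, hk']
    by_cases hkj : k' = j
    · subst hkj
      rw [stepF_self, stepF_apply_j _ _ (Ne.symm hkk)]
      omega
    · rw [stepF_apply_i _ _ hkj, stepF_apply_other _ _ (Ne.symm hkk) hkj]
      omega
  · intro t ht1 ht2
    rw [hk, hk']
    by_cases htj : t = j
    · subst htj
      rw [stepF_apply_j _ _ ht1, stepF_apply_j _ _ ht2]
    · rw [stepF_apply_other _ _ ht1 htj, stepF_apply_other _ _ ht2 htj]

lemma starA_le {u x : SRVertex m n} {i k : Fin m} {a : ℕ} (hki : k ≠ i)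
    (hx : x.1 = stepF u.1 k i a) : a ≤ u.1 k ∧ x.1 k = u.1 k - a ∧ x.1 i = u.1 i + a := by
  have ho : ∀ t, t ≠ i → t ≠ k → x.1 t = u.1 t := fun t h1 h2 => by
    rw [hx]; exact stepF_apply_other _ _ h1 h2
  have hsum := pair_sum (Ne.symm hki) ho
  have h1 : x.1 i = u.1 i + a := by rw [hx]; exact stepF_apply_i _ _ (Ne.symm hki)
  have h2 : x.1 k = u.1 k - a := by rw [hx]; exact stepF_apply_j _ _ hki
  exact ⟨by omega, h2, h1⟩

lemma starA_isClique (u : SRVertex m n) {i : Fin m} {a : ℕ} (ha : 0 < a) :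
    (SR m n).IsClique (starSetA u i a) := by
  rintro x ⟨k, hk⟩ y ⟨k', hk'⟩ hxy
  have hkk : k ≠ k' := by rintro rfl; exact hxy (Subtype.ext (hk.trans hk'.symm))
  by_cases hki : k = i
  · subst hki
    have hx : x.1 = u.1 := by rw [hk, stepF_self]
    obtain ⟨hle, hyk', hyi⟩ := starA_le (Ne.symm hkk) hk'
    apply adj_of_spec hkk
    · rw [hx, hyi]; omega
    · rw [hx, hyk']; omega
    · intro t ht1 ht2; rw [hx, hk', stepF_apply_other _ _ ht1 ht2]
  · by_cases hk'i : k' = i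
    · subst hk'i
      have hy : y.1 = u.1 := by rw [hk', stepF_self]
      obtain ⟨hle, hxk, hxi⟩ := starA_le hki hk
      apply adj_of_spec hkk
      · rw [hy, hxk]; omega
      · rw [hy, hxi]; omega
      · intro t ht1 ht2; rw [hy, hk, stepF_apply_other _ _ ht2 ht1]
    · obtain ⟨hle, hxk, hxi⟩ := starA_le hki hk
      obtain ⟨hle', hyk', hyi⟩ := starA_le hk'i hk'
      have hxo : ∀ t, t ≠ i → t ≠ k → x.1 t = u.1 t := fun t h1 h2 => by
        rw [hk]; exact stepF_apply_other _ _ h1 h2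
      have hyo : ∀ t, t ≠ i → t ≠ k' → y.1 t = u.1 t := fun t h1 h2 => by
        rw [hk']; exact stepF_apply_other _ _ h1 h2
      apply adj_of_spec hkk
      · rw [hxk, hyo k hki hkk]; omega
      · rw [hyk', hxo k' hk'i (Ne.symm hkk)]; omega
      · intro t ht1 ht2
        by_cases hti : t = i
        · subst hti; rw [hxi, hyi]
        · rw [hxo t hti ht1, hyo t hti ht2]

lemma common_nbr {u v w : SRVertex m n} {i j : Fin m} {a : ℕ} (hij : i ≠ j)
    (ha : 0 < a) (haj : a ≤ u.1 j) (hv : v.1 = stepF u.1 j i a)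
    (hwu : (SR m n).Adj u w) (hwv : (SR m n).Adj v w) :
    (∀ t, t ≠ i → t ≠ j → w.1 t = u.1 t) ∨
    (∃ k, k ≠ i ∧ k ≠ j ∧ a ≤ u.1 k ∧ w.1 = stepF u.1 k i a) ∨
    (∃ k, k ≠ i ∧ k ≠ j ∧ w.1 = stepF u.1 j k a) := by
  by_cases hL : ∀ t, t ≠ i → t ≠ j → w.1 t = u.1 t
  · exact Or.inl hL
  · push_neg at hL
    obtain ⟨k, hki, hkj, hwk⟩ := hL
    have hvi : v.1 i = u.1 i + a := by rw [hv]; exact stepF_apply_i _ _ hij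
    have hvj : v.1 j = u.1 j - a := by rw [hv]; exact stepF_apply_j _ _ (Ne.symm hij)
    have hvk : v.1 k = u.1 k := by rw [hv]; exact stepF_apply_other _ _ hki hkj
    have hDk : u.1 k ≠ w.1 k := Ne.symm hwk
    have hEk : v.1 k ≠ w.1 k := by rw [hvk]; exact Ne.symm hwk
    by_cases hDi : u.1 i = w.1 i
    · -- type B
      have hEi : v.1 i ≠ w.1 i := by rw [hvi, ← hDi]; omega
      have hE := two_of_filter hwv hki hEk hEi
      have hwj : w.1 j = u.1 j - a := by rw [← hvj]; exact (hE j (Ne.symm hkj) (Ne.symm hij)).symm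
      have hDj : u.1 j ≠ w.1 j := by rw [hwj]; omega
      have hD := two_of_filter hwu hkj hDk hDj
      have ho : ∀ t, t ≠ k → t ≠ j → w.1 t = u.1 t := fun t h1 h2 => (hD t h1 h2).symm
      have hsum := pair_sum (x := w) (y := u) hkj ho
      have hwk2 : w.1 k = u.1 k + a := by omega
      refine Or.inr (Or.inr ⟨k, hki, hkj, ?_⟩)
      funext t
      by_cases h1 : t = k
      · subst h1; rw [stepF_apply_i _ _ hkj]; exact hwk2
      · by_cases h2 : t = j
        · subst h2; rw [stepF_apply_j _ _ (Ne.symm hkj)]; exact hwj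
        · rw [stepF_apply_other _ _ h1 h2]; exact ho t h1 h2
    · -- type A
      have hD := two_of_filter hwu hki hDk hDi
      have hwj : w.1 j = u.1 j := (hD j (Ne.symm hkj) (Ne.symm hij)).symm
      have hEj : v.1 j ≠ w.1 j := by rw [hvj, hwj]; omega
      have hE := two_of_filter hwv hkj hEk hEj
      have hwi : w.1 i = u.1 i + a := by rw [← hvi]; exact (hE i (Ne.symm hki) hij).symm
      have ho : ∀ t, t ≠ i → t ≠ k → w.1 t = u.1 t := fun t h1 h2 => (hD t h2 h1).symm
      have hsum := pair_sum (x := w) (y := u) (Ne.symm hki) ho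
      have hle : a ≤ u.1 k := by omega
      have hwk2 : w.1 k = u.1 k - a := by omega
      refine Or.inr (Or.inl ⟨k, hki, hkj, hle, ?_⟩)
      funext t
      by_cases h1 : t = i
      · subst h1; rw [stepF_apply_i _ _ (Ne.symm hki)]; exact hwi
      · by_cases h2 : t = k
        · subst h2; rw [stepF_apply_j _ _ hki]; exact hwk2
        · rw [stepF_apply_other _ _ h1 h2]; exact ho t h1 h2

lemma exists_three (hm : 3 ≤ m) (hn : 3 ≤ n) (u : SRVertex m n)
    (hone : (Finset.univ.filter fun t => u.1 t ≠ 0).card ≠ 1) :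
    ∃ i j k : Fin m, i ≠ j ∧ i ≠ k ∧ j ≠ k ∧ 1 ≤ u.1 j ∧ 1 ≤ u.1 k ∧ 2 ≤ u.1 i + u.1 j := by
  have hex : ∃ t, u.1 t ≠ 0 := by
    by_contra hc; push_neg at hc
    have h0 : ∑ t, u.1 t = 0 := Finset.sum_eq_zero fun t _ => hc t
    rw [u.2] at h0
    omega
  have h1 : 1 ≤ (Finset.univ.filter fun t => u.1 t ≠ 0).card := by
    obtain ⟨t, ht⟩ := hex
    exact Finset.card_pos.2 ⟨t, by simp [ht]⟩
  have h2 : 1 < (Finset.univ.filter fun t => u.1 t ≠ 0).card := by omega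
  obtain ⟨p, hp, q, hq, hpq⟩ := Finset.one_lt_card.1 h2
  simp only [Finset.mem_filter, Finset.mem_univ, true_and] at hp hq
  have hd := sum_pair_decomp u hpq
  by_cases hrest : ∑ t ∈ (Finset.univ.erase p).erase q, u.1 t = 0
  · have hr3 : ∃ r, r ≠ p ∧ r ≠ q := by
      by_contra hc; push_neg at hc
      have hsub : (Finset.univ : Finset (Fin m)) ⊆ {p, q} := by
        intro r _
        simp only [Finset.mem_insert, Finset.mem_singleton]
        by_cases h : r = p
        · exact Or.inl h
        · exact Or.inr (hc r h)
      have hcard := Finset.card_le_card hsub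
      rw [Finset.card_univ, Fintype.card_fin] at hcard
      have hc2 := Finset.card_insert_le p ({q} : Finset (Fin m))
      simp only [Finset.card_singleton] at hc2
      omega
    obtain ⟨r, hrp, hrq⟩ := hr3
    by_cases h2q : 2 ≤ u.1 q
    · exact ⟨r, q, p, hrq, hrp, Ne.symm hpq, by omega, by omega, by omega⟩
    · exact ⟨r, p, q, hrp, hrq, hpq, by omega, by omega, by omega⟩
  · have hr : ∃ r ∈ (Finset.univ.erase p).erase q, u.1 r ≠ 0 := by
      by_contra hc; push_neg at hc
      exact hrest (Finset.sum_eq_zero hc)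
    obtain ⟨r, hr, hr0⟩ := hr
    simp only [Finset.mem_erase] at hr
    exact ⟨p, q, r, hpq, Ne.symm hr.2.1, Ne.symm hr.1, by omega, by omega, by omega⟩

lemma dir1 {u : SRVertex m n}
    (hone : (Finset.univ.filter fun t => u.1 t ≠ 0).card = 1)
    (v : SRVertex m n) (hadj : (SR m n).Adj u v) :
    {S : Set (SRVertex m n) | (SR m n).IsClique S ∧
      (∀ T : Set (SRVertex m n), (SR m n).IsClique T → S ⊆ T → S = T) ∧
      u ∈ S ∧ v ∈ S}.ncard ≤ 2 := by
  obtain ⟨p, hp⟩ := Finset.card_eq_one.1 hone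
  have hzero : ∀ t, t ≠ p → u.1 t = 0 := by
    intro t ht
    by_contra hc
    have hmem : t ∈ Finset.univ.filter fun s => u.1 s ≠ 0 := by simp [hc]
    rw [hp] at hmem
    simp only [Finset.mem_singleton] at hmem
    exact ht hmem
  obtain ⟨i, j, a, hij, ha, haj, hv⟩ := adj_iff.1 hadj
  have hjp : p = j := by
    by_contra hc
    have := hzero j (fun h => hc h.symm)
    omega
  subst hjp
  have hsub : {S : Set (SRVertex m n) | (SR m n).IsClique S ∧
      (∀ T : Set (SRVertex m n), (SR m n).IsClique T → S ⊆ T → S = T) ∧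
      u ∈ S ∧ v ∈ S} ⊆ {lineSet u i p, starSetB u p a} := by
    rintro S ⟨hclq, hmax, huS, hvS⟩
    have huL : u ∈ lineSet u i p := fun t _ _ => rfl
    have hvL : v ∈ lineSet u i p := fun t h1 h2 => by
      rw [hv]; exact stepF_apply_other _ _ h1 h2
    have huB : u ∈ starSetB u p a := ⟨p, (stepF_self u.1 p a).symm⟩
    have hvB : v ∈ starSetB u p a := ⟨i, hv⟩
    have hcases : ∀ w ∈ S, w ∈ lineSet u i p ∪ starSetB u p a := by
      intro w hw
      by_cases hwu : w = u
      · exact Or.inl (hwu ▸ huL)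
      by_cases hwv : w = v
      · exact Or.inl (hwv ▸ hvL)
      rcases common_nbr hij ha haj hv (hclq huS hw (fun h => hwu h.symm))
          (hclq hvS hw (fun h => hwv h.symm)) with
        hL | ⟨k, hk1, hk2, hk3, hk4⟩ | ⟨k, hk1, hk2, hk3⟩
      · exact Or.inl hL
      · exfalso; have := hzero k hk2; omega
      · exact Or.inr ⟨k, hk3⟩
    by_cases hSL : S ⊆ lineSet u i p
    · exact Or.inl (hmax _ (line_isClique u hij) hSL)
    · right
      show S = starSetB u p a
      obtain ⟨w1, hw1S, hw1L⟩ := Set.not_subset.1 hSL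
      have hw1B : w1 ∈ starSetB u p a := (hcases w1 hw1S).resolve_left hw1L
      obtain ⟨k1, hk1⟩ := hw1B
      have hk1p : k1 ≠ p := by
        rintro rfl
        exact hw1L (fun t h1 h2 => by rw [hk1, stepF_self])
      have hk1i : k1 ≠ i := by
        rintro rfl
        have : w1 = v := Subtype.ext (hk1.trans hv.symm)
        exact hw1L (this ▸ hvL)
      have hui : u.1 i = 0 := hzero i hij
      have huk1 : u.1 k1 = 0 := hzero k1 hk1p
      have hw1i : w1.1 i = u.1 i := by
        rw [hk1]; exact stepF_apply_other _ _ (Ne.symm hk1i) hij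
      have hw1p : w1.1 p = u.1 p - a := by
        rw [hk1]; exact stepF_apply_j _ _ (Ne.symm hk1p)
      have hw1k : w1.1 k1 = u.1 k1 + a := by
        rw [hk1]; exact stepF_apply_i _ _ hk1p
      have hSB : S ⊆ starSetB u p a := by
        intro x hxS
        rcases hcases x hxS with hxL | hxB
        · by_cases hxu : x = u
          · exact hxu ▸ huB
          by_cases hxv : x = v
          · exact hxv ▸ hvB
          exfalso
          have hsumx := pair_sum hij hxL
          have hxk1 : x.1 k1 = u.1 k1 := hxL k1 hk1i hk1p
          have hxw1 : x ≠ w1 := by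
            intro h
            rw [h, hw1k] at hxk1
            omega
          apply not_adj_of_three (t1 := i) (t2 := p) (t3 := k1) hij (Ne.symm hk1i)
            (Ne.symm hk1p) ?_ ?_ ?_ (hclq hxS hw1S hxw1)
          · rw [hw1i]
            intro hxi
            apply hxu
            apply Subtype.ext; funext t
            by_cases t1 : t = i
            · subst t1; exact hxi
            by_cases t2 : t = p
            · subst t2; omega
            · exact hxL t t1 t2
          · rw [hw1p]
            intro hxp
            apply hxv
            apply Subtype.ext; funext t
            by_cases t1 : t = i
            · subst t1; rw [hv, stepF_apply_i _ _ hij]; omega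
            by_cases t2 : t = p
            · subst t2; rw [hv, stepF_apply_j _ _ (Ne.symm hij)]; omega
            · rw [hv, stepF_apply_other _ _ t1 t2]; exact hxL t t1 t2
          · rw [hxk1, hw1k]; omega
        · exact hxB
      exact hmax _ (starB_isClique u ha haj) hSB
  refine le_trans (Set.ncard_le_ncard hsub (Set.toFinite _)) ?_
  refine le_trans (Set.ncard_insert_le _ _) ?_
  simp
lemma dir2 (hm : 3 ≤ m) (hn : 3 ≤ n) {u : SRVertex m n}
    (hone : (Finset.univ.filter fun t => u.1 t ≠ 0).card ≠ 1) :
    ∃ v : SRVertex m n, (SR m n).Adj u v ∧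
      2 < {S : Set (SRVertex m n) | (SR m n).IsClique S ∧
        (∀ T : Set (SRVertex m n), (SR m n).IsClique T → S ⊆ T → S = T) ∧
        u ∈ S ∧ v ∈ S}.ncard := by
  obtain ⟨i, j, k, hij, hik, hjk, hj1, hk1, hsum2⟩ := exists_three hm hn u hone
  obtain ⟨v, hv⟩ : ∃ v : SRVertex m n, v.1 = stepF u.1 j i 1 :=
    ⟨⟨stepF u.1 j i 1, by rw [sum_stepF _ _ _ _ hj1]; exact u.2⟩, rfl⟩
  obtain ⟨w0, hw0⟩ : ∃ w0 : SRVertex m n, w0.1 = stepF u.1 j k 1 :=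
    ⟨⟨stepF u.1 j k 1, by rw [sum_stepF _ _ _ _ hj1]; exact u.2⟩, rfl⟩
  obtain ⟨w1, hw1⟩ : ∃ w1 : SRVertex m n, w1.1 = stepF u.1 k i 1 :=
    ⟨⟨stepF u.1 k i 1, by rw [sum_stepF _ _ _ _ hk1]; exact u.2⟩, rfl⟩
  have hadj : (SR m n).Adj u v := adj_iff.2 ⟨i, j, 1, hij, one_pos, hj1, hv⟩
  refine ⟨v, hadj, ?_⟩
  -- values
  have hvi : v.1 i = u.1 i + 1 := by rw [hv]; exact stepF_apply_i _ _ hij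
  have hvj : v.1 j = u.1 j - 1 := by rw [hv]; exact stepF_apply_j _ _ (Ne.symm hij)
  have hw0k : w0.1 k = u.1 k + 1 := by rw [hw0]; exact stepF_apply_i _ _ (Ne.symm hjk)
  have hw0j : w0.1 j = u.1 j - 1 := by rw [hw0]; exact stepF_apply_j _ _ hjk
  have hw0i : w0.1 i = u.1 i := by rw [hw0]; exact stepF_apply_other _ _ hik hij
  have hw1i : w1.1 i = u.1 i + 1 := by rw [hw1]; exact stepF_apply_i _ _ hik
  have hw1k : w1.1 k = u.1 k - 1 := by rw [hw1]; exact stepF_apply_j _ _ (Ne.symm hik)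
  have hw1j : w1.1 j = u.1 j := by rw [hw1]; exact stepF_apply_other _ _ (Ne.symm hij) hjk
  -- memberships
  have huL : u ∈ lineSet u i j := fun t _ _ => rfl
  have hvL : v ∈ lineSet u i j := fun t h1 h2 => by
    rw [hv]; exact stepF_apply_other _ _ h1 h2
  have huA : u ∈ starSetA u i 1 := ⟨i, (stepF_self u.1 i 1).symm⟩
  have hvA : v ∈ starSetA u i 1 := ⟨j, hv⟩
  have huB : u ∈ starSetB u j 1 := ⟨j, (stepF_self u.1 j 1).symm⟩
  have hvB : v ∈ starSetB u j 1 := ⟨i, hv⟩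
  have hw0B : w0 ∈ starSetB u j 1 := ⟨k, hw0⟩
  have hw1A : w1 ∈ starSetA u i 1 := ⟨k, hw1⟩
  -- x = u / x = v helpers
  have hxu_of : ∀ x : SRVertex m n, (∀ t, t ≠ i → t ≠ j → x.1 t = u.1 t) →
      x.1 i = u.1 i → x = u := by
    intro x hxL hxi
    have hsumx := pair_sum hij hxL
    apply Subtype.ext; funext t
    by_cases t1 : t = i
    · subst t1; exact hxi
    by_cases t2 : t = j
    · subst t2; omega
    · exact hxL t t1 t2
  have hxv_of : ∀ x : SRVertex m n, (∀ t, t ≠ i → t ≠ j → x.1 t = u.1 t) →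
      x.1 j = u.1 j - 1 → x = v := by
    intro x hxL hxj
    have hsumx := pair_sum hij hxL
    apply Subtype.ext; funext t
    by_cases t1 : t = i
    · subst t1; rw [hvi]; omega
    by_cases t2 : t = j
    · subst t2; rw [hvj]; omega
    · rw [hxL t t1 t2, ← hvL t t1 t2]
  -- maximality of the line
  have hLmax : ∀ T, (SR m n).IsClique T → lineSet u i j ⊆ T → lineSet u i j = T := by
    intro T hT hLT
    refine Set.Subset.antisymm hLT ?_
    intro x hxT
    by_cases hxu : x = u
    · exact hxu ▸ huL
    by_cases hxv : x = v
    · exact hxv ▸ hvL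
    rcases common_nbr hij one_pos hj1 hv (hT (hLT huL) hxT (fun h => hxu h.symm))
        (hT (hLT hvL) hxT (fun h => hxv h.symm)) with
      hL | ⟨k', hk'i, hk'j, hk'le, hx⟩ | ⟨k', hk'i, hk'j, hx⟩
    · exact hL
    · exfalso
      have hxi : x.1 i = u.1 i + 1 := by rw [hx]; exact stepF_apply_i _ _ (Ne.symm hk'i)
      have hxj : x.1 j = u.1 j := by
        rw [hx]; exact stepF_apply_other _ _ (Ne.symm hij) (Ne.symm hk'j)
      have hxk' : x.1 k' = u.1 k' - 1 := by rw [hx]; exact stepF_apply_j _ _ hk'i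
      by_cases hj2 : 2 ≤ u.1 j
      · obtain ⟨x2, hx2⟩ : ∃ x2 : SRVertex m n, x2.1 = stepF u.1 j i 2 :=
          ⟨⟨stepF u.1 j i 2, by rw [sum_stepF _ _ _ _ hj2]; exact u.2⟩, rfl⟩
        have hx2i : x2.1 i = u.1 i + 2 := by rw [hx2]; exact stepF_apply_i _ _ hij
        have hx2j : x2.1 j = u.1 j - 2 := by rw [hx2]; exact stepF_apply_j _ _ (Ne.symm hij)
        have hx2k' : x2.1 k' = u.1 k' := by
          rw [hx2]; exact stepF_apply_other _ _ hk'i hk'j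
        have hx2L : x2 ∈ lineSet u i j := fun t h1 h2 => by
          rw [hx2]; exact stepF_apply_other _ _ h1 h2
        have hxx2 : x ≠ x2 := fun h => by rw [h, hx2i] at hxi; omega
        exact not_adj_of_three hij (Ne.symm hk'i) (Ne.symm hk'j)
          (by omega) (by omega) (by omega) (hT hxT (hLT hx2L) hxx2)
      · have hi1 : 1 ≤ u.1 i := by omega
        obtain ⟨x2, hx2⟩ : ∃ x2 : SRVertex m n, x2.1 = stepF u.1 i j 1 :=
          ⟨⟨stepF u.1 i j 1, by rw [sum_stepF _ _ _ _ hi1]; exact u.2⟩, rfl⟩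
        have hx2i : x2.1 i = u.1 i - 1 := by rw [hx2]; exact stepF_apply_j _ _ hij
        have hx2j : x2.1 j = u.1 j + 1 := by rw [hx2]; exact stepF_apply_i _ _ (Ne.symm hij)
        have hx2k' : x2.1 k' = u.1 k' := by
          rw [hx2]; exact stepF_apply_other _ _ hk'j hk'i
        have hx2L : x2 ∈ lineSet u i j := fun t h1 h2 => by
          rw [hx2]; exact stepF_apply_other _ _ h2 h1
        have hxx2 : x ≠ x2 := fun h => by rw [h, hx2i] at hxi; omega
        exact not_adj_of_three hij (Ne.symm hk'i) (Ne.symm hk'j)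
          (by omega) (by omega) (by omega) (hT hxT (hLT hx2L) hxx2)
    · exfalso
      have hxi : x.1 i = u.1 i := by
        rw [hx]; exact stepF_apply_other _ _ (Ne.symm hk'i) hij
      have hxj : x.1 j = u.1 j - 1 := by rw [hx]; exact stepF_apply_j _ _ (Ne.symm hk'j)
      have hxk' : x.1 k' = u.1 k' + 1 := by rw [hx]; exact stepF_apply_i _ _ hk'j
      by_cases hj2 : 2 ≤ u.1 j
      · obtain ⟨x2, hx2⟩ : ∃ x2 : SRVertex m n, x2.1 = stepF u.1 j i 2 :=
          ⟨⟨stepF u.1 j i 2, by rw [sum_stepF _ _ _ _ hj2]; exact u.2⟩, rfl⟩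
        have hx2i : x2.1 i = u.1 i + 2 := by rw [hx2]; exact stepF_apply_i _ _ hij
        have hx2j : x2.1 j = u.1 j - 2 := by rw [hx2]; exact stepF_apply_j _ _ (Ne.symm hij)
        have hx2k' : x2.1 k' = u.1 k' := by
          rw [hx2]; exact stepF_apply_other _ _ hk'i hk'j
        have hx2L : x2 ∈ lineSet u i j := fun t h1 h2 => by
          rw [hx2]; exact stepF_apply_other _ _ h1 h2
        have hxx2 : x ≠ x2 := fun h => by rw [h, hx2i] at hxi; omega
        exact not_adj_of_three hij (Ne.symm hk'i) (Ne.symm hk'j)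
          (by omega) (by omega) (by omega) (hT hxT (hLT hx2L) hxx2)
      · have hi1 : 1 ≤ u.1 i := by omega
        obtain ⟨x2, hx2⟩ : ∃ x2 : SRVertex m n, x2.1 = stepF u.1 i j 1 :=
          ⟨⟨stepF u.1 i j 1, by rw [sum_stepF _ _ _ _ hi1]; exact u.2⟩, rfl⟩
        have hx2i : x2.1 i = u.1 i - 1 := by rw [hx2]; exact stepF_apply_j _ _ hij
        have hx2j : x2.1 j = u.1 j + 1 := by rw [hx2]; exact stepF_apply_i _ _ (Ne.symm hij)
        have hx2k' : x2.1 k' = u.1 k' := by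
          rw [hx2]; exact stepF_apply_other _ _ hk'j hk'i
        have hx2L : x2 ∈ lineSet u i j := fun t h1 h2 => by
          rw [hx2]; exact stepF_apply_other _ _ h2 h1
        have hxx2 : x ≠ x2 := fun h => by rw [h, hx2k'] at hxk'; omega
        exact not_adj_of_three hij (Ne.symm hk'i) (Ne.symm hk'j)
          (by omega) (by omega) (by omega) (hT hxT (hLT hx2L) hxx2)
  -- maximality of star B
  have hBmax : ∀ T, (SR m n).IsClique T → starSetB u j 1 ⊆ T → starSetB u j 1 = T := by
    intro T hT hBT
    refine Set.Subset.antisymm hBT ?_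
    intro x hxT
    by_cases hxu : x = u
    · exact hxu ▸ huB
    by_cases hxv : x = v
    · exact hxv ▸ hvB
    rcases common_nbr hij one_pos hj1 hv (hT (hBT huB) hxT (fun h => hxu h.symm))
        (hT (hBT hvB) hxT (fun h => hxv h.symm)) with
      hL | ⟨k', hk'i, hk'j, hk'le, hx⟩ | ⟨k', hk'i, hk'j, hx⟩
    · exfalso
      have hxk : x.1 k = u.1 k := hL k (Ne.symm hik) (Ne.symm hjk)
      have hxw0 : x ≠ w0 := by
        intro h; rw [h, hw0k] at hxk; omega
      apply not_adj_of_three hij hik hjk ?_ ?_ ?_ (hT hxT (hBT hw0B) hxw0)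
      · rw [hw0i]
        intro hxi
        exact hxu (hxu_of x hL hxi)
      · rw [hw0j]
        intro hxj
        exact hxv (hxv_of x hL hxj)
      · rw [hxk, hw0k]; omega
    · exfalso
      have hxi : x.1 i = u.1 i + 1 := by rw [hx]; exact stepF_apply_i _ _ (Ne.symm hk'i)
      have hxj : x.1 j = u.1 j := by
        rw [hx]; exact stepF_apply_other _ _ (Ne.symm hij) (Ne.symm hk'j)
      have hxw0 : x ≠ w0 := by
        intro h; rw [h, hw0i] at hxi; omega
      apply not_adj_of_three hij hik hjk ?_ ?_ ?_ (hT hxT (hBT hw0B) hxw0)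
      · rw [hxi, hw0i]; omega
      · rw [hxj, hw0j]; omega
      · by_cases hkk' : k = k'
        · subst hkk'
          have hxk : x.1 k = u.1 k - 1 := by rw [hx]; exact stepF_apply_j _ _ hk'i
          rw [hxk, hw0k]; omega
        · have hxk : x.1 k = u.1 k := by
            rw [hx]; exact stepF_apply_other _ _ (Ne.symm hik) hkk'
          rw [hxk, hw0k]; omega
    · exact ⟨k', hx⟩
  -- maximality of star A
  have hAmax : ∀ T, (SR m n).IsClique T → starSetA u i 1 ⊆ T → starSetA u i 1 = T := by
    intro T hT hAT
    refine Set.Subset.antisymm hAT ?_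
    intro x hxT
    by_cases hxu : x = u
    · exact hxu ▸ huA
    by_cases hxv : x = v
    · exact hxv ▸ hvA
    rcases common_nbr hij one_pos hj1 hv (hT (hAT huA) hxT (fun h => hxu h.symm))
        (hT (hAT hvA) hxT (fun h => hxv h.symm)) with
      hL | ⟨k', hk'i, hk'j, hk'le, hx⟩ | ⟨k', hk'i, hk'j, hx⟩
    · exfalso
      have hxk : x.1 k = u.1 k := hL k (Ne.symm hik) (Ne.symm hjk)
      have hxw1 : x ≠ w1 := by
        intro h; rw [h, hw1k] at hxk; omega
      apply not_adj_of_three hij hik hjk ?_ ?_ ?_ (hT hxT (hAT hw1A) hxw1)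
      · rw [hw1i]
        intro hxi
        apply hxv
        have hsumx := pair_sum hij hL
        exact hxv_of x hL (by omega)
      · rw [hw1j]
        intro hxj
        have hsumx := pair_sum hij hL
        exact hxu (hxu_of x hL (by omega))
      · rw [hxk, hw1k]; omega
    · exact ⟨k', hx⟩
    · exfalso
      have hxi : x.1 i = u.1 i := by
        rw [hx]; exact stepF_apply_other _ _ (Ne.symm hk'i) hij
      have hxj : x.1 j = u.1 j - 1 := by rw [hx]; exact stepF_apply_j _ _ (Ne.symm hk'j)
      have hxw1 : x ≠ w1 := by
        intro h; rw [h, hw1i] at hxi; omega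
      apply not_adj_of_three hij hik hjk ?_ ?_ ?_ (hT hxT (hAT hw1A) hxw1)
      · rw [hxi, hw1i]; omega
      · rw [hxj, hw1j]; omega
      · by_cases hkk' : k = k'
        · subst hkk'
          have hxk : x.1 k = u.1 k + 1 := by rw [hx]; exact stepF_apply_i _ _ hk'j
          rw [hxk, hw1k]; omega
        · have hxk : x.1 k = u.1 k := by
            rw [hx]; exact stepF_apply_other _ _ hkk' (fun h => hjk h.symm)
          rw [hxk, hw1k]; omega
  -- distinctness
  have hw0L : w0 ∉ lineSet u i j := by
    intro h
    have := h k (Ne.symm hik) (Ne.symm hjk)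
    rw [hw0k] at this; omega
  have hw1L : w1 ∉ lineSet u i j := by
    intro h
    have := h k (Ne.symm hik) (Ne.symm hjk)
    rw [hw1k] at this; omega
  have hw0A : w0 ∉ starSetA u i 1 := by
    rintro ⟨k'', hk''⟩
    by_cases h : k'' = i
    · subst h
      rw [stepF_self] at hk''
      have := congrFun hk'' j
      rw [hw0j] at this  -- careful: hk'' : w0.1 = u.1
      omega
    · have h1 := congrFun hk'' i
      rw [stepF_apply_i _ _ (Ne.symm h)] at h1
      rw [hw0i] at h1
      omega
  have hLA : lineSet u i j ≠ starSetA u i 1 := fun h => hw1L (by rw [h]; exact hw1A)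
  have hLB : lineSet u i j ≠ starSetB u j 1 := fun h => hw0L (by rw [h]; exact hw0B)
  have hAB : starSetA u i 1 ≠ starSetB u j 1 := fun h => hw0A (by rw [h]; exact hw0B)
  -- assemble
  have h3 : ({lineSet u i j, starSetA u i 1, starSetB u j 1} : Set (Set (SRVertex m n))) ⊆
      {S : Set (SRVertex m n) | (SR m n).IsClique S ∧
        (∀ T : Set (SRVertex m n), (SR m n).IsClique T → S ⊆ T → S = T) ∧
        u ∈ S ∧ v ∈ S} := by
    intro S hS
    simp only [Set.mem_insert_iff, Set.mem_singleton_iff] at hS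
    rcases hS with rfl | rfl | rfl
    · exact ⟨line_isClique u hij, hLmax, huL, hvL⟩
    · exact ⟨starA_isClique u one_pos, hAmax, huA, hvA⟩
    · exact ⟨starB_isClique u one_pos hj1, hBmax, huB, hvB⟩
  have hcard3 : ({lineSet u i j, starSetA u i 1, starSetB u j 1} :
      Set (Set (SRVertex m n))).ncard = 3 := by
    rw [Set.ncard_insert_of_notMem (by simp [hLA, hLB]) (Set.toFinite _),
      Set.ncard_insert_of_notMem (by simp [hAB]) (Set.toFinite _), Set.ncard_singleton]
  have hle := Set.ncard_le_ncard h3 (Set.toFinite _)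
  omega

end SRAux

/-- For `m, n ≥ 3` and a vertex `u` of `SR(m,n)`: every neighbor `v` of `u` lies in at
most two maximal cliques containing `u` if and only if `u` has exactly one nonzero
coordinate. -/
theorem SR_local_maximal_cliques (m n : ℕ) (hm : 3 ≤ m) (hn : 3 ≤ n)
    (u : SRVertex m n) :
    (∀ v : SRVertex m n, (SR m n).Adj u v →
        {S : Set (SRVertex m n) | (SR m n).IsClique S ∧
          (∀ T : Set (SRVertex m n), (SR m n).IsClique T → S ⊆ T → S = T) ∧
          u ∈ S ∧ v ∈ S}.ncard ≤ 2)
      ↔ (Finset.univ.filter fun j => u.1 j ≠ 0).card = 1 := by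
  constructor
  · intro hb
    by_contra hone
    obtain ⟨v, hadj, hgt⟩ := SRAux.dir2 hm hn hone
    have := hb v hadj
    omega
  · intro hone v hadj
    exact SRAux.dir1 hone v hadj
end

section
/- For every m ≥ 1, the independence number α of SR(m,3) (the maximum cardinality of a set of pairwise nonadjacent vertices) is: α = (m+1)(m+2)/6 if m ≡ 1 or 5 (mod 6); α = m(m+3)/6 if m ≡ 3 (mod 6); α = m(m+2)/6 if m ≡ 0 or 4 (mod 6); α = (m² + 2m − 2)/6 if m ≡ 2 (mod 6). (In each case the indicated expression is a natural number.) -/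
open Matrix Polynomial

namespace SRAux

open Finset

variable {m : ℕ}

def supp (x : SRVertex m 3) : Finset (Fin m) := Finset.univ.filter (fun v => x.1 v ≠ 0)

lemma mem_supp {x : SRVertex m 3} {v : Fin m} : v ∈ supp x ↔ x.1 v ≠ 0 := by
  simp [supp]

lemma sum_supp (x : SRVertex m 3) : ∑ v ∈ supp x, x.1 v = 3 := by
  rw [supp, Finset.sum_filter_ne_zero]
  exact x.2

lemma one_le_of_mem {x : SRVertex m 3} {v : Fin m} (h : v ∈ supp x) : 1 ≤ x.1 v := by
  have := mem_supp.1 h; omega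

lemma card_supp_le (x : SRVertex m 3) : (supp x).card ≤ 3 := by
  have h : (supp x).card ≤ ∑ v ∈ supp x, x.1 v := by
    rw [Finset.card_eq_sum_ones]
    exact Finset.sum_le_sum (fun v hv => one_le_of_mem hv)
  rw [sum_supp] at h; exact h

lemma card_supp_pos (x : SRVertex m 3) : 1 ≤ (supp x).card := by
  rcases Finset.eq_empty_or_nonempty (supp x) with h | h
  · exfalso
    have := sum_supp x
    rw [h] at this; simp at this
  · exact Finset.card_pos.2 h

lemma shape1 {x : SRVertex m 3} (h : (supp x).card = 1) :
    ∃ i, x.1 i = 3 ∧ ∀ v, v ≠ i → x.1 v = 0 := by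
  obtain ⟨i, hi⟩ := Finset.card_eq_one.1 h
  refine ⟨i, ?_, ?_⟩
  · have := sum_supp x
    rw [hi, Finset.sum_singleton] at this; exact this
  · intro v hv
    by_contra hv0
    have : v ∈ supp x := mem_supp.2 hv0
    rw [hi] at this; simp at this; exact hv this

lemma shape2 {x : SRVertex m 3} (h : (supp x).card = 2) :
    ∃ i j, i ≠ j ∧ x.1 i = 2 ∧ x.1 j = 1 ∧ ∀ v, v ≠ i → v ≠ j → x.1 v = 0 := by
  obtain ⟨i, j, hij, hs⟩ := Finset.card_eq_two.1 h
  have hsum : x.1 i + x.1 j = 3 := by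
    have := sum_supp x
    rw [hs, Finset.sum_insert (by simp [hij]), Finset.sum_singleton] at this
    exact this
  have hi1 : 1 ≤ x.1 i := one_le_of_mem (by rw [hs]; simp)
  have hj1 : 1 ≤ x.1 j := one_le_of_mem (by rw [hs]; simp)
  have hout : ∀ v, v ≠ i → v ≠ j → x.1 v = 0 := by
    intro v hvi hvj
    by_contra hv0
    have : v ∈ supp x := mem_supp.2 hv0
    rw [hs] at this; simp at this; tauto
  rcases Nat.lt_or_ge (x.1 i) 2 with h2 | h2
  · exact ⟨j, i, hij.symm, by omega, by omega, fun v hvj hvi => hout v hvi hvj⟩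
  · exact ⟨i, j, hij, by omega, by omega, hout⟩

lemma shape3 {x : SRVertex m 3} (h : (supp x).card = 3) :
    ∃ i j k, i ≠ j ∧ i ≠ k ∧ j ≠ k ∧ x.1 i = 1 ∧ x.1 j = 1 ∧ x.1 k = 1 ∧
      ∀ v, v ≠ i → v ≠ j → v ≠ k → x.1 v = 0 := by
  obtain ⟨i, j, k, hij, hik, hjk, hs⟩ := Finset.card_eq_three.1 h
  have hsum : x.1 i + x.1 j + x.1 k = 3 := by
    have := sum_supp x
    rw [hs, Finset.sum_insert (by simp [hij, hik]),
      Finset.sum_insert (by simp [hjk]), Finset.sum_singleton] at this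
    omega
  have hi1 : 1 ≤ x.1 i := one_le_of_mem (by rw [hs]; simp)
  have hj1 : 1 ≤ x.1 j := one_le_of_mem (by rw [hs]; simp)
  have hk1 : 1 ≤ x.1 k := one_le_of_mem (by rw [hs]; simp)
  refine ⟨i, j, k, hij, hik, hjk, by omega, by omega, by omega, ?_⟩
  intro v hvi hvj hvk
  by_contra hv0
  have : v ∈ supp x := mem_supp.2 hv0
  rw [hs] at this; simp at this; tauto

lemma adj_of {x y : SRVertex m 3} (i j : Fin m) (hij : i ≠ j)
    (hi : x.1 i ≠ y.1 i) (hj : x.1 j ≠ y.1 j)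
    (ho : ∀ v, v ≠ i → v ≠ j → x.1 v = y.1 v) : (SR m 3).Adj x y := by
  show (Finset.univ.filter fun v => x.1 v ≠ y.1 v).card = 2
  have : (Finset.univ.filter fun v => x.1 v ≠ y.1 v) = {i, j} := by
    ext v
    simp only [Finset.mem_filter, Finset.mem_univ, true_and, Finset.mem_insert,
      Finset.mem_singleton]
    constructor
    · intro hv
      by_contra hc
      push_neg at hc
      exact hv (ho v hc.1 hc.2)
    · rintro (rfl | rfl) <;> assumption
  rw [this, Finset.card_insert_of_notMem (by simp [hij]), Finset.card_singleton]


lemma formAt {x : SRVertex m 3} {i j : Fin m} (hij : i ≠ j)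
    (hi : x.1 i ≠ 0) (hj : x.1 j ≠ 0) :
    (x.1 i + x.1 j = 3 ∧ ∀ v, v ≠ i → v ≠ j → x.1 v = 0) ∨
    (∃ k, k ≠ i ∧ k ≠ j ∧ x.1 i = 1 ∧ x.1 j = 1 ∧ x.1 k = 1 ∧
      ∀ v, v ≠ i → v ≠ j → v ≠ k → x.1 v = 0) := by
  have hsub : ({i, j} : Finset (Fin m)) ⊆ supp x := by
    intro v hv
    simp only [Finset.mem_insert, Finset.mem_singleton] at hv
    rcases hv with rfl | rfl <;> exact mem_supp.2 (by assumption)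
  have hc2 : ({i, j} : Finset (Fin m)).card = 2 := by
    rw [Finset.card_insert_of_notMem (by simp [hij]), Finset.card_singleton]
  have hcard := card_supp_le x
  have hge : 2 ≤ (supp x).card := by
    have := Finset.card_le_card hsub
    omega
  rcases Nat.eq_or_lt_of_le hge with hc | hc
  · -- card = 2
    left
    have heq : supp x = {i, j} :=
      (Finset.eq_of_subset_of_card_le hsub (by omega)).symm
    constructor
    · have := sum_supp x
      rw [heq, Finset.sum_insert (by simp [hij]), Finset.sum_singleton] at this
      exact this
    · intro v hvi hvj
      by_contra hv0
      have hv : v ∈ supp x := mem_supp.2 hv0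
      rw [heq] at hv; simp at hv; tauto
  · -- card = 3
    right
    have hc3 : (supp x).card = 3 := by omega
    have hd : (supp x \ {i, j}).card = 1 := by
      rw [Finset.card_sdiff_of_subset hsub, hc2, hc3]
    obtain ⟨k, hk⟩ := Finset.card_eq_one.1 hd
    have hkmem : k ∈ supp x \ ({i, j} : Finset (Fin m)) := by rw [hk]; simp
    simp only [Finset.mem_sdiff, Finset.mem_insert, Finset.mem_singleton] at hkmem
    obtain ⟨hksupp, hknot⟩ := hkmem
    push_neg at hknot
    obtain ⟨hki, hkj⟩ := hknot
    have hout : ∀ v, v ≠ i → v ≠ j → v ≠ k → x.1 v = 0 := by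
      intro v hvi hvj hvk
      by_contra hv0
      have hv : v ∈ supp x := mem_supp.2 hv0
      have : v ∈ supp x \ ({i, j} : Finset (Fin m)) := by
        simp only [Finset.mem_sdiff, Finset.mem_insert, Finset.mem_singleton]
        tauto
      rw [hk] at this
      simp only [Finset.mem_singleton] at this
      exact hvk this
    have hsupp_eq : supp x = {i, j, k} := by
      apply Finset.Subset.antisymm
      · intro v hv
        simp only [Finset.mem_insert, Finset.mem_singleton]
        by_contra hc'
        push_neg at hc'
        exact mem_supp.1 hv (hout v hc'.1 hc'.2.1 hc'.2.2)
      · intro v hv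
        simp only [Finset.mem_insert, Finset.mem_singleton] at hv
        rcases hv with rfl | rfl | rfl
        · exact mem_supp.2 hi
        · exact mem_supp.2 hj
        · exact hksupp
    have hsum : x.1 i + x.1 j + x.1 k = 3 := by
      have := sum_supp x
      rw [hsupp_eq, Finset.sum_insert (by simp [hij, Ne.symm hki]),
        Finset.sum_insert (by simp [Ne.symm hkj]), Finset.sum_singleton] at this
      omega
    have h1 : 1 ≤ x.1 i := by omega
    have h2 : 1 ≤ x.1 j := by omega
    have h3 : 1 ≤ x.1 k := one_le_of_mem hksupp
    exact ⟨k, hki, hkj, by omega, by omega, by omega, hout⟩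

/-- Two nonadjacent vertices sharing two support coordinates are equal. -/
lemma shared_pair {x y : SRVertex m 3} {i j : Fin m} (hij : i ≠ j)
    (hxi : x.1 i ≠ 0) (hxj : x.1 j ≠ 0) (hyi : y.1 i ≠ 0) (hyj : y.1 j ≠ 0)
    (hna : ¬ (SR m 3).Adj x y) : x = y := by
  rcases formAt hij hxi hxj with ⟨hxs, hxo⟩ | ⟨k, hki, hkj, hx1, hx2, hx3, hxo⟩ <;>
    rcases formAt hij hyi hyj with ⟨hys, hyo⟩ | ⟨l, hli, hlj, hy1, hy2, hy3, hyo⟩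
  · -- both on {i,j}
    by_cases hxy : x.1 i = y.1 i
    · apply Subtype.ext; funext v
      by_cases hvi : v = i
      · rw [hvi]; exact hxy
      by_cases hvj : v = j
      · rw [hvj]; omega
      · rw [hxo v hvi hvj, hyo v hvi hvj]
    · exact absurd (adj_of i j hij hxy (by omega)
        (fun v hvi hvj => by rw [hxo v hvi hvj, hyo v hvi hvj])) hna
  · -- x on {i,j}, y = (1,1,1) at i,j,l
    have hyl0 : x.1 l = 0 := hxo l hli hlj
    by_cases hx2' : x.1 i = 2
    · exact absurd (adj_of i l (Ne.symm hli) (by omega) (by omega)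
        (fun v hvi hvl => by
          by_cases hvj : v = j
          · rw [hvj]; omega
          · rw [hxo v hvi hvj, hyo v hvi hvj hvl])) hna
    · have hx2'' : x.1 j = 2 := by omega
      exact absurd (adj_of j l (Ne.symm hlj) (by omega) (by omega)
        (fun v hvj hvl => by
          by_cases hvi : v = i
          · rw [hvi]; omega
          · rw [hxo v hvi hvj, hyo v hvi hvj hvl])) hna
  · -- x = (1,1,1) at i,j,k, y on {i,j}
    have hxk0 : y.1 k = 0 := hyo k hki hkj
    by_cases hy2' : y.1 i = 2
    · exact absurd (adj_of i k (Ne.symm hki) (by omega) (by omega)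
        (fun v hvi hvk => by
          by_cases hvj : v = j
          · rw [hvj]; omega
          · rw [hxo v hvi hvj hvk, hyo v hvi hvj])) hna
    · have hy2'' : y.1 j = 2 := by omega
      exact absurd (adj_of j k (Ne.symm hkj) (by omega) (by omega)
        (fun v hvj hvk => by
          by_cases hvi : v = i
          · rw [hvi]; omega
          · rw [hxo v hvi hvj hvk, hyo v hvi hvj])) hna
  · -- both (1,1,1)
    by_cases hkl : k = l
    · subst hkl
      apply Subtype.ext; funext v
      by_cases hvi : v = i
      · rw [hvi]; omega
      by_cases hvj : v = j
      · rw [hvj]; omega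
      by_cases hvk : v = k
      · rw [hvk]; omega
      · rw [hxo v hvi hvj hvk, hyo v hvi hvj hvk]
    · have hxl : x.1 l = 0 := hxo l hli hlj (fun h => hkl h.symm)
      have hyk : y.1 k = 0 := hyo k hki hkj hkl
      exact absurd (adj_of k l hkl (by omega) (by omega)
        (fun v hvk hvl => by
          by_cases hvi : v = i
          · rw [hvi]; omega
          by_cases hvj : v = j
          · rw [hvj]; omega
          · rw [hxo v hvi hvj hvk, hyo v hvi hvj hvl])) hna

/-! ### Upper bound machinery -/

def Ev (v : Fin m) (x : SRVertex m 3) : Finset (Fin m) :=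
  if x.1 v ≠ 0 then (supp x).erase v else ∅

lemma mem_Ev {v u : Fin m} {x : SRVertex m 3} :
    u ∈ Ev v x ↔ x.1 v ≠ 0 ∧ u ≠ v ∧ x.1 u ≠ 0 := by
  unfold Ev
  split_ifs with h
  · simp [Finset.mem_erase, mem_supp, h]
  · simp [h]

lemma card_Ev (v : Fin m) (x : SRVertex m 3) :
    (Ev v x).card = if x.1 v ≠ 0 then (supp x).card - 1 else 0 := by
  unfold Ev
  split_ifs with h
  · exact Finset.card_erase_of_mem (mem_supp.2 h)
  · simp

lemma sum_card_Ev (x : SRVertex m 3) :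
    ∑ v, (Ev v x).card = (supp x).card * ((supp x).card - 1) := by
  have : ∀ v, (Ev v x).card = if x.1 v ≠ 0 then (supp x).card - 1 else 0 :=
    fun v => card_Ev v x
  rw [Finset.sum_congr rfl (fun v _ => this v)]
  rw [Finset.sum_ite, Finset.sum_const, Finset.sum_const]
  simp only [smul_eq_mul, mul_zero, add_zero]
  congr 1

lemma card_Ev_decomp (v : Fin m) (x : SRVertex m 3) :
    (Ev v x).card = (if ((supp x).card = 2 ∧ x.1 v ≠ 0) then 1 else 0)
      + 2 * (if ((supp x).card = 3 ∧ x.1 v ≠ 0) then 1 else 0) := by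
  have h1 := card_supp_le x
  have h2 := card_supp_pos x
  rw [card_Ev]
  split_ifs <;> omega

lemma B_unique {x y : SRVertex m 3} {v : Fin m}
    (hx2 : (supp x).card = 2) (hy2 : (supp y).card = 2)
    (hxv : x.1 v ≠ 0) (hyv : y.1 v ≠ 0) (heq : x.1 v = y.1 v)
    (hna : ¬ (SR m 3).Adj x y) : x = y := by
  obtain ⟨i, j, hij, xi, xj, xo⟩ := shape2 hx2
  obtain ⟨a, b, hab, ya, yb, yo⟩ := shape2 hy2
  have hvx : v = i ∨ v = j := by
    by_contra hc; push_neg at hc; exact hxv (xo v hc.1 hc.2)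
  have hvy : v = a ∨ v = b := by
    by_contra hc; push_neg at hc; exact hyv (yo v hc.1 hc.2)
  rcases hvx with rfl | rfl <;> rcases hvy with h | h
  · -- v = i = a
    subst h
    by_cases hjb : j = b
    · subst hjb
      apply Subtype.ext; funext v'
      by_cases h1 : v' = v
      · rw [h1]; omega
      by_cases h2 : v' = j
      · rw [h2]; omega
      · rw [xo v' h1 h2, yo v' h1 h2]
    · exact absurd (adj_of j b hjb
        (by rw [yo j (Ne.symm hij) hjb]; omega)
        (by rw [xo b (Ne.symm hab) (fun h => hjb h.symm)]; omega)
        (fun v' h1 h2 => by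
          by_cases h3 : v' = v
          · rw [h3]; omega
          · rw [xo v' h3 h1, yo v' h3 h2])) hna
  · -- v = i, v = b : x.1 v = 2, y.1 v = 1
    subst h; omega
  · -- v = j, v = a
    subst h; omega
  · -- v = j = b
    subst h
    by_cases hia : i = a
    · subst hia
      apply Subtype.ext; funext v'
      by_cases h1 : v' = i
      · rw [h1]; omega
      by_cases h2 : v' = v
      · rw [h2]; omega
      · rw [xo v' h1 h2, yo v' h1 h2]
    · exact absurd (adj_of i a hia
        (by rw [yo i hia (hij)]; omega)
        (by rw [xo a (fun h => hia h.symm) hab]; omega)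
        (fun v' h1 h2 => by
          by_cases h3 : v' = v
          · rw [h3]; omega
          · rw [xo v' h1 h3, yo v' h2 h3])) hna

lemma A_unique {x y : SRVertex m 3}
    (hx1 : (supp x).card = 1) (hy1 : (supp y).card = 1)
    (hna : ¬ (SR m 3).Adj x y) : x = y := by
  obtain ⟨i, xi, xo⟩ := shape1 hx1
  obtain ⟨j, yj, yo⟩ := shape1 hy1
  by_cases hij : i = j
  · subst hij
    apply Subtype.ext; funext v
    by_cases h : v = i
    · rw [h]; omega
    · rw [xo v h, yo v h]
  · exact absurd (adj_of i j hij
      (by rw [yo i hij]; omega)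
      (by rw [xo j (fun h => hij h.symm)]; omega)
      (fun v h1 h2 => by rw [xo v h1, yo v h2])) hna

lemma AB_excl {x y : SRVertex m 3} {u : Fin m}
    (hx1 : (supp x).card = 1) (hxu : x.1 u ≠ 0)
    (hy2 : (supp y).card = 2) (hyu : y.1 u ≠ 0) : (SR m 3).Adj x y := by
  obtain ⟨i, xi, xo⟩ := shape1 hx1
  obtain ⟨a, b, hab, ya, yb, yo⟩ := shape2 hy2
  have hui : u = i := by
    by_contra h; exact hxu (xo u h)
  subst hui
  have huy : u = a ∨ u = b := by
    by_contra hc; push_neg at hc; exact hyu (yo u hc.1 hc.2)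
  rcases huy with rfl | rfl
  · exact adj_of u b hab (by omega)
      (by rw [xo b (Ne.symm hab)]; omega)
      (fun v h1 h2 => by rw [xo v h1, yo v h1 h2])
  · exact adj_of a u hab (by rw [xo a hab]; omega) (by omega)
      (fun v h1 h2 => by rw [xo v h2, yo v h1 h2])

variable (S : Finset (SRVertex m 3))

def bV (v : Fin m) : ℕ := (S.filter (fun x => (supp x).card = 2 ∧ x.1 v ≠ 0)).card
def cV (v : Fin m) : ℕ := (S.filter (fun x => (supp x).card = 3 ∧ x.1 v ≠ 0)).card
def DV (v : Fin m) : ℕ := ∑ x ∈ S, (Ev v x).card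

lemma DV_eq (v : Fin m) : DV S v = bV S v + 2 * cV S v := by
  unfold DV bV cV
  rw [Finset.card_filter, Finset.card_filter, Finset.mul_sum, ← Finset.sum_add_distrib]
  exact Finset.sum_congr rfl fun x _ => card_Ev_decomp v x

theorem upper_main
    (hS : (↑S : Set (SRVertex m 3)).Pairwise (fun a b => ¬ (SR m 3).Adj a b)) :
    6 * S.card ≤ 4*m + 2 + m*(m-1) ∧
      (m % 2 = 0 → 6 * S.card ≤ 4*m + 2 + m*(m-2)) := by
  classical
  have hna : ∀ x ∈ S, ∀ y ∈ S, x ≠ y → ¬ (SR m 3).Adj x y :=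
    fun x hx y hy hxy => hS hx hy hxy
  have hdisj : ∀ v : Fin m, ∀ x ∈ S, ∀ y ∈ S, x ≠ y → Disjoint (Ev v x) (Ev v y) := by
    intro v x hx y hy hxy
    rw [Finset.disjoint_left]
    intro u hux huy
    rw [mem_Ev] at hux huy
    exact hxy (shared_pair hux.2.1 hux.2.2 hux.1 huy.2.2 huy.1 (hna x hx y hy hxy))
  have hDle : ∀ v : Fin m, DV S v ≤ m - 1 := by
    intro v
    have h1 : DV S v = (S.biUnion (fun x => Ev v x)).card :=
      (Finset.card_biUnion (fun x hx y hy hxy => hdisj v x hx y hy hxy)).symm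
    rw [h1]
    have h2 : S.biUnion (fun x => Ev v x) ⊆ Finset.univ.erase v := by
      intro u hu
      simp only [Finset.mem_biUnion] at hu
      obtain ⟨x, _, hux⟩ := hu
      rw [mem_Ev] at hux
      exact Finset.mem_erase.2 ⟨hux.2.1, Finset.mem_univ u⟩
    calc (S.biUnion (fun x => Ev v x)).card ≤ (Finset.univ.erase v).card :=
          Finset.card_le_card h2
      _ = m - 1 := by
          rw [Finset.card_erase_of_mem (Finset.mem_univ v), Finset.card_univ,
            Fintype.card_fin]
  have hbv2 : ∀ v, bV S v ≤ 2 := by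
    intro v
    have h : (S.filter (fun x => (supp x).card = 2 ∧ x.1 v ≠ 0)).card
        ≤ ({1, 2} : Finset ℕ).card := by
      apply Finset.card_le_card_of_injOn (fun x => x.1 v)
      · intro x hx
        simp only [Finset.mem_coe, Finset.mem_filter] at hx
        obtain ⟨hxS, hx2, hxv⟩ := hx
        obtain ⟨i, j, hij, xi, xj, xo⟩ := shape2 hx2
        have hv : v = i ∨ v = j := by
          by_contra hc; push_neg at hc; exact hxv (xo v hc.1 hc.2)
        rcases hv with rfl | rfl <;> simp [xi, xj]
      · intro x hx y hy hxyv
        simp only [Finset.coe_filter, Set.mem_setOf_eq] at hx hy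
        by_contra hxy
        exact hxy (B_unique hx.2.1 hy.2.1 hx.2.2 hy.2.2 hxyv (hna x hx.1 y hy.1 hxy))
    simpa [bV] using h
  set aA := (S.filter (fun x => (supp x).card = 1)).card with haA
  set bB := (S.filter (fun x => (supp x).card = 2)).card with hbB
  have hA1 : aA ≤ 1 := by
    rw [haA, Finset.card_le_one]
    intro x hx y hy
    simp only [Finset.mem_filter] at hx hy
    by_contra hxy
    exact hxy (A_unique hx.2 hy.2 (hna _ hx.1 _ hy.1 hxy))
  have key1 : 6 * S.card = (6 * aA + 4 * bB) + ∑ v, DV S v := by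
    have hsplit : ∀ x : SRVertex m 3,
        (6 : ℕ) = ((if (supp x).card = 1 then 6 else if (supp x).card = 2 then 4 else 0)
          + (supp x).card * ((supp x).card - 1)) := by
      intro x
      have h1 := card_supp_le x
      have h2 := card_supp_pos x
      interval_cases h : (supp x).card <;> simp
    have e1 : 6 * S.card = ∑ x ∈ S, (6 : ℕ) := by
      rw [Finset.sum_const, smul_eq_mul, mul_comm]
    rw [e1, Finset.sum_congr rfl (fun x _ => hsplit x), Finset.sum_add_distrib]
    congr 1
    · -- ∑ ite = 6 aA + 4 bB
      have e2 : ∀ x : SRVertex m 3,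
          (if (supp x).card = 1 then 6 else if (supp x).card = 2 then 4 else 0)
          = 6 * (if (supp x).card = 1 then 1 else 0)
            + 4 * (if (supp x).card = 2 then 1 else 0) := by
        intro x; split_ifs <;> omega
      rw [Finset.sum_congr rfl (fun x _ => e2 x), Finset.sum_add_distrib,
        ← Finset.mul_sum, ← Finset.mul_sum, ← Finset.card_filter, ← Finset.card_filter]
    · -- ∑ w3 = ∑ DV
      rw [Finset.sum_congr rfl (fun x _ => (sum_card_Ev x).symm), Finset.sum_comm]
      rfl
  have key2 : 2 * bB = ∑ v, bV S v := by
    have e : ∀ x : SRVertex m 3,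
        (∑ v, if ((supp x).card = 2 ∧ x.1 v ≠ 0) then 1 else 0)
          = if (supp x).card = 2 then 2 else 0 := by
      intro x
      by_cases h : (supp x).card = 2
      · simp only [h, true_and, if_true]
        rw [← Finset.card_filter]
        exact h
      · simp [h]
    have e1 : ∀ v : Fin m, bV S v = ∑ x ∈ S,
        (if ((supp x).card = 2 ∧ x.1 v ≠ 0) then 1 else 0) :=
      fun v => Finset.card_filter _ _
    rw [Finset.sum_congr rfl (fun v _ => e1 v), Finset.sum_comm,
      Finset.sum_congr rfl (fun x _ => e x)]
    have e2 : ∀ x : SRVertex m 3, (if (supp x).card = 2 then 2 else 0)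
        = 2 * (if (supp x).card = 2 then 1 else 0) := by
      intro x; split_ifs <;> omega
    rw [Finset.sum_congr rfl (fun x _ => e2 x), ← Finset.mul_sum, ← Finset.card_filter]
  have key3 : ∀ v, 2 * bV S v + (if DV S v % 2 = 1 then 1 else 0)
      ≤ 4 * (if bV S v ≠ 0 then 1 else 0) := by
    intro v
    have h1 := hbv2 v
    have h2 := DV_eq S v
    split_ifs <;> omega
  have key4 : (∑ v, if bV S v ≠ 0 then 1 else 0) + aA ≤ m ∧ aA ≤ m := by
    rcases Finset.eq_empty_or_nonempty (S.filter (fun x => (supp x).card = 1)) with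
      he | ⟨x₀, hx₀⟩
    · have ha0 : aA = 0 := by rw [haA, he]; simp
      constructor
      · rw [ha0, add_zero]
        calc (∑ v : Fin m, if bV S v ≠ 0 then 1 else 0) ≤ ∑ v : Fin m, 1 :=
            Finset.sum_le_sum (fun v _ => by split_ifs <;> omega)
          _ = m := by simp
      · omega
    · simp only [Finset.mem_filter] at hx₀
      obtain ⟨hx₀S, hx₀1⟩ := hx₀
      obtain ⟨u, hu3, huo⟩ := shape1 hx₀1
      have hm1 : 1 ≤ m := u.pos
      have ha1 : aA = 1 := by
        refine le_antisymm hA1 ?_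
        rw [haA, Nat.one_le_iff_ne_zero, ← Nat.pos_iff_ne_zero, Finset.card_pos]
        exact ⟨x₀, Finset.mem_filter.2 ⟨hx₀S, hx₀1⟩⟩
      have hbu : bV S u = 0 := by
        rw [bV, Finset.card_eq_zero, Finset.filter_eq_empty_iff]
        intro y hyS
        rintro ⟨hy2, hyu⟩
        have hne : x₀ ≠ y := by
          intro h; rw [h] at hx₀1; omega
        exact hna x₀ hx₀S y hyS hne (AB_excl hx₀1 (by omega) hy2 hyu)
      constructor
      · rw [ha1]
        have : (∑ v, if bV S v ≠ 0 then 1 else 0)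
            = (Finset.univ.filter (fun v => bV S v ≠ 0)).card :=
          (Finset.card_filter _ _).symm
        rw [this]
        have hsub : Finset.univ.filter (fun v => bV S v ≠ 0) ⊆ Finset.univ.erase u := by
          intro v hv
          simp only [Finset.mem_filter] at hv
          refine Finset.mem_erase.2 ⟨?_, Finset.mem_univ v⟩
          intro h; rw [h] at hv; exact hv.2 hbu
        have := Finset.card_le_card hsub
        rw [Finset.card_erase_of_mem (Finset.mem_univ u), Finset.card_univ,
          Fintype.card_fin] at this
        omega
      · omega
  obtain ⟨key4a, key4b⟩ := key4
  set T := ∑ v, (if DV S v % 2 = 1 then 1 else 0) with hT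
  have key5 : 6 * aA + 4 * bB + T ≤ 4 * m + 2 := by
    have h1 : (∑ v, (2 * bV S v + (if DV S v % 2 = 1 then 1 else 0)))
        ≤ ∑ v, 4 * (if bV S v ≠ 0 then 1 else 0) :=
      Finset.sum_le_sum (fun v _ => key3 v)
    rw [Finset.sum_add_distrib, ← Finset.mul_sum, ← key2, ← Finset.mul_sum] at h1
    omega
  constructor
  · -- general bound
    have h1 : (∑ v, DV S v) ≤ m * (m - 1) := by
      calc (∑ v, DV S v) ≤ ∑ _v : Fin m, (m - 1) :=
          Finset.sum_le_sum (fun v _ => hDle v)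
        _ = m * (m - 1) := by simp [mul_comm]
    omega
  · -- even bound
    intro hme
    have h1 : (∑ v, DV S v) ≤ m * (m - 2) + T := by
      have hp : ∀ v, DV S v ≤ (m - 2) + (if DV S v % 2 = 1 then 1 else 0) := by
        intro v
        have := hDle v
        split_ifs <;> omega
      calc (∑ v, DV S v) ≤ ∑ v, ((m - 2) + (if DV S v % 2 = 1 then 1 else 0)) :=
          Finset.sum_le_sum (fun v _ => hp v)
        _ = m * (m - 2) + T := by
            rw [Finset.sum_add_distrib, Finset.sum_const, Finset.card_univ,
              Fintype.card_fin, smul_eq_mul]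
    omega

/-! ### Lower bound: residue class constructions -/

section Classes

variable {N : ℕ} [NeZero N] (w : Fin m → ZMod N)

def fw (x : SRVertex m 3) : ZMod N := ∑ v, (x.1 v : ZMod N) * w v

lemma class_indep (t : ZMod N)
    (H1 : ∀ i j : Fin m, i ≠ j → w i ≠ w j)
    (H2 : ∀ i j : Fin m, i ≠ j → (2 : ZMod N) * w i ≠ 2 * w j)
    (H3 : ∀ i j : Fin m, i ≠ j → 3 * w i = t → 3 * w j = t → False) :
    (↑(Finset.univ.filter (fun x : SRVertex m 3 => fw w x = t)) :
      Set (SRVertex m 3)).Pairwise (fun a b => ¬ (SR m 3).Adj a b) := by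
  intro x hx y hy hxy hadj
  simp only [Finset.coe_filter, Set.mem_setOf_eq, Finset.mem_univ, true_and] at hx hy
  have hadj' : (Finset.univ.filter fun v => x.1 v ≠ y.1 v).card = 2 := hadj
  obtain ⟨i, j, hij, hset⟩ := Finset.card_eq_two.1 hadj'
  have hxi : x.1 i ≠ y.1 i := by
    have : i ∈ Finset.univ.filter fun v => x.1 v ≠ y.1 v := by rw [hset]; simp
    simpa using this
  have ho : ∀ v, v ≠ i → v ≠ j → x.1 v = y.1 v := by
    intro v h1 h2
    by_contra hc
    have : v ∈ Finset.univ.filter fun v => x.1 v ≠ y.1 v := by simp [hc]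
    rw [hset] at this
    simp only [Finset.mem_insert, Finset.mem_singleton] at this
    tauto
  have main : ∀ a b : SRVertex m 3, fw w a = t → fw w b = t →
      (∀ v, v ≠ i → v ≠ j → a.1 v = b.1 v) → b.1 i < a.1 i → False := by
    intro a b ha hb ho' hlt
    have hij' : ({i, j} : Finset (Fin m)) ⊆ Finset.univ := Finset.subset_univ _
    have hdiffa : ∑ v ∈ Finset.univ \ {i, j}, a.1 v
        = ∑ v ∈ Finset.univ \ {i, j}, b.1 v := by
      apply Finset.sum_congr rfl
      intro v hv
      simp only [Finset.mem_sdiff, Finset.mem_insert, Finset.mem_singleton] at hv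
      push_neg at hv
      exact ho' v hv.2.1 hv.2.2
    have hsa : ∑ v ∈ Finset.univ \ {i, j}, a.1 v + (a.1 i + a.1 j) = 3 := by
      rw [← Finset.sum_pair hij, Finset.sum_sdiff hij', a.2]
    have hsb : ∑ v ∈ Finset.univ \ {i, j}, b.1 v + (b.1 i + b.1 j) = 3 := by
      rw [← Finset.sum_pair hij, Finset.sum_sdiff hij', b.2]
    have hpairsum : a.1 i + a.1 j = b.1 i + b.1 j := by omega
    -- the weighted sums
    have hfdiff : ∑ v ∈ Finset.univ \ {i, j}, (a.1 v : ZMod N) * w v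
        = ∑ v ∈ Finset.univ \ {i, j}, (b.1 v : ZMod N) * w v := by
      apply Finset.sum_congr rfl
      intro v hv
      simp only [Finset.mem_sdiff, Finset.mem_insert, Finset.mem_singleton] at hv
      push_neg at hv
      rw [ho' v hv.2.1 hv.2.2]
    have hfa : ∑ v ∈ Finset.univ \ {i, j}, (a.1 v : ZMod N) * w v
        + ((a.1 i : ZMod N) * w i + (a.1 j : ZMod N) * w j) = t := by
      rw [← ha]
      rw [fw, ← Finset.sum_pair hij (f := fun v => (a.1 v : ZMod N) * w v),
        Finset.sum_sdiff hij']
    have hfb : ∑ v ∈ Finset.univ \ {i, j}, (b.1 v : ZMod N) * w v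
        + ((b.1 i : ZMod N) * w i + (b.1 j : ZMod N) * w j) = t := by
      rw [← hb]
      rw [fw, ← Finset.sum_pair hij (f := fun v => (b.1 v : ZMod N) * w v),
        Finset.sum_sdiff hij']
    have hpair : (a.1 i : ZMod N) * w i + (a.1 j : ZMod N) * w j
        = (b.1 i : ZMod N) * w i + (b.1 j : ZMod N) * w j := by
      rw [hfdiff] at hfa
      rw [← hfb] at hfa
      exact add_left_cancel hfa
    have hai3 : a.1 i ≤ 3 := by
      have := Finset.single_le_sum (f := fun v => a.1 v) (fun v _ => Nat.zero_le _)
        (Finset.mem_univ i)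
      rw [a.2] at this; exact this
    have hbj3 : b.1 j ≤ 3 := by
      have := Finset.single_le_sum (f := fun v => b.1 v) (fun v _ => Nat.zero_le _)
        (Finset.mem_univ j)
      rw [b.2] at this; exact this
    set r := a.1 i - b.1 i with hr
    have hrea : a.1 i = b.1 i + r := by omega
    have hreb : b.1 j = a.1 j + r := by omega
    have hr1 : 1 ≤ r := by omega
    have hr3 : r ≤ 3 := by omega
    rw [hrea, hreb] at hpair
    push_cast at hpair
    have hcanc : (r : ZMod N) * w i = (r : ZMod N) * w j := by linear_combination hpair
    interval_cases r
    · apply H1 i j hij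
      simpa using hcanc
    · apply H2 i j hij
      push_cast at hcanc
      exact hcanc
    · -- r = 3
      have hai : a.1 i = 3 := by omega
      have hbi : b.1 i = 0 := by omega
      have haj : a.1 j = 0 := by omega
      have hbj : b.1 j = 3 := by omega
      have haz : ∀ v, v ≠ i → a.1 v = 0 := by
        intro v hv
        have hsum := a.2
        rw [← Finset.add_sum_erase _ _ (Finset.mem_univ i), hai] at hsum
        have : ∑ v ∈ Finset.univ.erase i, a.1 v = 0 := by omega
        have := (Finset.sum_eq_zero_iff).1 this
        exact this v (Finset.mem_erase.2 ⟨hv, Finset.mem_univ v⟩)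
      have hbz : ∀ v, v ≠ j → b.1 v = 0 := by
        intro v hv
        have hsum := b.2
        rw [← Finset.add_sum_erase _ _ (Finset.mem_univ j), hbj] at hsum
        have : ∑ v ∈ Finset.univ.erase j, b.1 v = 0 := by omega
        have := (Finset.sum_eq_zero_iff).1 this
        exact this v (Finset.mem_erase.2 ⟨hv, Finset.mem_univ v⟩)
      have hfa3 : (3 : ZMod N) * w i = t := by
        rw [← ha, fw]
        rw [Finset.sum_eq_single i]
        · rw [hai]; push_cast; ring
        · intro v _ hv
          rw [haz v hv]; simp
        · intro h; exact absurd (Finset.mem_univ i) h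
      have hfb3 : (3 : ZMod N) * w j = t := by
        rw [← hb, fw]
        rw [Finset.sum_eq_single j]
        · rw [hbj]; push_cast; ring
        · intro v _ hv
          rw [hbz v hv]; simp
        · intro h; exact absurd (Finset.mem_univ j) h
      exact H3 i j hij hfa3 hfb3
  rcases Nat.lt_or_ge (y.1 i) (x.1 i) with hlt | hge
  · exact main x y hx hy ho hlt
  · have hlt : x.1 i < y.1 i := by omega
    exact main y x hy hx (fun v h1 h2 => (ho v h1 h2).symm) hlt

end Classes

/-! ### Counting residue classes -/

section Counting

def wsum3 {k : ℕ} (x : Fin k → ℕ) : ZMod 3 := ∑ v, (x v : ZMod 3) * (v.val : ZMod 3)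

def Fc (k n : ℕ) (c : ZMod 3) : ℕ :=
  ((Finset.Nat.antidiagonalTuple k n).filter (fun x => wsum3 x = c)).card

def Rc (k : ℕ) (b : ZMod 3) : ℕ :=
  ((Finset.range k).filter (fun i : ℕ => ((i : ZMod 3) = b))).card

lemma zmod3_cases (c : ZMod 3) : c = 0 ∨ c = 1 ∨ c = 2 := by
  revert c; decide

lemma Rc_succ (k : ℕ) (b : ZMod 3) :
    Rc (k+1) b = Rc k b + if ((k : ℕ) : ZMod 3) = b then 1 else 0 := by
  unfold Rc
  rw [Finset.range_add_one, Finset.filter_insert]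
  split_ifs with h
  · rw [Finset.card_insert_of_notMem (by simp)]
  · omega

lemma Rc_zero (b : ZMod 3) : Rc 0 b = 0 := by simp [Rc]

lemma wsum3_snoc {k : ℕ} (y : Fin k → ℕ) (j : ℕ) :
    wsum3 (Fin.snoc y j : Fin (k+1) → ℕ)
      = wsum3 y + (j : ZMod 3) * ((k : ℕ) : ZMod 3) := by
  unfold wsum3
  rw [Fin.sum_univ_castSucc]
  congr 1
  · apply Finset.sum_congr rfl
    intro v _
    rw [Fin.snoc_castSucc]
    norm_num [Fin.coe_castSucc]
  · rw [Fin.snoc_last]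
    norm_num [Fin.val_last]

lemma sum_snoc {k : ℕ} (y : Fin k → ℕ) (j : ℕ) :
    ∑ i, (Fin.snoc y j : Fin (k+1) → ℕ) i = (∑ i, y i) + j := by
  rw [Fin.sum_univ_castSucc]
  congr 1
  · exact Finset.sum_congr rfl (fun v _ => by rw [Fin.snoc_castSucc])
  · rw [Fin.snoc_last]

lemma adt_succ (k n : ℕ) :
    Finset.Nat.antidiagonalTuple (k+1) n
      = (Finset.range (n+1)).biUnion
          (fun j => (Finset.Nat.antidiagonalTuple k (n - j)).image
            (fun y => (Fin.snoc y j : Fin (k+1) → ℕ))) := by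
  ext x
  simp only [Finset.Nat.mem_antidiagonalTuple, Finset.mem_biUnion, Finset.mem_range,
    Finset.mem_image]
  constructor
  · intro hx
    have hlast : x (Fin.last k) ≤ n := by
      rw [← hx]
      exact Finset.single_le_sum (fun v _ => Nat.zero_le _) (Finset.mem_univ _)
    refine ⟨x (Fin.last k), by omega, Fin.init x, ?_, Fin.snoc_init_self x⟩
    have hs : ∑ i : Fin (k+1), x i = (∑ i : Fin k, Fin.init x i) + x (Fin.last k) := by
      rw [Fin.sum_univ_castSucc]; rfl
    omega
  · rintro ⟨j, hj, y, hy, rfl⟩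
    rw [sum_snoc]
    omega

lemma Fc_succ (k n : ℕ) (c : ZMod 3) :
    Fc (k+1) n c = ∑ j ∈ Finset.range (n+1),
      Fc k (n - j) (c - (j : ZMod 3) * ((k : ℕ) : ZMod 3)) := by
  unfold Fc
  rw [adt_succ, Finset.filter_biUnion]
  rw [Finset.card_biUnion]
  · apply Finset.sum_congr rfl
    intro j _
    rw [Finset.filter_image]
    rw [Finset.card_image_of_injective _ (fun y z h => by
      have : Fin.init (Fin.snoc y (j:ℕ) : Fin (k+1) → ℕ)
          = Fin.init (Fin.snoc z (j:ℕ) : Fin (k+1) → ℕ) := by rw [h]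
      rwa [Fin.init_snoc, Fin.init_snoc] at this)]
    congr 1
    apply Finset.filter_congr
    intro y _
    rw [wsum3_snoc]
    constructor
    · intro h; rw [← h]; ring
    · intro h; rw [h]; ring
  · intro a _ b _ hab
    rw [Function.onFun, Finset.disjoint_left]
    intro x hx1 hx2
    simp only [Finset.mem_filter, Finset.mem_image] at hx1 hx2
    obtain ⟨⟨y, _, hy⟩, _⟩ := hx1
    obtain ⟨⟨z, _, hz⟩, _⟩ := hx2
    apply hab
    have h1 : x (Fin.last k) = a := by rw [← hy, Fin.snoc_last]
    have h2 : x (Fin.last k) = b := by rw [← hz, Fin.snoc_last]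
    omega

lemma Fc_zero_right (k : ℕ) (c : ZMod 3) : Fc k 0 c = if c = 0 then 1 else 0 := by
  unfold Fc
  rw [Finset.Nat.antidiagonalTuple_zero_right]
  have h0 : wsum3 (0 : Fin k → ℕ) = 0 := by
    unfold wsum3; simp
  rw [Finset.filter_singleton]
  rw [h0]
  split_ifs with h1 h2 h2
  · simp
  · exact absurd h1.symm h2
  · exact absurd h2.symm h1
  · simp

lemma Fc_zero_left (n : ℕ) (c : ZMod 3) : Fc 0 (n+1) c = 0 := by
  unfold Fc
  rw [Finset.Nat.antidiagonalTuple_zero_succ]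
  simp

def C2 (x : ℕ) : ℕ := (x+1).choose 2
def C3 (x : ℕ) : ℕ := (x+2).choose 3

lemma C2_succ (x : ℕ) : C2 (x+1) = C2 x + (x+1) := by
  unfold C2
  rw [Nat.choose_succ_succ (x+1) 1, Nat.choose_one_right]
  norm_num
  omega

lemma C3_succ (x : ℕ) : C3 (x+1) = C3 x + C2 (x+1) := by
  unfold C3 C2
  rw [Nat.choose_succ_succ (x+2) 2]
  have : x + 1 + 1 = x + 2 := rfl
  rw [this]
  norm_num
  omega

lemma C2_zero : C2 0 = 0 := rfl
lemma C3_zero : C3 0 = 0 := rfl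

end Counting

theorem Fc_closed (m : ℕ) :
    (∀ c, Fc m 1 c = Rc m c) ∧
    (Fc m 2 0 = C2 (Rc m 0) + Rc m 1 * Rc m 2 ∧
     Fc m 2 1 = C2 (Rc m 2) + Rc m 0 * Rc m 1 ∧
     Fc m 2 2 = C2 (Rc m 1) + Rc m 0 * Rc m 2) ∧
    (Fc m 3 0 = C3 (Rc m 0) + C3 (Rc m 1) + C3 (Rc m 2) + Rc m 0 * Rc m 1 * Rc m 2 ∧
     Fc m 3 1 = C2 (Rc m 0) * Rc m 1 + C2 (Rc m 1) * Rc m 2 + C2 (Rc m 2) * Rc m 0 ∧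
     Fc m 3 2 = C2 (Rc m 0) * Rc m 2 + C2 (Rc m 2) * Rc m 1 + C2 (Rc m 1) * Rc m 0) := by
  induction m with
  | zero =>
      have hF : ∀ n c, Fc 0 (n+1) c = 0 := Fc_zero_left
      have h1 : ∀ c, Fc 0 1 c = 0 := fun c => hF 0 c
      have h2 : ∀ c, Fc 0 2 c = 0 := fun c => hF 1 c
      have h3 : ∀ c, Fc 0 3 c = 0 := fun c => hF 2 c
      refine ⟨fun c => ?_, ⟨?_, ?_, ?_⟩, ⟨?_, ?_, ?_⟩⟩ <;>
        simp [h1, h2, h3, Rc_zero, C2_zero, C3_zero]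
  | succ k IH =>
      obtain ⟨IH1, ⟨IH20, IH21, IH22⟩, ⟨IH30, IH31, IH32⟩⟩ := IH
      have h1 : ∀ c : ZMod 3, Fc (k+1) 1 c = Fc k 1 c
          + (if c - ((k:ℕ):ZMod 3) = 0 then 1 else 0) := by
        intro c
        rw [Fc_succ, Finset.sum_range_succ, Finset.sum_range_succ,
          Finset.sum_range_zero, Fc_zero_right]
        push_cast
        norm_num
      have h2 : ∀ c : ZMod 3, Fc (k+1) 2 c = Fc k 2 c + Fc k 1 (c - ((k:ℕ):ZMod 3))
          + (if c - 2*((k:ℕ):ZMod 3) = 0 then 1 else 0) := by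
        intro c
        rw [Fc_succ, Finset.sum_range_succ, Finset.sum_range_succ,
          Finset.sum_range_succ, Finset.sum_range_zero, Fc_zero_right]
        push_cast
        norm_num
      have h3 : ∀ c : ZMod 3, Fc (k+1) 3 c = Fc k 3 c + Fc k 2 (c - ((k:ℕ):ZMod 3))
          + Fc k 1 (c - 2*((k:ℕ):ZMod 3)) + (if c = 0 then 1 else 0) := by
        intro c
        rw [Fc_succ, Finset.sum_range_succ, Finset.sum_range_succ,
          Finset.sum_range_succ, Finset.sum_range_succ, Finset.sum_range_zero,
          Fc_zero_right]
        push_cast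
        simp only [show ((3:ZMod 3)) = 0 from by decide]
        norm_num
      rcases zmod3_cases (((k:ℕ)):ZMod 3) with hu | hu | hu <;>
        refine ⟨fun c => ?_, ⟨?_, ?_, ?_⟩, ⟨?_, ?_, ?_⟩⟩
      · -- U=0, G1
        rcases zmod3_cases c with rfl | rfl | rfl
        · rw [h1 0,
            Rc_succ k 0,
            hu,
            show (if ((0:ZMod 3) - 0 : ZMod 3) = 0 then (1:ℕ) else 0) = 1 from by decide,
            show (if (0 : ZMod 3) = 0 then (1:ℕ) else 0) = 1 from by decide,
            IH1 0]
        · rw [h1 1,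
            Rc_succ k 1,
            hu,
            show (if ((1:ZMod 3) - 0 : ZMod 3) = 0 then (1:ℕ) else 0) = 0 from by decide,
            show (if (0 : ZMod 3) = 1 then (1:ℕ) else 0) = 0 from by decide,
            IH1 1]
        · rw [h1 2,
            Rc_succ k 2,
            hu,
            show (if ((2:ZMod 3) - 0 : ZMod 3) = 0 then (1:ℕ) else 0) = 0 from by decide,
            show (if (0 : ZMod 3) = 2 then (1:ℕ) else 0) = 0 from by decide,
            IH1 2]
      · -- U=0, G2_0
        rw [h2 0,
          Rc_succ k 0,
          Rc_succ k 1,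
          Rc_succ k 2,
          hu,
          show ((0:ZMod 3) - 0 : ZMod 3) = 0 from by decide,
          show (if ((0:ZMod 3) - 2*0 : ZMod 3) = 0 then (1:ℕ) else 0) = 1 from by decide,
          show (if (0 : ZMod 3) = 0 then (1:ℕ) else 0) = 1 from by decide,
          show (if (0 : ZMod 3) = 1 then (1:ℕ) else 0) = 0 from by decide,
          show (if (0 : ZMod 3) = 2 then (1:ℕ) else 0) = 0 from by decide]
        simp only [add_zero]
        rw [IH20, IH1 0, C2_succ]
        ring
      · -- U=0, G2_1
        rw [h2 1,
          Rc_succ k 0,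
          Rc_succ k 1,
          Rc_succ k 2,
          hu,
          show ((1:ZMod 3) - 0 : ZMod 3) = 1 from by decide,
          show (if ((1:ZMod 3) - 2*0 : ZMod 3) = 0 then (1:ℕ) else 0) = 0 from by decide,
          show (if (0 : ZMod 3) = 0 then (1:ℕ) else 0) = 1 from by decide,
          show (if (0 : ZMod 3) = 1 then (1:ℕ) else 0) = 0 from by decide,
          show (if (0 : ZMod 3) = 2 then (1:ℕ) else 0) = 0 from by decide]
        simp only [add_zero]
        rw [IH21, IH1 1]
        ring
      · -- U=0, G2_2
        rw [h2 2,
          Rc_succ k 0,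
          Rc_succ k 1,
          Rc_succ k 2,
          hu,
          show ((2:ZMod 3) - 0 : ZMod 3) = 2 from by decide,
          show (if ((2:ZMod 3) - 2*0 : ZMod 3) = 0 then (1:ℕ) else 0) = 0 from by decide,
          show (if (0 : ZMod 3) = 0 then (1:ℕ) else 0) = 1 from by decide,
          show (if (0 : ZMod 3) = 1 then (1:ℕ) else 0) = 0 from by decide,
          show (if (0 : ZMod 3) = 2 then (1:ℕ) else 0) = 0 from by decide]
        simp only [add_zero]
        rw [IH22, IH1 2]
        ring
      · -- U=0, G3_0
        rw [h3 0,
          Rc_succ k 0,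
          Rc_succ k 1,
          Rc_succ k 2,
          hu,
          show ((0:ZMod 3) - 0 : ZMod 3) = 0 from by decide,
          show ((0:ZMod 3) - 2*0 : ZMod 3) = 0 from by decide,
          show (if (0 : ZMod 3) = 0 then (1:ℕ) else 0) = 1 from by decide,
          show (if (0 : ZMod 3) = 1 then (1:ℕ) else 0) = 0 from by decide,
          show (if (0 : ZMod 3) = 2 then (1:ℕ) else 0) = 0 from by decide]
        simp only [add_zero]
        rw [IH30, IH20, IH1 0, C3_succ, C2_succ]
        ring
      · -- U=0, G3_1
        rw [h3 1,
          Rc_succ k 0,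
          Rc_succ k 1,
          Rc_succ k 2,
          hu,
          show ((1:ZMod 3) - 0 : ZMod 3) = 1 from by decide,
          show ((1:ZMod 3) - 2*0 : ZMod 3) = 1 from by decide,
          show (if (1 : ZMod 3) = 0 then (1:ℕ) else 0) = 0 from by decide,
          show (if (0 : ZMod 3) = 0 then (1:ℕ) else 0) = 1 from by decide,
          show (if (0 : ZMod 3) = 1 then (1:ℕ) else 0) = 0 from by decide,
          show (if (0 : ZMod 3) = 2 then (1:ℕ) else 0) = 0 from by decide]
        simp only [add_zero]
        rw [IH31, IH21, IH1 1, C2_succ]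
        ring
      · -- U=0, G3_2
        rw [h3 2,
          Rc_succ k 0,
          Rc_succ k 1,
          Rc_succ k 2,
          hu,
          show ((2:ZMod 3) - 0 : ZMod 3) = 2 from by decide,
          show ((2:ZMod 3) - 2*0 : ZMod 3) = 2 from by decide,
          show (if (2 : ZMod 3) = 0 then (1:ℕ) else 0) = 0 from by decide,
          show (if (0 : ZMod 3) = 0 then (1:ℕ) else 0) = 1 from by decide,
          show (if (0 : ZMod 3) = 1 then (1:ℕ) else 0) = 0 from by decide,
          show (if (0 : ZMod 3) = 2 then (1:ℕ) else 0) = 0 from by decide]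
        simp only [add_zero]
        rw [IH32, IH22, IH1 2, C2_succ]
        ring
      · -- U=1, G1
        rcases zmod3_cases c with rfl | rfl | rfl
        · rw [h1 0,
            Rc_succ k 0,
            hu,
            show (if ((0:ZMod 3) - 1 : ZMod 3) = 0 then (1:ℕ) else 0) = 0 from by decide,
            show (if (1 : ZMod 3) = 0 then (1:ℕ) else 0) = 0 from by decide,
            IH1 0]
        · rw [h1 1,
            Rc_succ k 1,
            hu,
            show (if ((1:ZMod 3) - 1 : ZMod 3) = 0 then (1:ℕ) else 0) = 1 from by decide,
            show (if (1 : ZMod 3) = 1 then (1:ℕ) else 0) = 1 from by decide,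
            IH1 1]
        · rw [h1 2,
            Rc_succ k 2,
            hu,
            show (if ((2:ZMod 3) - 1 : ZMod 3) = 0 then (1:ℕ) else 0) = 0 from by decide,
            show (if (1 : ZMod 3) = 2 then (1:ℕ) else 0) = 0 from by decide,
            IH1 2]
      · -- U=1, G2_0
        rw [h2 0,
          Rc_succ k 0,
          Rc_succ k 1,
          Rc_succ k 2,
          hu,
          show ((0:ZMod 3) - 1 : ZMod 3) = 2 from by decide,
          show (if ((0:ZMod 3) - 2*1 : ZMod 3) = 0 then (1:ℕ) else 0) = 0 from by decide,
          show (if (1 : ZMod 3) = 0 then (1:ℕ) else 0) = 0 from by decide,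
          show (if (1 : ZMod 3) = 1 then (1:ℕ) else 0) = 1 from by decide,
          show (if (1 : ZMod 3) = 2 then (1:ℕ) else 0) = 0 from by decide]
        simp only [add_zero]
        rw [IH20, IH1 2]
        ring
      · -- U=1, G2_1
        rw [h2 1,
          Rc_succ k 0,
          Rc_succ k 1,
          Rc_succ k 2,
          hu,
          show ((1:ZMod 3) - 1 : ZMod 3) = 0 from by decide,
          show (if ((1:ZMod 3) - 2*1 : ZMod 3) = 0 then (1:ℕ) else 0) = 0 from by decide,
          show (if (1 : ZMod 3) = 0 then (1:ℕ) else 0) = 0 from by decide,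
          show (if (1 : ZMod 3) = 1 then (1:ℕ) else 0) = 1 from by decide,
          show (if (1 : ZMod 3) = 2 then (1:ℕ) else 0) = 0 from by decide]
        simp only [add_zero]
        rw [IH21, IH1 0]
        ring
      · -- U=1, G2_2
        rw [h2 2,
          Rc_succ k 0,
          Rc_succ k 1,
          Rc_succ k 2,
          hu,
          show ((2:ZMod 3) - 1 : ZMod 3) = 1 from by decide,
          show (if ((2:ZMod 3) - 2*1 : ZMod 3) = 0 then (1:ℕ) else 0) = 1 from by decide,
          show (if (1 : ZMod 3) = 0 then (1:ℕ) else 0) = 0 from by decide,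
          show (if (1 : ZMod 3) = 1 then (1:ℕ) else 0) = 1 from by decide,
          show (if (1 : ZMod 3) = 2 then (1:ℕ) else 0) = 0 from by decide]
        simp only [add_zero]
        rw [IH22, IH1 1, C2_succ]
        ring
      · -- U=1, G3_0
        rw [h3 0,
          Rc_succ k 0,
          Rc_succ k 1,
          Rc_succ k 2,
          hu,
          show ((0:ZMod 3) - 1 : ZMod 3) = 2 from by decide,
          show ((0:ZMod 3) - 2*1 : ZMod 3) = 1 from by decide,
          show (if (0 : ZMod 3) = 0 then (1:ℕ) else 0) = 1 from by decide,
          show (if (1 : ZMod 3) = 0 then (1:ℕ) else 0) = 0 from by decide,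
          show (if (1 : ZMod 3) = 1 then (1:ℕ) else 0) = 1 from by decide,
          show (if (1 : ZMod 3) = 2 then (1:ℕ) else 0) = 0 from by decide]
        simp only [add_zero]
        rw [IH30, IH22, IH1 1, C3_succ, C2_succ]
        ring
      · -- U=1, G3_1
        rw [h3 1,
          Rc_succ k 0,
          Rc_succ k 1,
          Rc_succ k 2,
          hu,
          show ((1:ZMod 3) - 1 : ZMod 3) = 0 from by decide,
          show ((1:ZMod 3) - 2*1 : ZMod 3) = 2 from by decide,
          show (if (1 : ZMod 3) = 0 then (1:ℕ) else 0) = 0 from by decide,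
          show (if (1 : ZMod 3) = 1 then (1:ℕ) else 0) = 1 from by decide,
          show (if (1 : ZMod 3) = 2 then (1:ℕ) else 0) = 0 from by decide]
        simp only [add_zero]
        rw [IH31, IH20, IH1 2, C2_succ]
        ring
      · -- U=1, G3_2
        rw [h3 2,
          Rc_succ k 0,
          Rc_succ k 1,
          Rc_succ k 2,
          hu,
          show ((2:ZMod 3) - 1 : ZMod 3) = 1 from by decide,
          show ((2:ZMod 3) - 2*1 : ZMod 3) = 0 from by decide,
          show (if (2 : ZMod 3) = 0 then (1:ℕ) else 0) = 0 from by decide,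
          show (if (1 : ZMod 3) = 0 then (1:ℕ) else 0) = 0 from by decide,
          show (if (1 : ZMod 3) = 1 then (1:ℕ) else 0) = 1 from by decide,
          show (if (1 : ZMod 3) = 2 then (1:ℕ) else 0) = 0 from by decide]
        simp only [add_zero]
        rw [IH32, IH21, IH1 0, C2_succ]
        ring
      · -- U=2, G1
        rcases zmod3_cases c with rfl | rfl | rfl
        · rw [h1 0,
            Rc_succ k 0,
            hu,
            show (if ((0:ZMod 3) - 2 : ZMod 3) = 0 then (1:ℕ) else 0) = 0 from by decide,
            show (if (2 : ZMod 3) = 0 then (1:ℕ) else 0) = 0 from by decide,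
            IH1 0]
        · rw [h1 1,
            Rc_succ k 1,
            hu,
            show (if ((1:ZMod 3) - 2 : ZMod 3) = 0 then (1:ℕ) else 0) = 0 from by decide,
            show (if (2 : ZMod 3) = 1 then (1:ℕ) else 0) = 0 from by decide,
            IH1 1]
        · rw [h1 2,
            Rc_succ k 2,
            hu,
            show (if ((2:ZMod 3) - 2 : ZMod 3) = 0 then (1:ℕ) else 0) = 1 from by decide,
            show (if (2 : ZMod 3) = 2 then (1:ℕ) else 0) = 1 from by decide,
            IH1 2]
      · -- U=2, G2_0
        rw [h2 0,
          Rc_succ k 0,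
          Rc_succ k 1,
          Rc_succ k 2,
          hu,
          show ((0:ZMod 3) - 2 : ZMod 3) = 1 from by decide,
          show (if ((0:ZMod 3) - 2*2 : ZMod 3) = 0 then (1:ℕ) else 0) = 0 from by decide,
          show (if (2 : ZMod 3) = 0 then (1:ℕ) else 0) = 0 from by decide,
          show (if (2 : ZMod 3) = 1 then (1:ℕ) else 0) = 0 from by decide,
          show (if (2 : ZMod 3) = 2 then (1:ℕ) else 0) = 1 from by decide]
        simp only [add_zero]
        rw [IH20, IH1 1]
        ring
      · -- U=2, G2_1
        rw [h2 1,
          Rc_succ k 0,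
          Rc_succ k 1,
          Rc_succ k 2,
          hu,
          show ((1:ZMod 3) - 2 : ZMod 3) = 2 from by decide,
          show (if ((1:ZMod 3) - 2*2 : ZMod 3) = 0 then (1:ℕ) else 0) = 1 from by decide,
          show (if (2 : ZMod 3) = 0 then (1:ℕ) else 0) = 0 from by decide,
          show (if (2 : ZMod 3) = 1 then (1:ℕ) else 0) = 0 from by decide,
          show (if (2 : ZMod 3) = 2 then (1:ℕ) else 0) = 1 from by decide]
        simp only [add_zero]
        rw [IH21, IH1 2, C2_succ]
        ring
      · -- U=2, G2_2
        rw [h2 2,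
          Rc_succ k 0,
          Rc_succ k 1,
          Rc_succ k 2,
          hu,
          show ((2:ZMod 3) - 2 : ZMod 3) = 0 from by decide,
          show (if ((2:ZMod 3) - 2*2 : ZMod 3) = 0 then (1:ℕ) else 0) = 0 from by decide,
          show (if (2 : ZMod 3) = 0 then (1:ℕ) else 0) = 0 from by decide,
          show (if (2 : ZMod 3) = 1 then (1:ℕ) else 0) = 0 from by decide,
          show (if (2 : ZMod 3) = 2 then (1:ℕ) else 0) = 1 from by decide]
        simp only [add_zero]
        rw [IH22, IH1 0]
        ring
      · -- U=2, G3_0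
        rw [h3 0,
          Rc_succ k 0,
          Rc_succ k 1,
          Rc_succ k 2,
          hu,
          show ((0:ZMod 3) - 2 : ZMod 3) = 1 from by decide,
          show ((0:ZMod 3) - 2*2 : ZMod 3) = 2 from by decide,
          show (if (0 : ZMod 3) = 0 then (1:ℕ) else 0) = 1 from by decide,
          show (if (2 : ZMod 3) = 0 then (1:ℕ) else 0) = 0 from by decide,
          show (if (2 : ZMod 3) = 1 then (1:ℕ) else 0) = 0 from by decide,
          show (if (2 : ZMod 3) = 2 then (1:ℕ) else 0) = 1 from by decide]
        simp only [add_zero]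
        rw [IH30, IH21, IH1 2, C3_succ, C2_succ]
        ring
      · -- U=2, G3_1
        rw [h3 1,
          Rc_succ k 0,
          Rc_succ k 1,
          Rc_succ k 2,
          hu,
          show ((1:ZMod 3) - 2 : ZMod 3) = 2 from by decide,
          show ((1:ZMod 3) - 2*2 : ZMod 3) = 0 from by decide,
          show (if (1 : ZMod 3) = 0 then (1:ℕ) else 0) = 0 from by decide,
          show (if (2 : ZMod 3) = 0 then (1:ℕ) else 0) = 0 from by decide,
          show (if (2 : ZMod 3) = 1 then (1:ℕ) else 0) = 0 from by decide,
          show (if (2 : ZMod 3) = 2 then (1:ℕ) else 0) = 1 from by decide]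
        simp only [add_zero]
        rw [IH31, IH22, IH1 0, C2_succ]
        ring
      · -- U=2, G3_2
        rw [h3 2,
          Rc_succ k 0,
          Rc_succ k 1,
          Rc_succ k 2,
          hu,
          show ((2:ZMod 3) - 2 : ZMod 3) = 0 from by decide,
          show ((2:ZMod 3) - 2*2 : ZMod 3) = 1 from by decide,
          show (if (2 : ZMod 3) = 0 then (1:ℕ) else 0) = 0 from by decide,
          show (if (2 : ZMod 3) = 1 then (1:ℕ) else 0) = 0 from by decide,
          show (if (2 : ZMod 3) = 2 then (1:ℕ) else 0) = 1 from by decide]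
        simp only [add_zero]
        rw [IH32, IH20, IH1 1, C2_succ]
        ring

lemma Rc_val (m : ℕ) : Rc m 0 = (m+2)/3 ∧ Rc m 1 = (m+1)/3 ∧ Rc m 2 = m/3 := by
  induction m with
  | zero => refine ⟨?_, ?_, ?_⟩ <;> simp [Rc_zero]
  | succ k IH =>
      obtain ⟨i0, i1, i2⟩ := IH
      have e : ∀ b : ℕ, ((((k:ℕ)):ZMod 3) = ((b:ℕ):ZMod 3)) ↔ k % 3 = b % 3 :=
        fun b => ZMod.natCast_eq_natCast_iff' k b 3
      have e0 : ((((k:ℕ)):ZMod 3) = (0:ZMod 3)) ↔ k % 3 = 0 := by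
        rw [show ((0:ZMod 3)) = ((0:ℕ):ZMod 3) from by norm_num, e]
      have e1 : ((((k:ℕ)):ZMod 3) = (1:ZMod 3)) ↔ k % 3 = 1 := by
        rw [show ((1:ZMod 3)) = ((1:ℕ):ZMod 3) from by norm_num, e]
      have e2 : ((((k:ℕ)):ZMod 3) = (2:ZMod 3)) ↔ k % 3 = 2 := by
        rw [show ((2:ZMod 3)) = ((2:ℕ):ZMod 3) from by norm_num, e]
      refine ⟨?_, ?_, ?_⟩
      · rw [Rc_succ, i0]
        by_cases h : k % 3 = 0
        · rw [if_pos (e0.mpr h)]; omega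
        · rw [if_neg (fun hc => h (e0.mp hc))]; omega
      · rw [Rc_succ, i1]
        by_cases h : k % 3 = 1
        · rw [if_pos (e1.mpr h)]; omega
        · rw [if_neg (fun hc => h (e1.mp hc))]; omega
      · rw [Rc_succ, i2]
        by_cases h : k % 3 = 2
        · rw [if_pos (e2.mpr h)]; omega
        · rw [if_neg (fun hc => h (e2.mp hc))]; omega

lemma C2_mul (x : ℕ) : 2 * C2 x = x * (x+1) := by
  induction x with
  | zero => rfl
  | succ n ih => rw [C2_succ, Nat.mul_add, ih]; ring

lemma C3_mul (x : ℕ) : 6 * C3 x = x * (x+1) * (x+2) := by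
  induction x with
  | zero => rfl
  | succ n ih =>
      rw [C3_succ, Nat.mul_add, ih,
        show 6 * C2 (n+1) = 3 * (2 * C2 (n+1)) from by ring, C2_mul]
      ring

/-- Bridge: class sizes in the vertex type equal the `Fc` counts. -/
lemma card_class_eq_Fc (m : ℕ) (c : ZMod 3) :
    (Finset.univ.filter (fun x : SRVertex m 3 => wsum3 x.1 = c)).card = Fc m 3 c := by
  unfold Fc
  apply Finset.card_bij (fun (x : SRVertex m 3) _ => x.1)
  · intro x hx
    simp only [Finset.mem_filter, Finset.mem_univ, true_and] at hx
    simp only [Finset.mem_filter, Finset.Nat.mem_antidiagonalTuple]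
    exact ⟨x.2, hx⟩
  · intro x _ y _ h
    exact Subtype.ext h
  · intro y hy
    simp only [Finset.mem_filter, Finset.Nat.mem_antidiagonalTuple] at hy
    exact ⟨⟨y, hy.1⟩, by simp [hy.2], rfl⟩

lemma pigeon {m N : ℕ} (f : SRVertex m 3 → ZMod N) (T : Finset (ZMod N)) (α : ℕ)
    (hα : 0 < α) (hT : 0 < T.card)
    (htot : T.card * α ≤ (Finset.univ.filter (fun x => f x ∈ T)).card) :
    ∃ t ∈ T, α ≤ (Finset.univ.filter (fun x => f x = t)).card := by
  by_contra hc
  push_neg at hc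
  have hsum : (Finset.univ.filter (fun x => f x ∈ T)).card
      = ∑ t ∈ T, ((Finset.univ.filter (fun x => f x ∈ T)).filter
          (fun x => f x = t)).card := by
    apply Finset.card_eq_sum_card_fiberwise
    intro x hx
    exact (Finset.mem_filter.1 hx).2
  have heq : ∀ t ∈ T, ((Finset.univ.filter (fun x => f x ∈ T)).filter
      (fun x => f x = t)) = Finset.univ.filter (fun x => f x = t) := by
    intro t ht
    ext x
    simp only [Finset.mem_filter, Finset.mem_univ, true_and]
    constructor
    · rintro ⟨_, h⟩; exact h
    · intro h; exact ⟨h ▸ ht, h⟩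
  replace hsum := hsum.trans (Finset.sum_congr rfl (fun t ht => by rw [heq t ht]))
  have hlt : ∑ t ∈ T, (Finset.univ.filter (fun x => f x = t)).card
      ≤ ∑ _t ∈ T, (α - 1) := by
    apply Finset.sum_le_sum
    intro t ht
    have := hc t ht
    omega
  rw [Finset.sum_const, smul_eq_mul] at hlt
  have hTα : T.card * α ≤ T.card * (α - 1) := by omega
  have : T.card * (α - 1) < T.card * α :=
    (Nat.mul_lt_mul_left hT).mpr (by omega)
  omega

section Construct

variable {N : ℕ} [NeZero N]

lemma wcast_inj (hmN : m ≤ N) (r : ℕ) (hr : Nat.Coprime r N) :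
    ∀ i j : Fin m, i ≠ j →
      (r : ZMod N) * ((i.val : ℕ) : ZMod N) ≠ (r : ZMod N) * ((j.val : ℕ) : ZMod N) := by
  intro i j hij heq
  have h1 : ((r * i.val : ℕ) : ZMod N) = ((r * j.val : ℕ) : ZMod N) := by
    push_cast
    exact heq
  have h2 : r * i.val ≡ r * j.val [MOD N] := (ZMod.natCast_eq_natCast_iff _ _ _).1 h1
  have h3 : i.val ≡ j.val [MOD N] := Nat.ModEq.cancel_left_of_coprime hr.symm h2
  have h4 : i.val % N = j.val % N := h3
  rw [Nat.mod_eq_of_lt (lt_of_lt_of_le i.isLt hmN),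
    Nat.mod_eq_of_lt (lt_of_lt_of_le j.isLt hmN)] at h4
  exact hij (Fin.ext h4)

lemma H1_of (hmN : m ≤ N) : ∀ i j : Fin m, i ≠ j →
    ((i.val : ℕ) : ZMod N) ≠ ((j.val : ℕ) : ZMod N) := by
  intro i j hij heq
  have := wcast_inj hmN 1 (Nat.coprime_one_left N) i j hij
  apply this
  push_cast
  rw [one_mul, one_mul]
  exact heq

lemma card_univ_split (m : ℕ) : (Finset.univ : Finset (SRVertex m 3)).card
    = Fc m 3 0 + Fc m 3 1 + Fc m 3 2 := by
  have h := Finset.card_eq_sum_card_fiberwise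
    (f := fun x : SRVertex m 3 => wsum3 x.1) (s := Finset.univ)
    (t := (Finset.univ : Finset (ZMod 3))) (fun x _ => Finset.mem_univ _)
  rw [h, show (Finset.univ : Finset (ZMod 3)) = {0, 1, 2} from by decide,
    Finset.sum_insert (by decide), Finset.sum_insert (by decide),
    Finset.sum_singleton, card_class_eq_Fc, card_class_eq_Fc, card_class_eq_Fc]
  ring

lemma construct_easy (hmN : m ≤ N) (h2 : ¬ 2 ∣ N) (h3 : ¬ 3 ∣ N) (α : ℕ) (hα : 0 < α)
    (htot : N * α ≤ Fc m 3 0 + Fc m 3 1 + Fc m 3 2) :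
    ∃ S : Finset (SRVertex m 3),
      (↑S : Set (SRVertex m 3)).Pairwise (fun a b => ¬ (SR m 3).Adj a b) ∧
      S.card = α := by
  set w : Fin m → ZMod N := fun i => ((i.val : ℕ) : ZMod N) with hw
  have hc2 : Nat.Coprime 2 N := (Nat.Prime.coprime_iff_not_dvd Nat.prime_two).2 h2
  have hc3 : Nat.Coprime 3 N := (Nat.Prime.coprime_iff_not_dvd Nat.prime_three).2 h3
  have htot' : (Finset.univ : Finset (ZMod N)).card * α
      ≤ (Finset.univ.filter (fun x : SRVertex m 3 =>
          fw w x ∈ (Finset.univ : Finset (ZMod N)))).card := by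
    have e1 : (Finset.univ.filter (fun x : SRVertex m 3 =>
        fw w x ∈ (Finset.univ : Finset (ZMod N)))) = Finset.univ := by
      apply Finset.filter_true_of_mem
      intro x _
      exact Finset.mem_univ _
    rw [e1, Finset.card_univ, ZMod.card]
    calc N * α ≤ Fc m 3 0 + Fc m 3 1 + Fc m 3 2 := htot
      _ = Fintype.card (SRVertex m 3) := by rw [← card_univ_split, Finset.card_univ]
  obtain ⟨t, _, ht⟩ := pigeon (fw w) Finset.univ α hα
    (by rw [Finset.card_univ, ZMod.card]; exact Nat.pos_of_ne_zero (NeZero.ne N)) htot'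
  obtain ⟨S, hSsub, hScard⟩ := Finset.exists_subset_card_eq ht
  refine ⟨S, ?_, hScard⟩
  have hpw := class_indep w t (H1_of hmN)
    (fun i j hij => wcast_inj hmN 2 hc2 i j hij)
    (fun i j hij hi hj => wcast_inj hmN 3 hc3 i j hij (by push_cast; rw [hi, hj]))
  exact hpw.mono (Finset.coe_subset.2 hSsub)

lemma cast_fw (h3 : (3:ℕ) ∣ N) (x : SRVertex m 3) :
    (ZMod.castHom h3 (ZMod 3)) (fw (fun i : Fin m => ((i.val : ℕ) : ZMod N)) x)
      = wsum3 x.1 := by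
  unfold fw wsum3
  rw [map_sum]
  apply Finset.sum_congr rfl
  intro v _
  rw [_root_.map_mul, map_natCast, map_natCast]

lemma construct_hard (hmN : m ≤ N) (h2 : ¬ 2 ∣ N) (h3 : (3:ℕ) ∣ N) (α : ℕ) (hα : 0 < α)
    (hT : 0 < N - (N+2)/3)
    (htot : (N - (N+2)/3) * α ≤ Fc m 3 1 + Fc m 3 2) :
    ∃ S : Finset (SRVertex m 3),
      (↑S : Set (SRVertex m 3)).Pairwise (fun a b => ¬ (SR m 3).Adj a b) ∧
      S.card = α := by
  set w : Fin m → ZMod N := fun i => ((i.val : ℕ) : ZMod N) with hw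
  have hc2 : Nat.Coprime 2 N := (Nat.Prime.coprime_iff_not_dvd Nat.prime_two).2 h2
  set T : Finset (ZMod N) :=
    Finset.univ.filter (fun t : ZMod N => (ZMod.castHom h3 (ZMod 3)) t ≠ 0) with hTdef
  have hcast_val : ∀ t : ZMod N, (ZMod.castHom h3 (ZMod 3)) t = ((t.val : ℕ) : ZMod 3) := by
    intro t
    conv_lhs => rw [← ZMod.natCast_rightInverse (n := N) t]
    rw [map_natCast]
  have hTcard : T.card = N - (N+2)/3 := by
    have e1 : T.card = ((Finset.range N).filter
        (fun v : ℕ => ¬ ((v : ZMod 3) = 0))).card := by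
      apply Finset.card_bij (fun (t : ZMod N) _ => t.val)
      · intro t htm
        simp only [hTdef, Finset.mem_filter, Finset.mem_univ, true_and] at htm
        simp only [Finset.mem_filter, Finset.mem_range]
        refine ⟨ZMod.val_lt t, ?_⟩
        rw [← hcast_val t]
        exact htm
      · intro a _ b _ hab
        have : ((a.val : ℕ) : ZMod N) = ((b.val : ℕ) : ZMod N) := by rw [hab]
        rwa [ZMod.natCast_rightInverse a, ZMod.natCast_rightInverse b] at this
      · intro v hv
        simp only [Finset.mem_filter, Finset.mem_range] at hv
        refine ⟨((v : ℕ) : ZMod N), ?_, ?_⟩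
        · simp only [hTdef, Finset.mem_filter, Finset.mem_univ, true_and]
          rw [hcast_val, ZMod.val_cast_of_lt hv.1]
          exact hv.2
        · exact ZMod.val_cast_of_lt hv.1
    rw [e1]
    have e2 := Finset.card_filter_add_card_filter_not
      (s := Finset.range N) (p := fun v : ℕ => ((v : ZMod 3) = 0))
    have e3 : ((Finset.range N).filter (fun v : ℕ => ((v : ZMod 3) = 0))).card
        = (N+2)/3 := by
      have := (Rc_val N).1
      rw [Rc] at this
      exact this
    rw [Finset.card_range] at e2
    have hle : (N+2)/3 ≤ N := by omega
    omega
  have htot' : T.card * α ≤ (Finset.univ.filter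
      (fun x : SRVertex m 3 => fw w x ∈ T)).card := by
    have e1 : (Finset.univ.filter (fun x : SRVertex m 3 => fw w x ∈ T))
        = Finset.univ.filter (fun x : SRVertex m 3 => wsum3 x.1 = 1)
          ∪ Finset.univ.filter (fun x : SRVertex m 3 => wsum3 x.1 = 2) := by
      ext x
      simp only [hTdef, Finset.mem_filter, Finset.mem_univ, true_and, Finset.mem_union]
      rw [cast_fw h3 x]
      rcases zmod3_cases (wsum3 x.1) with h | h | h <;> rw [h] <;> simp <;> decide
    rw [e1, hTcard]
    rw [Finset.card_union_of_disjoint (by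
      rw [Finset.disjoint_left]
      intro x hx1 hx2
      simp only [Finset.mem_filter] at hx1 hx2
      rw [hx1.2] at hx2
      exact absurd hx2.2 (by decide))]
    rw [card_class_eq_Fc, card_class_eq_Fc]
    exact htot
  obtain ⟨t, htT, ht⟩ := pigeon (fw w) T α hα (by rw [hTcard]; exact hT) htot'
  obtain ⟨S, hSsub, hScard⟩ := Finset.exists_subset_card_eq ht
  refine ⟨S, ?_, hScard⟩
  have htT' : (ZMod.castHom h3 (ZMod 3)) t ≠ 0 := by
    simp only [hTdef, Finset.mem_filter] at htT
    exact htT.2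
  have hpw := class_indep w t (H1_of hmN)
    (fun i j hij => wcast_inj hmN 2 hc2 i j hij)
    (fun i j hij hi hj => by
      apply htT'
      rw [← hi, _root_.map_mul, map_ofNat]
      have : ((3 : ZMod 3)) = 0 := by decide
      rw [this, zero_mul])
  exact hpw.mono (Finset.coe_subset.2 hSsub)

end Construct
end SRAux

open SRAux in
/-- The independence number of `SR(m,3)`, for `m ≥ 1`, depending on `m mod 6`. -/
theorem SR_indepNum_n_three (m : ℕ) (hm : 1 ≤ m) :
    ∃ α : ℕ,
      (α = if m % 6 = 1 ∨ m % 6 = 5 then (m + 1) * (m + 2) / 6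
        else if m % 6 = 3 then m * (m + 3) / 6
        else if m % 6 = 2 then (m ^ 2 + 2 * m - 2) / 6
        else m * (m + 2) / 6) ∧
      (∃ S : Finset (SRVertex m 3),
        (S : Set (SRVertex m 3)).Pairwise (fun a b => ¬ (SR m 3).Adj a b) ∧
        S.card = α) ∧
      (∀ S : Finset (SRVertex m 3),
        (S : Set (SRVertex m 3)).Pairwise (fun a b => ¬ (SR m 3).Adj a b) →
        S.card ≤ α) := by
  have h6 : m % 6 = 0 ∨ m % 6 = 1 ∨ m % 6 = 2 ∨ m % 6 = 3 ∨ m % 6 = 4 ∨ m % 6 = 5 := by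
    omega
  rcases h6 with h | h | h | h | h | h
  · obtain ⟨j, hmj⟩ : ∃ j, m = 6*j+6 := ⟨m/6 - 1, by omega⟩
    have hm6 : m = 6*j+6 := by omega
    obtain ⟨hF1all, ⟨hF20, hF21, hF22⟩, ⟨hF30, hF31, hF32⟩⟩ := Fc_closed m
    have hR0 : Rc m 0 = 2*j+2 := by rw [(Rc_val m).1]; omega
    have hR1 : Rc m 1 = 2*j+2 := by rw [(Rc_val m).2.1]; omega
    have hR2 : Rc m 2 = 2*j+2 := by rw [(Rc_val m).2.2]; omega
    rw [hR0, hR1, hR2] at hF30 hF31 hF32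
    have hA : (if m % 6 = 1 ∨ m % 6 = 5 then (m + 1) * (m + 2) / 6
        else if m % 6 = 3 then m * (m + 3) / 6
        else if m % 6 = 2 then (m ^ 2 + 2 * m - 2) / 6
        else m * (m + 2) / 6) = 6*(j*j)+14*j+8 := by
      rw [if_neg (by omega), if_neg (by omega), if_neg (by omega)]
      have e : m*(m+2) = 6*(6*(j*j)+14*j+8) := by rw [hm6]; ring
      rw [e, Nat.mul_div_cancel_left _ (by norm_num : 0 < 6)]
    have c30 : 6 * C3 (2*j+2) = (2*j+2)*((2*j+2)+1)*((2*j+2)+2) := C3_mul _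
    have c20 : 2 * C2 (2*j+2) = (2*j+2)*((2*j+2)+1) := C2_mul _
    have key : (m+1) * (6*(j*j)+14*j+8) ≤ Fc m 3 0 + Fc m 3 1 + Fc m 3 2 := by
      rw [hF30, hF31, hF32]
      refine Nat.le_of_mul_le_mul_left ?_ (show (0:ℕ) < 6 by norm_num)
      apply le_of_eq
      rw [hm6]
      zify at c30 c20 ⊢
      linear_combination -(c30 + c30 + c30 + (3*(((2*j+2:ℤ))+((2*j+2:ℤ))))*c20 + (3*(((2*j+2:ℤ))+((2*j+2:ℤ))))*c20 + (3*(((2*j+2:ℤ))+((2*j+2:ℤ))))*c20)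
    refine ⟨_, rfl, ?_, ?_⟩
    · rw [hA]
      exact construct_easy (N := m+1) (by omega) (by rintro ⟨d, hd⟩; omega)
        (by rintro ⟨d, hd⟩; omega) _ (by positivity) key
    · intro S hS
      rw [hA]
      obtain ⟨hub, heb⟩ := upper_main S hS
      have hub2 := heb (by omega)
      have e1 : m - 2 = 6*j+4 := by omega
      have e2 : m * (m - 2) = 36*(j*j)+60*j+24 := by rw [e1, hm6]; ring
      rw [e2] at hub2
      obtain ⟨q, hq⟩ : ∃ q, q = j*j := ⟨_, rfl⟩
      rw [← hq] at hub2 ⊢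
      omega
  · -- case m % 6 = 1
    obtain ⟨k, hm6⟩ : ∃ k, m = 6*k+1 := ⟨m/6, by omega⟩
    haveI : NeZero m := ⟨by omega⟩
    obtain ⟨hF1all, ⟨hF20, hF21, hF22⟩, ⟨hF30, hF31, hF32⟩⟩ := Fc_closed m
    have hR0 : Rc m 0 = 2*k+1 := by rw [(Rc_val m).1]; omega
    have hR1 : Rc m 1 = 2*k := by rw [(Rc_val m).2.1]; omega
    have hR2 : Rc m 2 = 2*k := by rw [(Rc_val m).2.2]; omega
    rw [hR0, hR1, hR2] at hF30 hF31 hF32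
    have hA : (if m % 6 = 1 ∨ m % 6 = 5 then (m + 1) * (m + 2) / 6
        else if m % 6 = 3 then m * (m + 3) / 6
        else if m % 6 = 2 then (m ^ 2 + 2 * m - 2) / 6
        else m * (m + 2) / 6) = 6*(k*k)+5*k+1 := by
      rw [if_pos (Or.inl h)]
      have e : (m+1)*(m+2) = 6*(6*(k*k)+5*k+1) := by rw [hm6]; ring
      rw [e, Nat.mul_div_cancel_left _ (by norm_num : 0 < 6)]
    have c30 : 6 * C3 (2*k+1) = (2*k+1)*((2*k+1)+1)*((2*k+1)+2) := C3_mul _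
    have c20 : 2 * C2 (2*k+1) = (2*k+1)*((2*k+1)+1) := C2_mul _
    have c31 : 6 * C3 (2*k) = (2*k)*((2*k)+1)*((2*k)+2) := C3_mul _
    have c21 : 2 * C2 (2*k) = (2*k)*((2*k)+1) := C2_mul _
    have key : (m) * (6*(k*k)+5*k+1) ≤ Fc m 3 0 + Fc m 3 1 + Fc m 3 2 := by
      rw [hF30, hF31, hF32]
      refine Nat.le_of_mul_le_mul_left ?_ (show (0:ℕ) < 6 by norm_num)
      apply le_of_eq
      rw [hm6]
      zify at c30 c20 c31 c21 ⊢
      linear_combination -(c30 + c31 + c31 + (3*(((2*k:ℤ))+((2*k:ℤ))))*c20 + (3*(((2*k:ℤ))+((2*k+1:ℤ))))*c21 + (3*(((2*k+1:ℤ))+((2*k:ℤ))))*c21)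
    refine ⟨_, rfl, ?_, ?_⟩
    · rw [hA]
      exact construct_easy (N := m) (by omega) (by rintro ⟨d, hd⟩; omega)
        (by rintro ⟨d, hd⟩; omega) _ (by positivity) key
    · intro S hS
      rw [hA]
      obtain ⟨hub, heb⟩ := upper_main S hS
      have e1 : m - 1 = 6*k := by omega
      have e2 : m * (m - 1) = 36*(k*k)+6*k := by rw [e1, hm6]; ring
      rw [e2] at hub
      obtain ⟨q, hq⟩ : ∃ q, q = k*k := ⟨_, rfl⟩
      rw [← hq] at hub ⊢
      omega
  · -- case m % 6 = 2
    obtain ⟨k, hm6⟩ : ∃ k, m = 6*k+2 := ⟨m/6, by omega⟩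
    obtain ⟨hF1all, ⟨hF20, hF21, hF22⟩, ⟨hF30, hF31, hF32⟩⟩ := Fc_closed m
    have hR0 : Rc m 0 = 2*k+1 := by rw [(Rc_val m).1]; omega
    have hR1 : Rc m 1 = 2*k+1 := by rw [(Rc_val m).2.1]; omega
    have hR2 : Rc m 2 = 2*k := by rw [(Rc_val m).2.2]; omega
    rw [hR0, hR1, hR2] at hF30 hF31 hF32
    have hA : (if m % 6 = 1 ∨ m % 6 = 5 then (m + 1) * (m + 2) / 6
        else if m % 6 = 3 then m * (m + 3) / 6
        else if m % 6 = 2 then (m ^ 2 + 2 * m - 2) / 6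
        else m * (m + 2) / 6) = 6*(k*k)+6*k+1 := by
      rw [if_neg (by omega), if_neg (by omega), if_pos h]
      have esq : m^2 = 36*(k*k)+24*k+4 := by rw [hm6]; ring
      have e : m^2 + 2*m - 2 = 6*(6*(k*k)+6*k+1) := by rw [esq, hm6]; generalize k*k = q; omega
      rw [e, Nat.mul_div_cancel_left _ (by norm_num : 0 < 6)]
    have c20 : 2 * C2 (2*k+1) = (2*k+1)*((2*k+1)+1) := C2_mul _
    have c21 : 2 * C2 (2*k) = (2*k)*((2*k)+1) := C2_mul _
    have key : ((m+1) - ((m+1)+2)/3) * (6*(k*k)+6*k+1) ≤ Fc m 3 1 + Fc m 3 2 := by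
      have hTc : (m+1) - ((m+1)+2)/3 = 4*k+2 := by omega
      rw [hTc, hF31, hF32]
      refine Nat.le_of_mul_le_mul_left ?_ (show (0:ℕ) < 6 by norm_num)
      apply le_of_eq
      zify at c20 c21 ⊢
      linear_combination -((3*(((2*k+1:ℤ))+((2*k:ℤ))))*c20 + (3*(((2*k:ℤ))+((2*k+1:ℤ))))*c20 + (3*(((2*k+1:ℤ))+((2*k+1:ℤ))))*c21)
    refine ⟨_, rfl, ?_, ?_⟩
    · rw [hA]
      exact construct_hard (N := m+1) (by omega) (by rintro ⟨d, hd⟩; omega)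
        ⟨2*k+1, by omega⟩ _ (by positivity) (by omega) key
    · intro S hS
      rw [hA]
      obtain ⟨hub, heb⟩ := upper_main S hS
      have hub2 := heb (by omega)
      have e1 : m - 2 = 6*k := by omega
      have e2 : m * (m - 2) = 36*(k*k)+12*k := by rw [e1, hm6]; ring
      rw [e2] at hub2
      obtain ⟨q, hq⟩ : ∃ q, q = k*k := ⟨_, rfl⟩
      rw [← hq] at hub2 ⊢
      omega
  · -- case m % 6 = 3
    obtain ⟨k, hm6⟩ : ∃ k, m = 6*k+3 := ⟨m/6, by omega⟩
    haveI : NeZero m := ⟨by omega⟩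
    obtain ⟨hF1all, ⟨hF20, hF21, hF22⟩, ⟨hF30, hF31, hF32⟩⟩ := Fc_closed m
    have hR0 : Rc m 0 = 2*k+1 := by rw [(Rc_val m).1]; omega
    have hR1 : Rc m 1 = 2*k+1 := by rw [(Rc_val m).2.1]; omega
    have hR2 : Rc m 2 = 2*k+1 := by rw [(Rc_val m).2.2]; omega
    rw [hR0, hR1, hR2] at hF30 hF31 hF32
    have hA : (if m % 6 = 1 ∨ m % 6 = 5 then (m + 1) * (m + 2) / 6
        else if m % 6 = 3 then m * (m + 3) / 6
        else if m % 6 = 2 then (m ^ 2 + 2 * m - 2) / 6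
        else m * (m + 2) / 6) = 6*(k*k)+9*k+3 := by
      rw [if_neg (by omega), if_pos h]
      have e : m*(m+3) = 6*(6*(k*k)+9*k+3) := by rw [hm6]; ring
      rw [e, Nat.mul_div_cancel_left _ (by norm_num : 0 < 6)]
    have c20 : 2 * C2 (2*k+1) = (2*k+1)*((2*k+1)+1) := C2_mul _
    have key : ((m) - ((m)+2)/3) * (6*(k*k)+9*k+3) ≤ Fc m 3 1 + Fc m 3 2 := by
      have hTc : (m) - ((m)+2)/3 = 4*k+2 := by omega
      rw [hTc, hF31, hF32]
      refine Nat.le_of_mul_le_mul_left ?_ (show (0:ℕ) < 6 by norm_num)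
      apply le_of_eq
      zify at c20 ⊢
      linear_combination -((3*(((2*k+1:ℤ))+((2*k+1:ℤ))))*c20 + (3*(((2*k+1:ℤ))+((2*k+1:ℤ))))*c20 + (3*(((2*k+1:ℤ))+((2*k+1:ℤ))))*c20)
    refine ⟨_, rfl, ?_, ?_⟩
    · rw [hA]
      exact construct_hard (N := m) (by omega) (by rintro ⟨d, hd⟩; omega)
        ⟨2*k+1, by omega⟩ _ (by positivity) (by omega) key
    · intro S hS
      rw [hA]
      obtain ⟨hub, heb⟩ := upper_main S hS
      have e1 : m - 1 = 6*k+2 := by omega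
      have e2 : m * (m - 1) = 36*(k*k)+30*k+6 := by rw [e1, hm6]; ring
      rw [e2] at hub
      obtain ⟨q, hq⟩ : ∃ q, q = k*k := ⟨_, rfl⟩
      rw [← hq] at hub ⊢
      omega
  · -- case m % 6 = 4
    obtain ⟨k, hm6⟩ : ∃ k, m = 6*k+4 := ⟨m/6, by omega⟩
    obtain ⟨hF1all, ⟨hF20, hF21, hF22⟩, ⟨hF30, hF31, hF32⟩⟩ := Fc_closed m
    have hR0 : Rc m 0 = 2*k+2 := by rw [(Rc_val m).1]; omega
    have hR1 : Rc m 1 = 2*k+1 := by rw [(Rc_val m).2.1]; omega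
    have hR2 : Rc m 2 = 2*k+1 := by rw [(Rc_val m).2.2]; omega
    rw [hR0, hR1, hR2] at hF30 hF31 hF32
    have hA : (if m % 6 = 1 ∨ m % 6 = 5 then (m + 1) * (m + 2) / 6
        else if m % 6 = 3 then m * (m + 3) / 6
        else if m % 6 = 2 then (m ^ 2 + 2 * m - 2) / 6
        else m * (m + 2) / 6) = 6*(k*k)+10*k+4 := by
      rw [if_neg (by omega), if_neg (by omega), if_neg (by omega)]
      have e : m*(m+2) = 6*(6*(k*k)+10*k+4) := by rw [hm6]; ring
      rw [e, Nat.mul_div_cancel_left _ (by norm_num : 0 < 6)]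
    have c30 : 6 * C3 (2*k+2) = (2*k+2)*((2*k+2)+1)*((2*k+2)+2) := C3_mul _
    have c20 : 2 * C2 (2*k+2) = (2*k+2)*((2*k+2)+1) := C2_mul _
    have c31 : 6 * C3 (2*k+1) = (2*k+1)*((2*k+1)+1)*((2*k+1)+2) := C3_mul _
    have c21 : 2 * C2 (2*k+1) = (2*k+1)*((2*k+1)+1) := C2_mul _
    have key : (m+1) * (6*(k*k)+10*k+4) ≤ Fc m 3 0 + Fc m 3 1 + Fc m 3 2 := by
      rw [hF30, hF31, hF32]
      refine Nat.le_of_mul_le_mul_left ?_ (show (0:ℕ) < 6 by norm_num)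
      apply le_of_eq
      rw [hm6]
      zify at c30 c20 c31 c21 ⊢
      linear_combination -(c30 + c31 + c31 + (3*(((2*k+1:ℤ))+((2*k+1:ℤ))))*c20 + (3*(((2*k+1:ℤ))+((2*k+2:ℤ))))*c21 + (3*(((2*k+2:ℤ))+((2*k+1:ℤ))))*c21)
    refine ⟨_, rfl, ?_, ?_⟩
    · rw [hA]
      exact construct_easy (N := m+1) (by omega) (by rintro ⟨d, hd⟩; omega)
        (by rintro ⟨d, hd⟩; omega) _ (by positivity) key
    · intro S hS
      rw [hA]
      obtain ⟨hub, heb⟩ := upper_main S hS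
      have hub2 := heb (by omega)
      have e1 : m - 2 = 6*k+2 := by omega
      have e2 : m * (m - 2) = 36*(k*k)+36*k+8 := by rw [e1, hm6]; ring
      rw [e2] at hub2
      obtain ⟨q, hq⟩ : ∃ q, q = k*k := ⟨_, rfl⟩
      rw [← hq] at hub2 ⊢
      omega
  · -- case m % 6 = 5
    obtain ⟨k, hm6⟩ : ∃ k, m = 6*k+5 := ⟨m/6, by omega⟩
    haveI : NeZero m := ⟨by omega⟩
    obtain ⟨hF1all, ⟨hF20, hF21, hF22⟩, ⟨hF30, hF31, hF32⟩⟩ := Fc_closed m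
    have hR0 : Rc m 0 = 2*k+2 := by rw [(Rc_val m).1]; omega
    have hR1 : Rc m 1 = 2*k+2 := by rw [(Rc_val m).2.1]; omega
    have hR2 : Rc m 2 = 2*k+1 := by rw [(Rc_val m).2.2]; omega
    rw [hR0, hR1, hR2] at hF30 hF31 hF32
    have hA : (if m % 6 = 1 ∨ m % 6 = 5 then (m + 1) * (m + 2) / 6
        else if m % 6 = 3 then m * (m + 3) / 6
        else if m % 6 = 2 then (m ^ 2 + 2 * m - 2) / 6
        else m * (m + 2) / 6) = 6*(k*k)+13*k+7 := by
      rw [if_pos (Or.inr h)]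
      have e : (m+1)*(m+2) = 6*(6*(k*k)+13*k+7) := by rw [hm6]; ring
      rw [e, Nat.mul_div_cancel_left _ (by norm_num : 0 < 6)]
    have c30 : 6 * C3 (2*k+2) = (2*k+2)*((2*k+2)+1)*((2*k+2)+2) := C3_mul _
    have c20 : 2 * C2 (2*k+2) = (2*k+2)*((2*k+2)+1) := C2_mul _
    have c31 : 6 * C3 (2*k+1) = (2*k+1)*((2*k+1)+1)*((2*k+1)+2) := C3_mul _
    have c21 : 2 * C2 (2*k+1) = (2*k+1)*((2*k+1)+1) := C2_mul _
    have key : (m) * (6*(k*k)+13*k+7) ≤ Fc m 3 0 + Fc m 3 1 + Fc m 3 2 := by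
      rw [hF30, hF31, hF32]
      refine Nat.le_of_mul_le_mul_left ?_ (show (0:ℕ) < 6 by norm_num)
      apply le_of_eq
      rw [hm6]
      zify at c30 c20 c31 c21 ⊢
      linear_combination -(c30 + c30 + c31 + (3*(((2*k+2:ℤ))+((2*k+1:ℤ))))*c20 + (3*(((2*k+1:ℤ))+((2*k+2:ℤ))))*c20 + (3*(((2*k+2:ℤ))+((2*k+2:ℤ))))*c21)
    refine ⟨_, rfl, ?_, ?_⟩
    · rw [hA]
      exact construct_easy (N := m) (by omega) (by rintro ⟨d, hd⟩; omega)
        (by rintro ⟨d, hd⟩; omega) _ (by positivity) key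
    · intro S hS
      rw [hA]
      obtain ⟨hub, heb⟩ := upper_main S hS
      have e1 : m - 1 = 6*k+4 := by omega
      have e2 : m * (m - 1) = 36*(k*k)+54*k+20 := by rw [e1, hm6]; ring
      rw [e2] at hub
      obtain ⟨q, hq⟩ : ∃ q, q = k*k := ⟨_, rfl⟩
      rw [← hq] at hub ⊢
      omega
end

section
/- Suppose m > 2n, and let π be a permutation of the coordinate index set {1,…,m} with exactly n inversions. Then there exists a permutation π' of {1,…,2n} with exactly n inversions such that the induced subgraph Γ(m,n,π) of SR(m,n) on the vertex set X_π is isomorphic (as a simple graph) to the induced subgraph Γ(2n,n,π') of SR(2n,n) on the vertex set X_{π'}. -/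
open Matrix Polynomial

/-- The inversion table of a permutation: `a i = #{ j | i < j ∧ π i > π j }`. -/
def invTable (m : ℕ) (π : Equiv.Perm (Fin m)) (i : Fin m) : ℕ :=
  (Finset.univ.filter fun j : Fin m => i < j ∧ π j < π i).card

/-- The number of inversions of a permutation. -/
def inversions (m : ℕ) (π : Equiv.Perm (Fin m)) : ℕ :=
  ∑ i, invTable m π i

/-- `σ` is `π`-admissible when `a i + i - σ i ≥ 0` for all `i`. -/
def Admissible (m : ℕ) (π σ : Equiv.Perm (Fin m)) : Prop :=
  ∀ i : Fin m, (σ i : ℕ) ≤ invTable m π i + (i : ℕ)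

/-- The set `X_π` of vertices `x(σ)`, for `π`-admissible `σ`, where
`x(σ) i = a i + i - σ i`. -/
def Xpi (m n : ℕ) (π : Equiv.Perm (Fin m)) : Set (SRVertex m n) :=
  {x | ∃ σ : Equiv.Perm (Fin m), Admissible m π σ ∧
    ∀ i : Fin m, x.1 i + (σ i : ℕ) = invTable m π i + (i : ℕ)}


open Finset Equiv

section Code
variable {s : ℕ} (b : Fin s → ℕ)

/-- `v` is a boundary for the code `b`. -/
def Bdry (v : ℕ) : Prop := ∀ j : Fin s, (j : ℕ) < v → b j + (j : ℕ) < v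

/-- position `i` is moving. -/
def Mov (i : Fin s) : Prop := ¬ Bdry b (i : ℕ) ∨ ¬ Bdry b ((i : ℕ) + 1)

open Classical in
noncomputable def MvSet : Finset (Fin s) := univ.filter (fun i => Mov b i)

noncomputable def rankN (v : ℕ) : ℕ := ((MvSet b).filter (fun j : Fin s => (j : ℕ) < v)).card

def Adm (σ : Equiv.Perm (Fin s)) : Prop := ∀ i, (σ i : ℕ) ≤ b i + (i : ℕ)

lemma mem_MvSet {i : Fin s} : i ∈ MvSet b ↔ Mov b i := by
  classical
  simp [MvSet]

variable {b}
variable {σ : Equiv.Perm (Fin s)} (hσ : Adm b σ)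

lemma not_bdry_of_witness {v : ℕ} {j : Fin s} (h1 : (j : ℕ) < v) (h2 : v ≤ b j + (j : ℕ)) :
    ¬ Bdry b v := fun hB => absurd (hB j h1) (by omega)

include hσ

lemma adm_lt_of_lt {v : ℕ} {j : Fin s} (hj : (j : ℕ) < v) (hv : Bdry b v) : (σ j : ℕ) < v :=
  lt_of_le_of_lt (hσ j) (hv j hj)

lemma lt_of_adm_lt {v : ℕ} (hv : Bdry b v) {j : Fin s} (hj : (σ j : ℕ) < v) : (j : ℕ) < v := by
  classical
  set S : Finset (Fin s) := univ.filter (fun j : Fin s => (j : ℕ) < v) with hS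
  have hsub : S.image σ ⊆ S := by
    intro x hx
    rcases Finset.mem_image.mp hx with ⟨y, hy, rfl⟩
    simp only [hS, mem_filter, mem_univ, true_and] at hy ⊢
    exact adm_lt_of_lt hσ hy hv
  have heq : S.image σ = S :=
    Finset.eq_of_subset_of_card_le hsub (le_of_eq (Finset.card_image_of_injective S σ.injective).symm)
  have : σ j ∈ S := by simp [hS, hj]
  rw [← heq] at this
  rcases Finset.mem_image.mp this with ⟨y, hy, hyj⟩
  have : y = j := σ.injective hyj
  subst this
  simpa [hS] using hy

lemma adm_fixed {i : Fin s} (hi : i ∉ MvSet b) : σ i = i := by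
  rw [mem_MvSet] at hi
  have hB1 : Bdry b (i : ℕ) := by
    by_contra h; exact hi (Or.inl h)
  have hB2 : Bdry b ((i : ℕ) + 1) := by
    by_contra h; exact hi (Or.inr h)
  have h1 : b i + (i : ℕ) < (i : ℕ) + 1 := hB2 i (by omega)
  have h2 : (σ i : ℕ) ≤ (i : ℕ) := by have := hσ i; omega
  have h3 : ¬ ((σ i : ℕ) < (i : ℕ)) := fun h => lt_irrefl _ (lt_of_adm_lt hσ hB1 h)
  exact Fin.ext (by omega)

lemma adm_mem {i : Fin s} (hi : i ∈ MvSet b) : σ i ∈ MvSet b := by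
  by_contra h
  have h1 : σ (σ i) = σ i := adm_fixed hσ h
  have h2 : σ i = i := σ.injective h1
  rw [h2] at h; exact h hi

lemma adm_inv_mem {i : Fin s} (hi : i ∈ MvSet b) : σ⁻¹ i ∈ MvSet b := by
  by_contra h
  have h1 : σ (σ⁻¹ i) = σ⁻¹ i := adm_fixed hσ h
  rw [← Equiv.Perm.mul_apply, mul_inv_cancel, Equiv.Perm.one_apply] at h1
  rw [← h1] at h; exact h hi

omit hσ

lemma mov_of_pos {i : Fin s} (h : 0 < b i) : Mov b i :=
  Or.inr (not_bdry_of_witness (j := i) (by omega) (by omega))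

lemma rankN_mono {u v : ℕ} (h : u ≤ v) : rankN b u ≤ rankN b v := by
  apply Finset.card_le_card
  intro x hx
  simp only [Finset.mem_filter] at hx ⊢
  exact ⟨hx.1, by omega⟩

lemma rankN_succ_of_mem {v : ℕ} (hv : v < s) (h : (⟨v, hv⟩ : Fin s) ∈ MvSet b) :
    rankN b (v + 1) = rankN b v + 1 := by
  classical
  have : (MvSet b).filter (fun j : Fin s => (j : ℕ) < v + 1)
      = insert (⟨v, hv⟩ : Fin s) ((MvSet b).filter (fun j : Fin s => (j : ℕ) < v)) := by
    ext x
    simp only [Finset.mem_filter, Finset.mem_insert]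
    constructor
    · rintro ⟨hx, hlt⟩
      rcases Nat.lt_succ_iff_lt_or_eq.mp hlt with h' | h'
      · exact Or.inr ⟨hx, h'⟩
      · exact Or.inl (Fin.ext h')
    · rintro (rfl | ⟨hx, hlt⟩)
      · exact ⟨h, by simp⟩
      · exact ⟨hx, by omega⟩
  rw [rankN, this, Finset.card_insert_of_notMem (by simp), rankN]

lemma rankN_succ_of_not_mem {v : ℕ} (hv : v < s) (h : (⟨v, hv⟩ : Fin s) ∉ MvSet b) :
    rankN b (v + 1) = rankN b v := by
  classical
  have : (MvSet b).filter (fun j : Fin s => (j : ℕ) < v + 1)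
      = (MvSet b).filter (fun j : Fin s => (j : ℕ) < v) := by
    ext x
    simp only [Finset.mem_filter]
    constructor
    · rintro ⟨hx, hlt⟩
      refine ⟨hx, ?_⟩
      rcases Nat.lt_succ_iff_lt_or_eq.mp hlt with h' | h'
      · exact h'
      · exact absurd hx (by rwa [show x = (⟨v, hv⟩ : Fin s) from Fin.ext h'])
    · rintro ⟨hx, hlt⟩
      exact ⟨hx, by omega⟩
  rw [rankN, this, rankN]

/-- If all of `[l, l+d)` is moving then rank increases by exactly `d`. -/
lemma rankN_add {l d : ℕ} (hld : l + d ≤ s)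
    (h : ∀ p (hp : p < s), l ≤ p → p < l + d → (⟨p, hp⟩ : Fin s) ∈ MvSet b) :
    rankN b (l + d) = rankN b l + d := by
  induction d with
  | zero => simp
  | succ d ih =>
    have hd : l + d < s := by omega
    have : rankN b (l + d) = rankN b l + d :=
      ih (by omega) (fun p hp h1 h2 => h p hp h1 (by omega))
    have h2 := rankN_succ_of_mem (b := b) hd (h (l + d) hd (by omega) (by omega))
    have h3 : rankN b (l + (d + 1)) = rankN b (l + d + 1) := congrArg (rankN b) (by omega)
    omega

lemma rankN_lt_card {i : Fin s} (hi : i ∈ MvSet b) : rankN b (i : ℕ) < (MvSet b).card := by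
  classical
  apply Finset.card_lt_card
  constructor
  · exact Finset.filter_subset _ _
  · intro hsub
    have := hsub hi
    simp at this

/-- key rank identity for admissible permutations -/
lemma adm_rankN (hσ : Adm b σ) (i : Fin s) :
    rankN b ((σ i : ℕ)) + (i : ℕ) = rankN b (i : ℕ) + (σ i : ℕ) := by
  rcases lt_trichotomy ((σ i : ℕ)) ((i : ℕ)) with hlt | heq | hgt
  · -- σ i < i : positions [σ i, i) are moving
    have hmov : ∀ p (hp : p < s), (σ i : ℕ) ≤ p → p < (σ i : ℕ) + ((i : ℕ) - (σ i : ℕ)) →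
        (⟨p, hp⟩ : Fin s) ∈ MvSet b := by
      intro p hp h1 h2
      rw [mem_MvSet]
      show ¬ Bdry b p ∨ ¬ Bdry b (p + 1)
      refine Or.inr (fun hB => ?_)
      have hσlt : (σ i : ℕ) < p + 1 := by omega
      have := lt_of_adm_lt hσ hB hσlt
      omega
    have := rankN_add (b := b) (l := (σ i : ℕ)) (d := (i : ℕ) - (σ i : ℕ))
      (by have := i.isLt; omega) hmov
    have heq2 : (σ i : ℕ) + ((i : ℕ) - (σ i : ℕ)) = (i : ℕ) := by omega
    rw [heq2] at this
    omega
  · rw [heq]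
  · -- i < σ i : positions [i, σ i) are moving
    have hmov : ∀ p (hp : p < s), (i : ℕ) ≤ p → p < (i : ℕ) + ((σ i : ℕ) - (i : ℕ)) →
        (⟨p, hp⟩ : Fin s) ∈ MvSet b := by
      intro p hp h1 h2
      rw [mem_MvSet]
      show ¬ Bdry b p ∨ ¬ Bdry b (p + 1)
      refine Or.inr (fun hB => ?_)
      have hilt : (i : ℕ) < p + 1 := by omega
      have := adm_lt_of_lt hσ hilt hB
      omega
    have := rankN_add (b := b) (l := (i : ℕ)) (d := (σ i : ℕ) - (i : ℕ))
      (by have := (σ i).isLt; omega) hmov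
    have heq2 : (i : ℕ) + ((σ i : ℕ) - (i : ℕ)) = (σ i : ℕ) := by omega
    rw [heq2] at this
    omega

/-- the number of moving positions is at most twice the sum of the code. -/
lemma card_MvSet_le : (MvSet b).card ≤ 2 * ∑ i, b i := by
  classical
  set NB : Finset ℕ := (Finset.range (s + 1)).filter (fun v => ¬ Bdry b v) with hNB
  have h1 : NB.card ≤ ∑ i, b i := by
    have hsub : NB ⊆ univ.biUnion (fun j : Fin s => Finset.Ioc (j : ℕ) (b j + (j : ℕ))) := by
      intro v hv
      simp only [hNB, Finset.mem_filter, Finset.mem_range] at hv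
      obtain ⟨hvr, hnb⟩ := hv
      rw [Bdry] at hnb
      push_neg at hnb
      obtain ⟨j, hj1, hj2⟩ := hnb
      exact Finset.mem_biUnion.mpr ⟨j, Finset.mem_univ _, Finset.mem_Ioc.mpr ⟨hj1, hj2⟩⟩
    calc NB.card ≤ (univ.biUnion (fun j : Fin s => Finset.Ioc (j : ℕ) (b j + (j : ℕ)))).card :=
          Finset.card_le_card hsub
      _ ≤ ∑ j : Fin s, (Finset.Ioc (j : ℕ) (b j + (j : ℕ))).card := Finset.card_biUnion_le
      _ = ∑ j : Fin s, b j := by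
          apply Finset.sum_congr rfl
          intro j _
          rw [Nat.card_Ioc]
          omega
  have h2 : (MvSet b).image Fin.val ⊆ NB ∪ NB.image (· - 1) := by
    intro v hv
    rcases Finset.mem_image.mp hv with ⟨i, hi, rfl⟩
    rw [mem_MvSet] at hi
    rcases hi with h | h
    · apply Finset.mem_union_left
      simp only [hNB, Finset.mem_filter, Finset.mem_range]
      exact ⟨by have := i.isLt; omega, h⟩
    · apply Finset.mem_union_right
      apply Finset.mem_image.mpr
      refine ⟨(i : ℕ) + 1, ?_, by omega⟩
      simp only [hNB, Finset.mem_filter, Finset.mem_range]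
      exact ⟨by have := i.isLt; omega, h⟩
  have h3 : (MvSet b).card = ((MvSet b).image Fin.val).card :=
    (Finset.card_image_of_injective _ Fin.val_injective).symm
  have h4 : ((MvSet b).image Fin.val).card ≤ NB.card + (NB.image (· - 1)).card :=
    le_trans (Finset.card_le_card h2) (Finset.card_union_le _ _)
  have h5 : (NB.image (· - 1)).card ≤ NB.card := Finset.card_image_le
  omega

end Code



lemma card_filter_val_lt {s c : ℕ} (h : c ≤ s) :
    (univ.filter fun w : Fin s => (w : ℕ) < c).card = c := by
  classical
  have key : (univ.filter fun w : Fin s => (w : ℕ) < c).card = (Finset.range c).card := by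
    apply Finset.card_bij (fun (w : Fin s) _ => (w : ℕ))
    · intro a ha
      simp only [Finset.mem_filter] at ha
      exact Finset.mem_range.mpr ha.2
    · intro a ha b hb hab
      exact Fin.val_injective hab
    · intro v hv
      have hv' := Finset.mem_range.mp hv
      exact ⟨⟨v, by omega⟩, by simp [hv'], rfl⟩
  simpa using key

section Unr
variable {s : ℕ} (b : Fin s → ℕ)

noncomputable def unr (r : ℕ) (h : r < (MvSet b).card) : Fin s :=
  ((MvSet b).orderIsoOfFin rfl ⟨r, h⟩ : {x // x ∈ MvSet b})

lemma unr_mem (r : ℕ) (h : r < (MvSet b).card) : unr b r h ∈ MvSet b :=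
  ((MvSet b).orderIsoOfFin rfl ⟨r, h⟩).2

lemma unr_lt_unr {r1 r2 : ℕ} (h1 : r1 < (MvSet b).card) (h2 : r2 < (MvSet b).card)
    (h : r1 < r2) : (unr b r1 h1 : ℕ) < (unr b r2 h2 : ℕ) := by
  have : ((MvSet b).orderIsoOfFin rfl ⟨r1, h1⟩) < ((MvSet b).orderIsoOfFin rfl ⟨r2, h2⟩) := by
    rw [OrderIso.lt_iff_lt]
    exact h
  exact this

lemma unr_le_unr {r1 r2 : ℕ} (h1 : r1 < (MvSet b).card) (h2 : r2 < (MvSet b).card)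
    (h : r1 ≤ r2) : (unr b r1 h1 : ℕ) ≤ (unr b r2 h2 : ℕ) := by
  rcases Nat.lt_or_ge r1 r2 with h' | h'
  · exact le_of_lt (unr_lt_unr b h1 h2 h')
  · have : r1 = r2 := by omega
    subst this
    exact le_refl _

lemma unr_surj {i : Fin s} (hi : i ∈ MvSet b) :
    ∃ (r : ℕ) (h : r < (MvSet b).card), unr b r h = i := by
  obtain ⟨r, hr⟩ := ((MvSet b).orderIsoOfFin rfl).surjective ⟨i, hi⟩
  exact ⟨(r : ℕ), r.isLt, by simp [unr, Fin.eta, hr]⟩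

lemma rankN_unr (r : ℕ) (h : r < (MvSet b).card) : rankN b (unr b r h : ℕ) = r := by
  classical
  rw [rankN]
  have key : (univ.filter fun w : Fin (MvSet b).card => (w : ℕ) < r).card
      = ((MvSet b).filter (fun j : Fin s => (j : ℕ) < (unr b r h : ℕ))).card := by
    apply Finset.card_bij (fun (w : Fin (MvSet b).card) _ => ((MvSet b).orderIsoOfFin rfl w : Fin s))
    · intro w hw
      simp only [Finset.mem_filter, Finset.mem_univ, true_and] at hw ⊢
      refine ⟨((MvSet b).orderIsoOfFin rfl w).2, ?_⟩
      exact unr_lt_unr b w.isLt h hw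
    · intro a _ a' _ haa
      have : ((MvSet b).orderIsoOfFin rfl a) = ((MvSet b).orderIsoOfFin rfl a') :=
        Subtype.ext haa
      exact ((MvSet b).orderIsoOfFin rfl).injective this
    · intro j hj
      simp only [Finset.mem_filter] at hj
      obtain ⟨hjm, hjlt⟩ := hj
      obtain ⟨w, hw⟩ := ((MvSet b).orderIsoOfFin rfl).surjective ⟨j, hjm⟩
      refine ⟨w, ?_, by rw [hw]⟩
      simp only [Finset.mem_filter, Finset.mem_univ, true_and]
      by_contra hcon
      have hge : r ≤ (w : ℕ) := by omega
      have := unr_le_unr b h w.isLt hge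
      have hwj : (unr b (w : ℕ) w.isLt : ℕ) = (j : ℕ) := by
        simp only [unr, Fin.eta, hw]
      omega
  rw [← key, card_filter_val_lt (le_of_lt h)]

lemma unr_rankN {i : Fin s} (hi : i ∈ MvSet b) (h : rankN b (i : ℕ) < (MvSet b).card) :
    unr b (rankN b (i : ℕ)) h = i := by
  obtain ⟨r, hr, hru⟩ := unr_surj b hi
  have : rankN b (i : ℕ) = r := by rw [← hru, rankN_unr]
  subst hru
  congr 1

end Unr


section Compr
variable {s : ℕ} (b : Fin s → ℕ) (t : ℕ)

noncomputable def compr : Fin t → ℕ :=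
  fun r => if h : (r : ℕ) < (MvSet b).card then b (unr b (r : ℕ) h) else 0

variable {b t}

lemma interval_mem {i : Fin s} {e : ℕ} (hval : ∀ i : Fin s, b i + (i : ℕ) < s)
    (he1 : 1 ≤ e) (he2 : e ≤ b i) :
    (⟨(i : ℕ) + e, by have := hval i; omega⟩ : Fin s) ∈ MvSet b := by
  rw [mem_MvSet]
  show ¬ Bdry b ((i : ℕ) + e) ∨ ¬ Bdry b ((i : ℕ) + e + 1)
  exact Or.inl (not_bdry_of_witness (j := i) (by omega) (by omega))

lemma rankN_add_code {i : Fin s} (hval : ∀ i : Fin s, b i + (i : ℕ) < s) (hbi : 0 < b i) :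
    rankN b ((i : ℕ) + b i) = rankN b (i : ℕ) + b i := by
  apply rankN_add (by have := hval i; omega)
  intro p hp h1 h2
  rcases Nat.eq_or_lt_of_le h1 with h' | h'
  · have : (⟨p, hp⟩ : Fin s) = i := Fin.ext (by simp only [Fin.val_mk]; omega)
    rw [this, mem_MvSet]
    exact mov_of_pos hbi
  · have : (⟨p, hp⟩ : Fin s) = ⟨(i : ℕ) + (p - (i : ℕ)), by omega⟩ := Fin.ext (by simp; omega)
    rw [this]
    exact interval_mem hval (by omega) (by omega)

lemma compr_add_lt (hval : ∀ i : Fin s, b i + (i : ℕ) < s) {r : Fin t}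
    (h : (r : ℕ) < (MvSet b).card) :
    compr b t r + (r : ℕ) < (MvSet b).card := by
  rw [compr, dif_pos h]
  set i := unr b (r : ℕ) h with hi
  rcases Nat.eq_zero_or_pos (b i) with h0 | h0
  · rw [h0]; omega
  · have hmem : (⟨(i : ℕ) + b i, by have := hval i; omega⟩ : Fin s) ∈ MvSet b :=
      interval_mem hval (by omega) (le_refl _)
    have hlt := rankN_lt_card hmem
    have hadd := rankN_add_code (i := i) hval h0
    have hr : rankN b (i : ℕ) = (r : ℕ) := by rw [hi, rankN_unr]
    simp only [Fin.val_mk] at hlt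
    omega

lemma compr_valid (hval : ∀ i : Fin s, b i + (i : ℕ) < s)
    (hkt : (MvSet b).card ≤ t) (r : Fin t) : compr b t r + (r : ℕ) < t := by
  by_cases h : (r : ℕ) < (MvSet b).card
  · have := compr_add_lt hval h
    omega
  · rw [compr, dif_neg h]
    have := r.isLt
    omega

lemma bdry_compr (hval : ∀ i : Fin s, b i + (i : ℕ) < s) {v : ℕ}
    (hv : (MvSet b).card ≤ v) : Bdry (compr b t) v := by
  intro j hj
  by_cases h : (j : ℕ) < (MvSet b).card
  · have := compr_add_lt hval h
    omega
  · rw [compr, dif_neg h]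
    omega

lemma compr_not_mov (hval : ∀ i : Fin s, b i + (i : ℕ) < s) {r : Fin t}
    (h : (MvSet b).card ≤ (r : ℕ)) : r ∉ MvSet (compr b t) := by
  rw [mem_MvSet]
  rintro (hB | hB)
  · exact hB (bdry_compr hval h)
  · exact hB (bdry_compr hval (by omega))

/-- push an admissible permutation down to the compressed world -/
lemma exists_perm_down {σ : Equiv.Perm (Fin s)} (hσ : Adm b σ)
    (hkt : (MvSet b).card ≤ t) :
    ∃ σ' : Equiv.Perm (Fin t), ∀ r : Fin t,
      (σ' r : ℕ) = if h : (r : ℕ) < (MvSet b).card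
        then rankN b ((σ (unr b (r : ℕ) h) : ℕ)) else (r : ℕ) := by
  classical
  set k := (MvSet b).card with hk
  have fsig : ∀ r : Fin t, (h : (r : ℕ) < k) → ∀ (σ₀ : Equiv.Perm (Fin s)), Adm b σ₀ →
      rankN b ((σ₀ (unr b (r : ℕ) h) : ℕ)) < t :=
    fun r h σ₀ hσ₀ => lt_of_lt_of_le (rankN_lt_card (adm_mem hσ₀ (unr_mem b _ h))) hkt
  -- note : σ⁻¹ is not admissible in general, so build inverse differently
  set f : Fin t → Fin t := fun r =>
    if h : (r : ℕ) < k then ⟨rankN b ((σ (unr b (r : ℕ) h) : ℕ)),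
      lt_of_lt_of_le (rankN_lt_card (adm_mem hσ (unr_mem b _ h))) hkt⟩ else r with hfd
  set g : Fin t → Fin t := fun r =>
    if h : (r : ℕ) < k then ⟨rankN b ((σ⁻¹ (unr b (r : ℕ) h) : ℕ)),
      lt_of_lt_of_le (rankN_lt_card (adm_inv_mem hσ (unr_mem b _ h))) hkt⟩ else r with hgd
  have hfg : ∀ r, g (f r) = r := by
    intro r
    by_cases h : (r : ℕ) < k
    · have hmem : σ (unr b (r : ℕ) h) ∈ MvSet b := adm_mem hσ (unr_mem b _ h)
      have hlt : rankN b ((σ (unr b (r : ℕ) h) : ℕ)) < k := rankN_lt_card hmem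
      simp only [hfd, hgd, dif_pos h]
      rw [dif_pos (by simpa using hlt)]
      apply Fin.ext
      simp only [Fin.val_mk]
      rw [unr_rankN b hmem (by simpa using hlt)]
      rw [← Equiv.Perm.mul_apply, inv_mul_cancel, Equiv.Perm.one_apply]
      exact rankN_unr b _ h
    · simp only [hfd, hgd, dif_neg h]
  have hgf : ∀ r, f (g r) = r := by
    intro r
    by_cases h : (r : ℕ) < k
    · have hmem : σ⁻¹ (unr b (r : ℕ) h) ∈ MvSet b := adm_inv_mem hσ (unr_mem b _ h)
      have hlt : rankN b ((σ⁻¹ (unr b (r : ℕ) h) : ℕ)) < k := rankN_lt_card hmem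
      simp only [hfd, hgd, dif_pos h]
      rw [dif_pos (by simpa using hlt)]
      apply Fin.ext
      simp only [Fin.val_mk]
      rw [unr_rankN b hmem (by simpa using hlt)]
      rw [← Equiv.Perm.mul_apply, mul_inv_cancel, Equiv.Perm.one_apply]
      exact rankN_unr b _ h
    · simp only [hfd, hgd, dif_neg h]
  refine ⟨⟨f, g, hfg, hgf⟩, ?_⟩
  intro r
  by_cases h : (r : ℕ) < k
  · simp only [Equiv.coe_fn_mk, hfd, dif_pos h]
    rw [dif_pos (show (r : ℕ) < (MvSet b).card from h)]
  · simp only [Equiv.coe_fn_mk, hfd, dif_neg h]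
    rw [dif_neg (show ¬ (r : ℕ) < (MvSet b).card from h)]

lemma rankN_inj {x y : Fin s} (hx : x ∈ MvSet b) (hy : y ∈ MvSet b)
    (h : rankN b (x : ℕ) = rankN b (y : ℕ)) : x = y := by
  have h1 := unr_rankN b hx (rankN_lt_card hx)
  have h2 := unr_rankN b hy (rankN_lt_card hy)
  rw [← h1, ← h2]
  congr 1

/-- lift an admissible permutation of the compressed world back up -/
lemma exists_perm_up {τ' : Equiv.Perm (Fin t)} (hval : ∀ i : Fin s, b i + (i : ℕ) < s)
    (hτ' : Adm (compr b t) τ') (hkt : (MvSet b).card ≤ t) :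
    ∃ τ : Equiv.Perm (Fin s),
      (∀ i ∉ MvSet b, τ i = i) ∧
      (∀ i ∈ MvSet b, τ i ∈ MvSet b ∧
        ∀ (hr : rankN b (i : ℕ) < t),
          rankN b ((τ i : ℕ)) = ((τ' ⟨rankN b (i : ℕ), hr⟩ : Fin t) : ℕ)) := by
  classical
  set k := (MvSet b).card with hkdef
  have bnd : ∀ j : Fin t, (j : ℕ) < k → (τ' j : ℕ) < k := by
    intro j hj
    exact lt_of_le_of_lt (hτ' j) (compr_add_lt hval hj)
  have bndinv : ∀ j : Fin t, (j : ℕ) < k → (τ'⁻¹ j : ℕ) < k := by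
    intro j hj
    have hB : Bdry (compr b t) k := bdry_compr hval (le_refl _)
    have : (τ' (τ'⁻¹ j) : ℕ) < k := by rw [← Equiv.Perm.mul_apply, mul_inv_cancel, Equiv.Perm.one_apply]; exact hj
    exact lt_of_adm_lt hτ' hB this
  set f : Fin s → Fin s := fun i =>
    if h : i ∈ MvSet b then
      unr b ((τ' ⟨rankN b (i : ℕ), lt_of_lt_of_le (rankN_lt_card h) hkt⟩ : Fin t) : ℕ)
        (bnd _ (by simpa using rankN_lt_card h))
    else i with hfd
  set g : Fin s → Fin s := fun i =>
    if h : i ∈ MvSet b then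
      unr b ((τ'⁻¹ ⟨rankN b (i : ℕ), lt_of_lt_of_le (rankN_lt_card h) hkt⟩ : Fin t) : ℕ)
        (bndinv _ (by simpa using rankN_lt_card h))
    else i with hgd
  have hfprop : ∀ i (h : i ∈ MvSet b), f i ∈ MvSet b ∧
      ∀ (hr : rankN b (i : ℕ) < t), rankN b ((f i : ℕ)) = ((τ' ⟨rankN b (i : ℕ), hr⟩ : Fin t) : ℕ) := by
    intro i h
    have hu : f i = unr b ((τ' ⟨rankN b (i : ℕ), lt_of_lt_of_le (rankN_lt_card h) hkt⟩ : Fin t) : ℕ)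
        (bnd _ (by simpa using rankN_lt_card h)) := by rw [hfd]; exact dif_pos h
    refine ⟨by rw [hu]; exact unr_mem b _ _, ?_⟩
    intro hr
    rw [hu, rankN_unr]
  have hgprop : ∀ i (h : i ∈ MvSet b), g i ∈ MvSet b ∧
      ∀ (hr : rankN b (i : ℕ) < t), rankN b ((g i : ℕ)) = ((τ'⁻¹ ⟨rankN b (i : ℕ), hr⟩ : Fin t) : ℕ) := by
    intro i h
    have hu : g i = unr b ((τ'⁻¹ ⟨rankN b (i : ℕ), lt_of_lt_of_le (rankN_lt_card h) hkt⟩ : Fin t) : ℕ)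
        (bndinv _ (by simpa using rankN_lt_card h)) := by rw [hgd]; exact dif_pos h
    refine ⟨by rw [hu]; exact unr_mem b _ _, ?_⟩
    intro hr
    rw [hu, rankN_unr]
  have hfg : ∀ i, g (f i) = i := by
    intro i
    by_cases h : i ∈ MvSet b
    · obtain ⟨hfm, hfr⟩ := hfprop i h
      obtain ⟨hgm, hgr⟩ := hgprop (f i) hfm
      apply rankN_inj hgm h
      rw [hgr (lt_of_lt_of_le (rankN_lt_card hfm) hkt)]
      have hfin : (⟨rankN b ((f i : ℕ)), lt_of_lt_of_le (rankN_lt_card hfm) hkt⟩ : Fin t)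
          = τ' ⟨rankN b (i : ℕ), lt_of_lt_of_le (rankN_lt_card h) hkt⟩ :=
        Fin.ext (by simpa using hfr (lt_of_lt_of_le (rankN_lt_card h) hkt))
      rw [hfin, ← Equiv.Perm.mul_apply, inv_mul_cancel, Equiv.Perm.one_apply]
    · have h1 : f i = i := by rw [hfd]; exact dif_neg h
      rw [h1, hgd]
      exact dif_neg h
  have hgf : ∀ i, f (g i) = i := by
    intro i
    by_cases h : i ∈ MvSet b
    · obtain ⟨hgm, hgr⟩ := hgprop i h
      obtain ⟨hfm, hfr⟩ := hfprop (g i) hgm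
      apply rankN_inj hfm h
      rw [hfr (lt_of_lt_of_le (rankN_lt_card hgm) hkt)]
      have hfin : (⟨rankN b ((g i : ℕ)), lt_of_lt_of_le (rankN_lt_card hgm) hkt⟩ : Fin t)
          = τ'⁻¹ ⟨rankN b (i : ℕ), lt_of_lt_of_le (rankN_lt_card h) hkt⟩ :=
        Fin.ext (by simpa using hgr (lt_of_lt_of_le (rankN_lt_card h) hkt))
      rw [hfin, ← Equiv.Perm.mul_apply, mul_inv_cancel, Equiv.Perm.one_apply]
    · have h1 : g i = i := by rw [hgd]; exact dif_neg h
      rw [h1, hfd]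
      exact dif_neg h
  refine ⟨⟨f, g, hfg, hgf⟩, ?_, ?_⟩
  · intro i hi
    show f i = i
    rw [hfd]
    exact dif_neg hi
  · intro i hi
    exact hfprop i hi

end Compr

lemma sum_dite_unr {s : ℕ} (b : Fin s → ℕ) {t : ℕ} (hkt : (MvSet b).card ≤ t)
    (x : Fin s → ℕ) :
    ∑ r : Fin t, (if h : (r : ℕ) < (MvSet b).card then x (unr b (r : ℕ) h) else 0)
      = ∑ i ∈ MvSet b, x i := by
  classical
  rw [← Finset.sum_filter_add_sum_filter_not univ (fun r : Fin t => (r : ℕ) < (MvSet b).card)]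
  have h2 : ∑ r ∈ univ.filter (fun r : Fin t => ¬ ((r : ℕ) < (MvSet b).card)),
      (if h : (r : ℕ) < (MvSet b).card then x (unr b (r : ℕ) h) else 0) = 0 := by
    apply Finset.sum_eq_zero
    intro r hr
    rw [dif_neg (Finset.mem_filter.mp hr).2]
  rw [h2, add_zero]
  apply Finset.sum_bij (fun (r : Fin t) (hr : r ∈ univ.filter (fun r : Fin t => (r : ℕ) < (MvSet b).card)) =>
    unr b (r : ℕ) (Finset.mem_filter.mp hr).2)
  · intro r hr
    exact unr_mem b _ _
  · intro r1 h1 r2 h2 h12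
    have e1 := rankN_unr b (r1 : ℕ) (Finset.mem_filter.mp h1).2
    have e2 := rankN_unr b (r2 : ℕ) (Finset.mem_filter.mp h2).2
    apply Fin.ext
    rw [← e1, ← e2, h12]
  · intro i hi
    obtain ⟨r, hr, hru⟩ := unr_surj b hi
    refine ⟨⟨r, lt_of_lt_of_le hr hkt⟩, ?_, ?_⟩
    · simp only [Finset.mem_filter, Finset.mem_univ, true_and]
      exact hr
    · simpa using hru
  · intro r hr
    rw [dif_pos (Finset.mem_filter.mp hr).2]



lemma card_filter_val_lt' {s c : ℕ} (h : c ≤ s) :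
    (univ.filter fun w : Fin s => (w : ℕ) < c).card = c := by
  classical
  have key : (univ.filter fun w : Fin s => (w : ℕ) < c).card = (Finset.range c).card := by
    apply Finset.card_bij (fun (w : Fin s) _ => (w : ℕ))
    · intro a ha
      simp only [Finset.mem_filter] at ha
      exact Finset.mem_range.mpr ha.2
    · intro a ha b hb hab
      exact Fin.val_injective hab
    · intro v hv
      have hv' := Finset.mem_range.mp hv
      exact ⟨⟨v, by omega⟩, by simp [hv'], rfl⟩
  simpa using key

lemma invTable_add_lt (m : ℕ) (π : Equiv.Perm (Fin m)) (i : Fin m) :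
    invTable m π i + (i : ℕ) < m := by
  classical
  have h1 : invTable m π i ≤ (univ.filter fun j : Fin m => ¬ ((j : ℕ) < (i : ℕ) + 1)).card := by
    apply Finset.card_le_card
    intro j hj
    simp only [Finset.mem_filter, Finset.mem_univ, true_and] at hj ⊢
    have := hj.1
    rw [Fin.lt_def] at this
    omega
  have h2 := Finset.card_filter_add_card_filter_not
    (s := (univ : Finset (Fin m))) (p := fun j : Fin m => (j : ℕ) < (i : ℕ) + 1)
  have h3 : (univ.filter fun j : Fin m => (j : ℕ) < (i : ℕ) + 1).card = (i : ℕ) + 1 :=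
    card_filter_val_lt' (by have := i.isLt; omega)
  have h4 : (univ : Finset (Fin m)).card = m := by simp
  omega

lemma exists_perm_invTable : ∀ (s : ℕ) (c : Fin s → ℕ), (∀ i, c i + (i : ℕ) < s) →
    ∃ π : Equiv.Perm (Fin s), ∀ i, invTable s π i = c i := by
  intro s
  induction s with
  | zero => exact fun c h => ⟨1, fun i => i.elim0⟩
  | succ s ih =>
    intro c hc
    obtain ⟨τ, hτ⟩ := ih (fun i => c i.succ)
      (fun i => by show c i.succ + (i : ℕ) < s; have := hc i.succ; simp only [Fin.val_succ] at this; omega)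
    have hp0 : c 0 < s + 1 := by have := hc 0; simpa using this
    set p : Fin (s + 1) := ⟨c 0, hp0⟩ with hp
    set f : Fin (s + 1) → Fin (s + 1) :=
      fun x => Fin.cases p (fun w => p.succAbove (τ w)) x with hf
    have hf0 : f 0 = p := by simp [hf]
    have hfs : ∀ w : Fin s, f w.succ = p.succAbove (τ w) := by intro w; simp [hf]
    have hinj : Function.Injective f := by
      intro x y hxy
      induction x using Fin.cases with
      | zero =>
        induction y using Fin.cases with
        | zero => rfl
        | succ w =>
          rw [hf0, hfs] at hxy
          exact absurd hxy.symm (Fin.succAbove_ne p (τ w))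
      | succ w =>
        induction y using Fin.cases with
        | zero =>
          rw [hf0, hfs] at hxy
          exact absurd hxy (Fin.succAbove_ne p (τ w))
        | succ w' =>
          rw [hfs, hfs] at hxy
          have := τ.injective (Fin.succAbove_right_injective hxy)
          rw [this]
    have hsurj : Function.Surjective f := by
      intro y
      by_cases hy : y = p
      · exact ⟨0, by rw [hf0, hy]⟩
      · obtain ⟨z, hz⟩ := Fin.exists_succAbove_eq hy
        exact ⟨(τ.symm z).succ, by rw [hfs]; simp [hz]⟩
    refine ⟨Equiv.ofBijective f ⟨hinj, hsurj⟩, ?_⟩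
    have hπ : ∀ x, (Equiv.ofBijective f ⟨hinj, hsurj⟩) x = f x := fun x => rfl
    set π : Equiv.Perm (Fin (s+1)) := Equiv.ofBijective f ⟨hinj, hsurj⟩ with hπdef
    have hπ0 : π 0 = p := hf0
    have hπs : ∀ w : Fin s, π w.succ = p.succAbove (τ w) := hfs
    intro i
    induction i using Fin.cases with
    | zero =>
      rw [invTable]
      have key : (univ.filter fun w : Fin s => ((τ w : ℕ)) < c 0).card
          = (univ.filter fun j : Fin (s+1) => 0 < j ∧ π j < π 0).card := by
        apply Finset.card_bij (fun w _ => w.succ)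
        · intro w hw
          simp only [Finset.mem_filter, Finset.mem_univ, true_and] at hw ⊢
          refine ⟨Fin.succ_pos w, ?_⟩
          rw [hπ0, hπs, Fin.succAbove_lt_iff_castSucc_lt, Fin.lt_def, Fin.coe_castSucc]
          exact hw
        · intro a _ a' _ haa
          exact Fin.succ_injective _ haa
        · intro j hj
          simp only [Finset.mem_filter, Finset.mem_univ, true_and] at hj
          obtain ⟨hj0, hjlt⟩ := hj
          obtain ⟨w, rfl⟩ := Fin.eq_succ_of_ne_zero (Fin.pos_iff_ne_zero.mp hj0)
          refine ⟨w, ?_, rfl⟩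
          simp only [Finset.mem_filter, Finset.mem_univ, true_and]
          rw [hπ0, hπs, Fin.succAbove_lt_iff_castSucc_lt, Fin.lt_def, Fin.coe_castSucc] at hjlt
          exact hjlt
      rw [← key]
      have key2 : (univ.filter fun w : Fin s => ((τ w : ℕ)) < c 0).card
          = (univ.filter fun v : Fin s => (v : ℕ) < c 0).card := by
        apply Finset.card_bij (fun w _ => τ w)
        · intro w hw
          simpa using (Finset.mem_filter.mp hw).2
        · intro a _ a' _ haa
          exact τ.injective haa
        · intro v hv
          exact ⟨τ.symm v, by simpa using (Finset.mem_filter.mp hv).2, τ.apply_symm_apply v⟩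
      rw [key2, card_filter_val_lt' (by have := hc 0; simpa using Nat.lt_succ_iff.mp (by omega))]
    | succ z =>
      rw [invTable, ← hτ z, invTable]
      symm
      apply Finset.card_bij (fun w _ => w.succ)
      · intro w hw
        simp only [Finset.mem_filter, Finset.mem_univ, true_and] at hw ⊢
        obtain ⟨hzw, hwlt⟩ := hw
        refine ⟨Fin.succ_lt_succ_iff.mpr hzw, ?_⟩
        rw [hπs, hπs, Fin.succAbove_lt_succAbove_iff]
        exact hwlt
      · intro a _ a' _ haa
        exact Fin.succ_injective _ haa
      · intro j hj
        simp only [Finset.mem_filter, Finset.mem_univ, true_and] at hj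
        obtain ⟨hj0, hjlt⟩ := hj
        have hjne : j ≠ 0 := by
          intro h
          rw [h] at hj0
          exact Fin.not_lt_zero _ hj0
        obtain ⟨w, rfl⟩ := Fin.eq_succ_of_ne_zero hjne
        refine ⟨w, ?_, rfl⟩
        simp only [Finset.mem_filter, Finset.mem_univ, true_and]
        rw [hπs, hπs, Fin.succAbove_lt_succAbove_iff] at hjlt
        exact ⟨Fin.succ_lt_succ_iff.mp hj0, hjlt⟩


/-- If `m > 2n` and `π ∈ Sym(m)` has exactly `n` inversions, then the induced subgraph
`Γ(m,n,π)` of `SR(m,n)` on `X_π` is isomorphic to `Γ(2n,n,π')` for some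
`π' ∈ Sym(2n)` with exactly `n` inversions. -/
theorem SR_Gamma_reduction (m n : ℕ) (hmn : 2 * n < m) (π : Equiv.Perm (Fin m))
    (hπ : inversions m π = n) :
    ∃ π' : Equiv.Perm (Fin (2 * n)), inversions (2 * n) π' = n ∧
      Nonempty ((SR m n).induce (Xpi m n π) ≃g (SR (2 * n) n).induce (Xpi (2 * n) n π')) := by
  classical
  set b : Fin m → ℕ := invTable m π with hbdef
  have hval : ∀ i : Fin m, b i + (i : ℕ) < m := invTable_add_lt m π
  have hsum : ∑ i, b i = n := hπ
  have hk2n : (MvSet b).card ≤ 2 * n := by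
    have h := card_MvSet_le (b := b)
    omega
  set k := (MvSet b).card with hkdef
  set a' : Fin (2 * n) → ℕ := compr b (2 * n) with ha'def
  have hvalid' : ∀ r : Fin (2 * n), a' r + (r : ℕ) < 2 * n := compr_valid hval hk2n
  obtain ⟨π', hπ'⟩ := exists_perm_invTable (2 * n) a' hvalid'
  have ha'pos : ∀ (r : Fin (2 * n)) (h : (r : ℕ) < k), a' r = b (unr b (r : ℕ) h) := by
    intro r h
    rw [ha'def, compr, dif_pos h]
  have ha'zero : ∀ (r : Fin (2 * n)), ¬ ((r : ℕ) < k) → a' r = 0 := by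
    intro r h
    rw [ha'def, compr, dif_neg h]
  have hbz : ∀ i : Fin m, i ∉ MvSet b → b i = 0 := by
    intro i hi
    by_contra h
    exact hi ((mem_MvSet b).mpr (mov_of_pos (Nat.pos_of_ne_zero h)))
  have hsum_a' : ∑ r : Fin (2 * n), a' r = n := by
    have h1 : ∑ r : Fin (2 * n), a' r = ∑ i ∈ MvSet b, b i := by
      rw [ha'def]
      exact sum_dite_unr b hk2n b
    have h2 : ∑ i ∈ MvSet b, b i = ∑ i, b i :=
      Finset.sum_subset (Finset.subset_univ _) (fun i _ hi => hbz i hi)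
    rw [h1, h2, hsum]
  have hinv' : inversions (2 * n) π' = n := by
    rw [inversions]
    rw [Finset.sum_congr rfl (fun r (_ : r ∈ Finset.univ) => hπ' r)]
    exact hsum_a'
  refine ⟨π', hinv', ?_⟩
  -- vertex maps
  set F : (Fin m → ℕ) → (Fin (2 * n) → ℕ) :=
    fun x r => if h : (r : ℕ) < k then x (unr b (r : ℕ) h) else 0 with hFdef
  set B : (Fin (2 * n) → ℕ) → (Fin m → ℕ) :=
    fun y i => if h : i ∈ MvSet b then
      y ⟨rankN b (i : ℕ), lt_of_lt_of_le (rankN_lt_card h) hk2n⟩ else 0 with hBdef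
  -- vanishing lemmas
  have hXzero : ∀ x : SRVertex m n, x ∈ Xpi m n π → ∀ i ∉ MvSet b, x.1 i = 0 := by
    rintro x ⟨σ, hσ, hid⟩ i hi
    have hσA : Adm b σ := hσ
    have hfix : σ i = i := adm_fixed hσA hi
    have h1 := hid i
    have h2 : (σ i : ℕ) = (i : ℕ) := congrArg Fin.val hfix
    have h3 := hbz i hi
    rw [hbdef] at h3
    omega
  have hYzero : ∀ y : SRVertex (2 * n) n, y ∈ Xpi (2 * n) n π' →
      ∀ r : Fin (2 * n), ¬ ((r : ℕ) < k) → y.1 r = 0 := by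
    rintro y ⟨τ', hτ', hid⟩ r hr
    have hA : Adm a' τ' := fun j => by rw [← hπ' j]; exact hτ' j
    have hnm : r ∉ MvSet a' := by
      rw [ha'def, hkdef] at *
      exact compr_not_mov hval (by omega)
    have hfix : τ' r = r := adm_fixed hA hnm
    have h1 := hid r
    have h2 : (τ' r : ℕ) = (r : ℕ) := congrArg Fin.val hfix
    have h3 := ha'zero r hr
    rw [hπ' r] at h1
    omega
  -- sums
  have hFz : ∀ x : Fin m → ℕ, ∀ r : Fin (2 * n), ¬ ((r : ℕ) < k) → F x r = 0 := by
    intro x r h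
    rw [hFdef]
    exact dif_neg h
  have hFp : ∀ x : Fin m → ℕ, ∀ r : Fin (2 * n), (h : (r : ℕ) < k) →
      F x r = x (unr b (r : ℕ) h) := by
    intro x r h
    rw [hFdef]
    exact dif_pos h
  have hBp : ∀ y : Fin (2 * n) → ℕ, ∀ i : Fin m, (h : i ∈ MvSet b) →
      B y i = y ⟨rankN b (i : ℕ), lt_of_lt_of_le (rankN_lt_card h) hk2n⟩ := by
    intro y i h
    rw [hBdef]
    exact dif_pos h
  have hBz : ∀ y : Fin (2 * n) → ℕ, ∀ i : Fin m, i ∉ MvSet b → B y i = 0 := by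
    intro y i h
    rw [hBdef]
    exact dif_neg h
  have hsumF : ∀ x : SRVertex m n, x ∈ Xpi m n π → ∑ r, F x.1 r = n := by
    intro x hx
    have h1 : ∑ r : Fin (2 * n), F x.1 r
        = ∑ r : Fin (2 * n), (if h : (r : ℕ) < k then x.1 (unr b (r : ℕ) h) else 0) :=
      Finset.sum_congr rfl (fun r _ => by rw [hFdef])
    rw [h1, sum_dite_unr b hk2n x.1,
      Finset.sum_subset (Finset.subset_univ _) (fun i _ hi => hXzero x hx i hi)]
    exact x.2
  have hsumB : ∀ y : SRVertex (2 * n) n, y ∈ Xpi (2 * n) n π' → ∑ i, B y.1 i = n := by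
    intro y hy
    have h3 : ∑ i ∈ MvSet b, B y.1 i = ∑ i : Fin m, B y.1 i :=
      Finset.sum_subset (Finset.subset_univ _) (fun i _ hi => hBz y.1 i hi)
    have h1 : ∑ r : Fin (2 * n), (if h : (r : ℕ) < k then (B y.1) (unr b (r : ℕ) h) else 0)
        = ∑ i ∈ MvSet b, B y.1 i := sum_dite_unr b hk2n (B y.1)
    have h4 : ∑ r : Fin (2 * n), (if h : (r : ℕ) < k then (B y.1) (unr b (r : ℕ) h) else 0)
        = ∑ r : Fin (2 * n), y.1 r := by
      apply Finset.sum_congr rfl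
      intro r _
      by_cases h : (r : ℕ) < k
      · rw [dif_pos h, hBp y.1 _ (unr_mem b _ h)]
        apply congrArg
        apply Fin.ext
        simp [rankN_unr]
      · rw [dif_neg h, hYzero y hy r h]
    rw [← h3, ← h1, h4]
    exact y.2
  -- membership transfer, forward
  have hFmem : ∀ x : SRVertex m n, (hx : x ∈ Xpi m n π) →
      (⟨F x.1, hsumF x hx⟩ : SRVertex (2 * n) n) ∈ Xpi (2 * n) n π' := by
    intro x hx
    obtain ⟨σ, hσ, hid⟩ := hx
    have hσA : Adm b σ := hσ
    obtain ⟨σ', hσ'⟩ := exists_perm_down hσA hk2n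
    refine ⟨σ', ?_, ?_⟩
    · intro r
      rw [hπ' r]
      have hc := hσ' r
      by_cases h : (r : ℕ) < k
      · rw [dif_pos h] at hc
        have h1 := adm_rankN hσA (unr b (r : ℕ) h)
        have h2 : rankN b ((unr b (r : ℕ) h : Fin m) : ℕ) = (r : ℕ) := rankN_unr b _ h
        have h3 := hσA (unr b (r : ℕ) h)
        have h4 := ha'pos r h
        omega
      · rw [dif_neg h] at hc
        have h4 := ha'zero r h
        omega
    · intro r
      rw [hπ' r]
      show F x.1 r + ((σ' r : ℕ)) = a' r + (r : ℕ)
      have hc := hσ' r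
      by_cases h : (r : ℕ) < k
      · rw [dif_pos h] at hc
        rw [hFp x.1 r h]
        have h1 := adm_rankN hσA (unr b (r : ℕ) h)
        have h2 : rankN b ((unr b (r : ℕ) h : Fin m) : ℕ) = (r : ℕ) := rankN_unr b _ h
        have h3 := hid (unr b (r : ℕ) h)
        rw [← hbdef] at h3
        have h4 := ha'pos r h
        omega
      · rw [dif_neg h] at hc
        rw [hFz x.1 r h]
        have h4 := ha'zero r h
        omega
  -- membership transfer, backward
  have hBmem : ∀ y : SRVertex (2 * n) n, (hy : y ∈ Xpi (2 * n) n π') →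
      (⟨B y.1, hsumB y hy⟩ : SRVertex m n) ∈ Xpi m n π := by
    intro y hy
    obtain ⟨τ', hτ', hid⟩ := hy
    have hτ'A : Adm a' τ' := fun j => by rw [← hπ' j]; exact hτ' j
    obtain ⟨τ, hτfix, hτmov⟩ := exists_perm_up (b := b) (t := 2 * n) hval hτ'A hk2n
    have bnd : ∀ j : Fin (2 * n), (j : ℕ) < k → (τ' j : ℕ) < k := by
      intro j hj
      exact lt_of_le_of_lt (hτ'A j) (compr_add_lt hval hj)
    -- admissibility of the lift
    have hτA : Adm b τ := by
      intro i
      by_cases h : i ∈ MvSet b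
      · obtain ⟨hm, hr⟩ := hτmov i h
        set r : ℕ := rankN b (i : ℕ) with hrdef
        have hrk : r < k := rankN_lt_card h
        have hrt : r < 2 * n := lt_of_lt_of_le hrk hk2n
        set c : ℕ := ((τ' ⟨r, hrt⟩ : Fin (2 * n)) : ℕ) with hcdef
        have hck : c < k := bnd _ (by simpa using hrk)
        have hτi : rankN b ((τ i : ℕ)) = c := hr hrt
        have hcle : c ≤ b i + r := by
          have := hτ'A ⟨r, hrt⟩
          have h4 := ha'pos ⟨r, hrt⟩ (by simpa using hrk)
          have h5 : unr b ((⟨r, hrt⟩ : Fin (2 * n)) : ℕ) (by simpa using hrk) = i := by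
            have := unr_rankN b h (by simpa using hrk)
            simpa using this
          rw [h4, h5] at this
          simpa using this
        rcases le_or_gt c r with hcr | hcr
        · -- τ i ≤ i
          have h1 : τ i = unr b c hck := by
            have := unr_rankN b hm (by rw [hτi]; exact hck)
            rw [← this]
            congr 1
          have h2 : (unr b c hck : ℕ) ≤ (unr b r hrk : ℕ) := unr_le_unr b hck hrk hcr
          have h3 : unr b r hrk = i := unr_rankN b h hrk
          rw [h1]
          have h6 : (unr b r hrk : ℕ) = (i : ℕ) := congrArg Fin.val h3
          omega
        · -- τ i = i + (c - r)
          set d : ℕ := c - r with hddef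
          have hd1 : 1 ≤ d := by omega
          have hd2 : d ≤ b i := by omega
          have hmemd : (⟨(i : ℕ) + d, by have := hval i; omega⟩ : Fin m) ∈ MvSet b :=
            interval_mem hval hd1 hd2
          have hradd : rankN b ((i : ℕ) + d) = rankN b (i : ℕ) + d := by
            apply rankN_add (by have := hval i; omega)
            intro p hp hp1 hp2
            rcases Nat.eq_or_lt_of_le hp1 with h' | h'
            · have : (⟨p, hp⟩ : Fin m) = i := Fin.ext (by simp only [Fin.val_mk]; omega)
              rw [this]
              exact h
            · have : (⟨p, hp⟩ : Fin m) = ⟨(i : ℕ) + (p - (i : ℕ)), by omega⟩ :=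
                Fin.ext (by simp only [Fin.val_mk]; omega)
              rw [this]
              exact interval_mem hval (by omega) (by omega)
          have h1 : τ i = (⟨(i : ℕ) + d, by have := hval i; omega⟩ : Fin m) := by
            apply rankN_inj hm hmemd
            rw [hτi]
            simp only [Fin.val_mk]
            omega
          rw [h1]
          simp only [Fin.val_mk]
          omega
      · rw [hτfix i h]
        omega
    refine ⟨τ, hτA, ?_⟩
    intro i
    show B y.1 i + ((τ i : ℕ)) = b i + (i : ℕ)
    by_cases h : i ∈ MvSet b
    · obtain ⟨hm, hr⟩ := hτmov i h
      set r : ℕ := rankN b (i : ℕ) with hrdef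
      have hrk : r < k := rankN_lt_card h
      have hrt : r < 2 * n := lt_of_lt_of_le hrk hk2n
      have hτi : rankN b ((τ i : ℕ)) = ((τ' ⟨r, hrt⟩ : Fin (2 * n)) : ℕ) := hr hrt
      have h1 := adm_rankN hτA i
      have h2 := hid ⟨r, hrt⟩
      rw [hπ' ⟨r, hrt⟩] at h2
      have h4 := ha'pos ⟨r, hrt⟩ (by simpa using hrk)
      have h5 : unr b ((⟨r, hrt⟩ : Fin (2 * n)) : ℕ) (by simpa using hrk) = i := by
        have := unr_rankN b h (by simpa using hrk)
        simpa using this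
      rw [h4, h5] at h2
      rw [hBp y.1 i h]
      have h6 : y.1 (⟨rankN b (i : ℕ), lt_of_lt_of_le (rankN_lt_card h) hk2n⟩ : Fin (2 * n))
          = y.1 ⟨r, hrt⟩ := by congr 1
      rw [h6]
      simp only [Fin.val_mk] at h2
      omega
    · rw [hBz y.1 i h, hτfix i h]
      have h3 := hbz i h
      omega
  -- inverse on vertex functions
  have hBF : ∀ x : SRVertex m n, x ∈ Xpi m n π → B (F x.1) = x.1 := by
    intro x hx
    funext i
    by_cases h : i ∈ MvSet b
    · rw [hBp _ i h, hFp x.1 _ (by simpa using rankN_lt_card h)]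
      apply congrArg
      exact unr_rankN b h (by simpa using rankN_lt_card h)
    · rw [hBz _ i h, hXzero x hx i h]
  have hFB : ∀ y : SRVertex (2 * n) n, y ∈ Xpi (2 * n) n π' → F (B y.1) = y.1 := by
    intro y hy
    funext r
    by_cases h : (r : ℕ) < k
    · rw [hFp _ r h, hBp y.1 _ (unr_mem b _ h)]
      apply congrArg
      apply Fin.ext
      simp [rankN_unr]
    · rw [hFz _ r h, hYzero y hy r h]
  -- cardinality of the difference set is preserved
  have hcard : ∀ x : SRVertex m n, x ∈ Xpi m n π → ∀ x₂ : SRVertex m n, x₂ ∈ Xpi m n π →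
      (Finset.univ.filter fun r : Fin (2 * n) => F x.1 r ≠ F x₂.1 r).card
        = (Finset.univ.filter fun i : Fin m => x.1 i ≠ x₂.1 i).card := by
    intro x hx x₂ hx₂
    have hlt : ∀ r : Fin (2 * n), r ∈ (Finset.univ.filter fun r : Fin (2 * n) => F x.1 r ≠ F x₂.1 r) →
        (r : ℕ) < k := by
      intro r hr
      by_contra h
      have := (Finset.mem_filter.mp hr).2
      rw [hFz x.1 r h, hFz x₂.1 r h] at this
      exact this rfl
    apply Finset.card_bij (fun (r : Fin (2 * n))
      (hr : r ∈ Finset.univ.filter fun r : Fin (2 * n) => F x.1 r ≠ F x₂.1 r) =>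
        unr b (r : ℕ) (hlt r hr))
    · intro r hr
      have h := hlt r hr
      have := (Finset.mem_filter.mp hr).2
      rw [hFp x.1 r h, hFp x₂.1 r h] at this
      simp only [Finset.mem_filter, Finset.mem_univ, true_and]
      exact this
    · intro r1 h1 r2 h2 h12
      have e1 := rankN_unr b (r1 : ℕ) (hlt r1 h1)
      have e2 := rankN_unr b (r2 : ℕ) (hlt r2 h2)
      apply Fin.ext
      rw [← e1, ← e2, h12]
    · intro i hi
      have hne := (Finset.mem_filter.mp hi).2
      have hiM : i ∈ MvSet b := by
        by_contra h
        rw [hXzero x hx i h, hXzero x₂ hx₂ i h] at hne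
        exact hne rfl
      have hrk : rankN b (i : ℕ) < k := rankN_lt_card hiM
      refine ⟨⟨rankN b (i : ℕ), lt_of_lt_of_le hrk hk2n⟩, ?_, ?_⟩
      · simp only [Finset.mem_filter, Finset.mem_univ, true_and]
        rw [hFp x.1 _ (by simpa using hrk), hFp x₂.1 _ (by simpa using hrk)]
        have hu : unr b ((⟨rankN b (i : ℕ), lt_of_lt_of_le hrk hk2n⟩ : Fin (2 * n)) : ℕ)
            (by simpa using hrk) = i := by
          have := unr_rankN b hiM (by simpa using hrk)
          simpa using this
        rw [hu]
        exact hne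
      · have := unr_rankN b hiM (by simpa using hrk)
        simpa using this
  -- build the isomorphism
  refine ⟨⟨⟨fun x => ⟨⟨F x.1.1, hsumF x.1 x.2⟩, hFmem x.1 x.2⟩,
    fun y => ⟨⟨B y.1.1, hsumB y.1 y.2⟩, hBmem y.1 y.2⟩, ?_, ?_⟩, ?_⟩⟩
  · intro x
    exact Subtype.ext (Subtype.ext (hBF x.1 x.2))
  · intro y
    exact Subtype.ext (Subtype.ext (hFB y.1 y.2))
  · intro u v
    show ((Finset.univ.filter fun r : Fin (2 * n) => F u.1.1 r ≠ F v.1.1 r).card = 2)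
      ↔ ((Finset.univ.filter fun i : Fin m => u.1.1 i ≠ v.1.1 i).card = 2)
    rw [hcard u.1 u.2 v.1 v.2]
end
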